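/- arXiv:2110.01327 — 13 statements merged into one kernel-verified Lean document; each statement's English description precedes it below -/
import Mathlib

section
/- Let f(X) = a_0 + a_1 X + ... + a_n X^n be a polynomial with real coefficients of degree n ≥ 1 all of whose coefficients are non-negative. Then for every complex number z in the open sector S_{0, π/(2n)}, the real part of f(z) is strictly positive. In particular, f has no zero in S_{0, π/(2n)}. -/
/-- The open sector with vertex `v` on the real axis and half-angle `θ`:
complex numbers `z ≠ v` with `|arg (z - v)| < θ`. -/
def sector (v θ : ℝ) : Set ℂ :=
  {z : ℂ | z ≠ (v : ℂ) ∧ |Complex.arg (z - (v : ℂ))| < θ}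

/-- The open upper half-sector: `z = v + ρ e^{iφ}` with `ρ > 0`, `0 < φ < θ`. -/
def sectorPlus (v θ : ℝ) : Set ℂ :=
  {z : ℂ | 0 < Complex.arg (z - (v : ℂ)) ∧ Complex.arg (z - (v : ℂ)) < θ}

/-- The open lower half-sector: `z = v + ρ e^{iφ}` with `ρ > 0`, `-θ < φ < 0`. -/
def sectorMinus (v θ : ℝ) : Set ℂ :=
  {z : ℂ | -θ < Complex.arg (z - (v : ℂ)) ∧ Complex.arg (z - (v : ℂ)) < 0}
lemma re_pow_eq (z : ℂ) (k : ℕ) :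
    (z ^ k).re = ‖z‖ ^ k * Real.cos (k * Complex.arg z) := by
  conv_lhs => rw [← Complex.norm_mul_exp_arg_mul_I z]
  rw [mul_pow, ← Complex.exp_nat_mul, ← Complex.ofReal_pow]
  rw [show (k : ℂ) * (Complex.arg z * Complex.I) = ((k * Complex.arg z : ℝ)) * Complex.I by
    push_cast; ring]
  rw [Complex.re_ofReal_mul, Complex.exp_ofReal_mul_I_re]

theorem stmt_0 (n : ℕ) (hn : 1 ≤ n) (f : Polynomial ℝ)
    (hdeg : f.natDegree = n) (hcoeff : ∀ i, 0 ≤ f.coeff i) :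
    ∀ z ∈ sector 0 (Real.pi / (2 * n)),
      0 < (Polynomial.aeval z f).re ∧ Polynomial.aeval z f ≠ 0 := by
  intro z hz
  obtain ⟨hz0, harg⟩ := hz
  simp only [Complex.ofReal_zero, sub_zero] at harg
  replace hz0 : z ≠ 0 := by simpa using hz0
  have hnpos : (0:ℝ) < n := by exact_mod_cast hn
  have habs : 0 < ‖z‖ := by simpa using hz0
  -- cosine positivity for k ≤ n
  have hcos : ∀ k : ℕ, k ≤ n → 0 < Real.cos (k * Complex.arg z) := by
    intro k hk
    apply Real.cos_pos_of_mem_Ioo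
    constructor
    · have : |(k : ℝ) * Complex.arg z| < Real.pi / 2 := by
        rw [abs_mul, abs_of_nonneg (by positivity : (0:ℝ) ≤ (k:ℝ))]
        calc (k : ℝ) * |Complex.arg z| ≤ n * |Complex.arg z| := by
              apply mul_le_mul_of_nonneg_right (by exact_mod_cast hk) (abs_nonneg _)
          _ < n * (Real.pi / (2 * n)) := by
              apply mul_lt_mul_of_pos_left harg hnpos
          _ = Real.pi / 2 := by field_simp
      linarith [(abs_lt.mp this).1]
    · have : |(k : ℝ) * Complex.arg z| < Real.pi / 2 := by
        rw [abs_mul, abs_of_nonneg (by positivity : (0:ℝ) ≤ (k:ℝ))]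
        calc (k : ℝ) * |Complex.arg z| ≤ n * |Complex.arg z| := by
              apply mul_le_mul_of_nonneg_right (by exact_mod_cast hk) (abs_nonneg _)
          _ < n * (Real.pi / (2 * n)) := by
              apply mul_lt_mul_of_pos_left harg hnpos
          _ = Real.pi / 2 := by field_simp
      exact (abs_lt.mp this).2
  have hf0 : f ≠ 0 := by
    intro h
    rw [h] at hdeg
    simp at hdeg
    omega
  have hlead : 0 < f.coeff n := by
    rcases lt_or_eq_of_le (hcoeff n) with h | h
    · exact h
    · exfalso
      apply Polynomial.leadingCoeff_ne_zero.mpr hf0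
      rw [Polynomial.leadingCoeff, hdeg, ← h]
  have hre : 0 < (Polynomial.aeval z f).re := by
    rw [Polynomial.aeval_eq_sum_range, hdeg, Complex.re_sum]
    apply Finset.sum_pos' ?_ ⟨n, Finset.self_mem_range_succ n, ?_⟩
    · intro i hi
      rw [Complex.real_smul, Complex.re_ofReal_mul, re_pow_eq]
      have := hcos i (Nat.lt_succ_iff.mp (Finset.mem_range.mp hi))
      have := hcoeff i
      positivity
    · rw [Complex.real_smul, Complex.re_ofReal_mul, re_pow_eq]
      have := hcos n le_rfl
      have := hlead
      positivity
  refine ⟨hre, fun h => ?_⟩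
  rw [h] at hre
  simp at hre
end

section
/- Let f(X) = a_0 + a_1 X + ... + a_n X^n be a polynomial with real coefficients of degree n ≥ 1 all of whose coefficients are non-negative. Then the imaginary part of f(z) is strictly positive for all z in the half-sector S⁺_{0, π/n}, and strictly negative for all z in the half-sector S⁻_{0, π/n}. In particular, f has no zero in the sector S_{0, π/n}. -/
lemma pow_im_eq (z : ℂ) (i : ℕ) :
    (z ^ i).im = ‖z‖ ^ i * Real.sin (i * z.arg) := by
  conv_lhs => rw [← Complex.norm_mul_exp_arg_mul_I z]
  rw [mul_pow, ← Complex.exp_nat_mul]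
  simp [Complex.exp_im, Complex.mul_im, ← Complex.ofReal_pow]

lemma aeval_im_eq (z : ℂ) (f : Polynomial ℝ) :
    (Polynomial.aeval z f).im
      = ∑ i ∈ Finset.range (f.natDegree + 1),
          f.coeff i * (‖z‖ ^ i * Real.sin (i * z.arg)) := by
  rw [Polynomial.aeval_eq_sum_range, Complex.im_sum]
  simp [Complex.smul_im, pow_im_eq]

lemma im_pos_aux (n : ℕ) (hn : 1 ≤ n) (f : Polynomial ℝ)
    (hdeg : f.natDegree = n) (hcoeff : ∀ i, 0 ≤ f.coeff i)
    (z : ℂ) (h1 : 0 < z.arg) (h2 : z.arg < Real.pi / n) :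
    0 < (Polynomial.aeval z f).im := by
  have hz : z ≠ 0 := by
    intro h; rw [h] at h1; simp [Complex.arg_zero] at h1
  have hr : 0 < ‖z‖ := norm_pos_iff.mpr hz
  have hnpos : (0:ℝ) < n := by exact_mod_cast hn
  have hnφ : (n : ℝ) * z.arg < Real.pi := by
    rw [lt_div_iff₀ hnpos] at h2; linarith [h2]
  have hf0 : f ≠ 0 := by
    intro h; rw [h] at hdeg; simp at hdeg; omega
  have han : 0 < f.coeff n := by
    refine lt_of_le_of_ne (hcoeff n) (Ne.symm ?_)
    rw [← hdeg]; exact Polynomial.leadingCoeff_ne_zero.mpr hf0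
  rw [aeval_im_eq, hdeg]
  apply Finset.sum_pos'
  · intro i hi
    simp only [Finset.mem_range] at hi
    have hi' : (i : ℝ) ≤ n := by exact_mod_cast Nat.lt_succ_iff.mp hi
    have h0 : 0 ≤ (i : ℝ) * z.arg := by positivity
    have hπ : (i : ℝ) * z.arg ≤ Real.pi := by
      calc (i : ℝ) * z.arg ≤ n * z.arg := by
            exact mul_le_mul_of_nonneg_right hi' h1.le
        _ ≤ Real.pi := hnφ.le
    have hs := Real.sin_nonneg_of_nonneg_of_le_pi h0 hπ
    exact mul_nonneg (hcoeff i) (mul_nonneg (pow_nonneg (norm_nonneg z) i) hs)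
  · refine ⟨n, Finset.self_mem_range_succ n, ?_⟩
    have hs : 0 < Real.sin (n * z.arg) := by
      exact Real.sin_pos_of_pos_of_lt_pi (mul_pos hnpos h1) hnφ
    exact mul_pos han (mul_pos (pow_pos hr n) hs)

theorem stmt_1 (n : ℕ) (hn : 1 ≤ n) (f : Polynomial ℝ)
    (hdeg : f.natDegree = n) (hcoeff : ∀ i, 0 ≤ f.coeff i) :
    (∀ z ∈ sectorPlus 0 (Real.pi / n), 0 < (Polynomial.aeval z f).im) ∧
    (∀ z ∈ sectorMinus 0 (Real.pi / n), (Polynomial.aeval z f).im < 0) ∧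
    (∀ z ∈ sector 0 (Real.pi / n), Polynomial.aeval z f ≠ 0) := by
  have hplus : ∀ z ∈ sectorPlus 0 (Real.pi / n), 0 < (Polynomial.aeval z f).im := by
    intro z hz
    obtain ⟨h1, h2⟩ := hz
    simp only [Complex.ofReal_zero, sub_zero] at h1 h2
    exact im_pos_aux n hn f hdeg hcoeff z h1 h2
  have hconj : ∀ z : ℂ, (Polynomial.aeval ((starRingEnd ℂ) z) f)
      = (starRingEnd ℂ) (Polynomial.aeval z f) := by
    intro z
    have := Polynomial.aeval_algHom_apply (Complex.conjAe.toAlgHom) z f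
    simpa [Complex.conjAe_coe] using this
  have hminus : ∀ z ∈ sectorMinus 0 (Real.pi / n), (Polynomial.aeval z f).im < 0 := by
    intro z hz
    obtain ⟨h1, h2⟩ := hz
    simp only [Complex.ofReal_zero, sub_zero] at h1 h2
    have hargc : ((starRingEnd ℂ) z).arg = -z.arg := by
      rw [Complex.arg_conj]
      have hπ : z.arg ≠ Real.pi := by
        intro h; rw [h] at h2; linarith [Real.pi_pos]
      simp [hπ]
    have := im_pos_aux n hn f hdeg hcoeff ((starRingEnd ℂ) z)
      (by rw [hargc]; linarith) (by rw [hargc]; linarith)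
    rw [hconj] at this
    simpa using this
  refine ⟨hplus, hminus, ?_⟩
  intro z hz hzero
  obtain ⟨hz0, harg⟩ := hz
  simp only [Complex.ofReal_zero, sub_zero] at hz0 harg
  rcases lt_trichotomy z.arg 0 with h | h | h
  · have := hminus z ⟨by simpa using (abs_lt.mp harg).1, by simpa using h⟩
    rw [hzero] at this; simp at this
  · -- z is a positive real
    have hzre : 0 < z.re := by
      rcases (Complex.arg_eq_zero_iff.mp h) with ⟨hre, him⟩
      rcases lt_or_eq_of_le hre with h' | h'
      · exact h'
      · exfalso; apply hz0; apply Complex.ext <;> simp [← h', him]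
    have him0 : z.im = 0 := (Complex.arg_eq_zero_iff.mp h).2
    have hzeq : z = (z.re : ℂ) := by
      apply Complex.ext <;> simp [him0]
    rw [hzeq] at hzero
    rw [show ((z.re : ℂ)) = (RCLike.ofReal z.re : ℂ) from rfl,
      Polynomial.aeval_ofReal] at hzero
    have heval : (0:ℝ) < Polynomial.aeval z.re f := by
      have hf0 : f ≠ 0 := by
        intro hh; rw [hh] at hdeg; simp at hdeg; omega
      have han : 0 < f.coeff n := by
        refine lt_of_le_of_ne (hcoeff n) (Ne.symm ?_)
        rw [← hdeg]; exact Polynomial.leadingCoeff_ne_zero.mpr hf0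
      rw [Polynomial.aeval_eq_sum_range, hdeg]
      apply Finset.sum_pos'
      · intro i _
        have := hcoeff i
        have : (0:ℝ) ≤ z.re ^ i := by positivity
        simp only [smul_eq_mul]
        positivity
      · refine ⟨n, Finset.self_mem_range_succ n, ?_⟩
        simp only [smul_eq_mul]
        positivity
    have h0 : Polynomial.eval z.re f = 0 := by simpa using hzero
    rw [show (Polynomial.aeval z.re f) = Polynomial.eval z.re f from by
      rw [← Polynomial.coe_aeval_eq_eval]] at heval
    linarith
  · have := hplus z ⟨by simpa using h, by simpa using (abs_lt.mp harg).2⟩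
    rw [hzero] at this; simp at this
end

section
/- Let f(X) = a_0 + a_1 X + ... + a_n X^n be a polynomial with real coefficients of degree n ≥ 1, and let α be a positive real number such that for every j with 0 ≤ j ≤ n the sum α^j·a_n + α^{j−1}·a_{n−1} + ... + α·a_{n−j+1} + a_{n−j} is non-negative. Then the polynomial f(X + α) has non-negative coefficients, and consequently f has no zeros in the sector S_{α, π/n}. -/
section AuxStmt2
open Polynomial Finset

lemma aux_key (α : ℝ) (b : ℕ → ℝ) (Y : Polynomial ℝ) (n : ℕ) :
    ∑ j ∈ Finset.range (n+1), Polynomial.C (b j) * Y^(n-j)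
      = (Y - Polynomial.C α) * ∑ j ∈ Finset.range n,
          Polynomial.C (∑ i ∈ Finset.range (j+1), α^(j-i) * b i) * Y^(n-1-j)
        + Polynomial.C (∑ i ∈ Finset.range (n+1), α^(n-i) * b i) := by
  induction n with
  | zero => simp
  | succ n ih =>
    have hL : ∑ j ∈ Finset.range (n+2), Polynomial.C (b j) * Y^(n+1-j)
        = Y * (∑ j ∈ Finset.range (n+1), Polynomial.C (b j) * Y^(n-j))
          + Polynomial.C (b (n+1)) := by
      rw [Finset.sum_range_succ, Finset.mul_sum]
      congr 1
      · apply Finset.sum_congr rfl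
        intro j hj
        rw [Finset.mem_range] at hj
        have : n + 1 - j = (n - j) + 1 := by omega
        rw [this, pow_succ]
        ring
      · simp
    have hR : ∑ j ∈ Finset.range (n+1),
          Polynomial.C (∑ i ∈ Finset.range (j+1), α^(j-i) * b i) * Y^(n+1-1-j)
        = Y * (∑ j ∈ Finset.range n,
            Polynomial.C (∑ i ∈ Finset.range (j+1), α^(j-i) * b i) * Y^(n-1-j))
          + Polynomial.C (∑ i ∈ Finset.range (n+1), α^(n-i) * b i) := by
      rw [Finset.sum_range_succ, Finset.mul_sum]
      congr 1
      · apply Finset.sum_congr rfl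
        intro j hj
        rw [Finset.mem_range] at hj
        have : n + 1 - 1 - j = (n - 1 - j) + 1 := by omega
        rw [this, pow_succ]
        ring
      · simp
    have hs : (∑ i ∈ Finset.range (n+2), α^(n+1-i) * b i)
        = α * (∑ i ∈ Finset.range (n+1), α^(n-i) * b i) + b (n+1) := by
      rw [Finset.sum_range_succ, Finset.mul_sum]
      congr 1
      · apply Finset.sum_congr rfl
        intro i hi
        rw [Finset.mem_range] at hi
        have : n + 1 - i = (n - i) + 1 := by omega
        rw [this, pow_succ]
        ring
      · simp
    rw [hL, ih, hR, hs]
    push_cast [map_add, map_mul]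
    ring

lemma aux_mul_nonneg {p q : Polynomial ℝ} (hp : ∀ i, 0 ≤ p.coeff i)
    (hq : ∀ i, 0 ≤ q.coeff i) : ∀ i, 0 ≤ (p * q).coeff i := by
  intro i
  rw [Polynomial.coeff_mul]
  exact Finset.sum_nonneg fun x _ => mul_nonneg (hp _) (hq _)

lemma aux_pow_nonneg {p : Polynomial ℝ} (hp : ∀ i, 0 ≤ p.coeff i) (k : ℕ) :
    ∀ i, 0 ≤ (p ^ k).coeff i := by
  induction k with
  | zero =>
    intro i
    rw [pow_zero, Polynomial.coeff_one]
    split_ifs <;> norm_num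
  | succ k ih =>
    rw [pow_succ]
    exact aux_mul_nonneg ih hp

end AuxStmt2


theorem stmt_2 (n : ℕ) (hn : 1 ≤ n) (f : Polynomial ℝ) (hdeg : f.natDegree = n)
    (α : ℝ) (hα : 0 < α)
    (hsum : ∀ j ≤ n, 0 ≤ ∑ i ∈ Finset.range (j + 1), α ^ (j - i) * f.coeff (n - i)) :
    (∀ i, 0 ≤ (f.comp (Polynomial.X + Polynomial.C α)).coeff i) ∧
    (∀ z ∈ sector α (Real.pi / n), Polynomial.aeval z f ≠ 0) := by
  have hc : ∀ i, 0 ≤ (f.comp (Polynomial.X + Polynomial.C α)).coeff i := by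
    set Y : Polynomial ℝ := Polynomial.X + Polynomial.C α with hY
    have hf : f = ∑ k ∈ Finset.range (n+1), Polynomial.C (f.coeff k) * Polynomial.X ^ k := by
      conv_lhs => rw [f.as_sum_range' (n+1) (by omega)]
      simp [Polynomial.C_mul_X_pow_eq_monomial]
    have hg : f.comp Y = ∑ j ∈ Finset.range (n+1), Polynomial.C (f.coeff (n - j)) * Y ^ (n - j) := by
      conv_lhs => rw [hf]
      simp only [Polynomial.sum_comp, Polynomial.mul_comp, Polynomial.C_comp, Polynomial.pow_comp,
        Polynomial.X_comp]
      rw [← Finset.sum_range_reflect (fun j => Polynomial.C (f.coeff j) * Y ^ j) (n+1)]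
      apply Finset.sum_congr rfl
      intro j hj
      rw [Finset.mem_range] at hj
      congr 2 <;> omega
    have hYc : ∀ i, 0 ≤ Y.coeff i := by
      intro i
      rw [hY, Polynomial.coeff_add, Polynomial.coeff_X, Polynomial.coeff_C]
      split_ifs <;> linarith
    have hkey := aux_key α (fun j => f.coeff (n - j)) Y n
    have hYsub : Y - Polynomial.C α = Polynomial.X := by rw [hY]; ring
    rw [hg, hkey, hYsub]
    intro i
    rw [Polynomial.coeff_add]
    refine add_nonneg ?_ ?_
    · refine aux_mul_nonneg (fun i => ?_) (fun i => ?_) i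
      · rw [Polynomial.coeff_X]; split_ifs <;> norm_num
      · rw [Polynomial.finset_sum_coeff]
        refine Finset.sum_nonneg fun j hj => ?_
        rw [Finset.mem_range] at hj
        rw [Polynomial.coeff_C_mul]
        exact mul_nonneg (hsum j (by omega)) (aux_pow_nonneg hYc _ _)
    · rw [Polynomial.coeff_C]
      split_ifs with h
      · exact hsum n le_rfl
      · exact le_refl 0
  refine ⟨hc, ?_⟩
  intro z hz
  simp only [sector, Set.mem_setOf_eq] at hz
  obtain ⟨hz1, hz2⟩ := hz
  set g := f.comp (Polynomial.X + Polynomial.C α) with hgdef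
  have hf0 : f ≠ 0 := by
    intro h
    rw [h, Polynomial.natDegree_zero] at hdeg
    omega
  have hgdeg : g.natDegree = n := by
    rw [hgdef, Polynomial.natDegree_comp, Polynomial.natDegree_X_add_C, hdeg, mul_one]
  have hg0 : g ≠ 0 := by
    intro h
    rw [h, Polynomial.natDegree_zero] at hgdeg
    omega
  have hlead : 0 < g.coeff n := by
    rcases (hc n).lt_or_eq with h | h
    · exact h
    · exfalso
      have : g.coeff g.natDegree ≠ 0 := by
        rw [← Polynomial.leadingCoeff]
        exact Polynomial.leadingCoeff_ne_zero.mpr hg0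
      rw [hgdeg] at this
      exact this h.symm
  set w := z - (α : ℂ) with hw
  have hw0 : w ≠ 0 := sub_ne_zero.mpr hz1
  have hwabs : 0 < ‖w‖ := by
    simpa using norm_pos_iff.mpr hw0
  set φ := w.arg with hφdef
  have hφ : |φ| < Real.pi / n := hz2
  have hn' : (1 : ℝ) ≤ n := by exact_mod_cast hn
  have heval : Polynomial.aeval z f = Polynomial.aeval w g := by
    rw [hgdef, Polynomial.aeval_comp]
    congr 1
    simp [hw]
  set ψ : ℝ := (n : ℝ) * φ / 2 with hψdef
  set E : ℂ := Complex.exp ((-ψ : ℝ) * Complex.I) with hE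
  have hterm : ∀ k, (E * ((g.coeff k) • w ^ k)).re
      = g.coeff k * ((‖w‖) ^ k * Real.cos ((k : ℝ) * φ - ψ)) := by
    intro k
    have hwk : w ^ k = ((‖w‖ ^ k : ℝ) : ℂ) * Complex.exp (((k : ℝ) * φ : ℝ) * Complex.I) := by
      conv_lhs => rw [← Complex.norm_mul_exp_arg_mul_I w]
      rw [mul_pow, ← Complex.exp_nat_mul]
      push_cast
      rw [← hφdef]
      ring_nf
    rw [hwk]
    have : E * ((g.coeff k) • (((‖w‖ ^ k : ℝ) : ℂ) * Complex.exp (((k : ℝ) * φ : ℝ) * Complex.I)))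
        = ((g.coeff k : ℝ) : ℂ) * (((‖w‖ ^ k : ℝ) : ℂ) * Complex.exp ((((k : ℝ) * φ - ψ : ℝ)) * Complex.I)) := by
      rw [hE, Complex.real_smul,
        show ((((k : ℝ) * φ - ψ : ℝ)) : ℂ) * Complex.I
            = ((-ψ : ℝ) : ℂ) * Complex.I + (((k : ℝ) * φ : ℝ) : ℂ) * Complex.I by push_cast; ring,
        Complex.exp_add]
      ring
    rw [this, Complex.re_ofReal_mul, Complex.re_ofReal_mul, Complex.exp_ofReal_mul_I_re]
  have hcos : ∀ k ≤ n, 0 < Real.cos ((k : ℝ) * φ - ψ) := by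
    intro k hk
    apply Real.cos_pos_of_mem_Ioo
    have h1 : |(k : ℝ) * φ - ψ| < Real.pi / 2 := by
      have e1 : (k : ℝ) * φ - ψ = φ * ((k : ℝ) - (n : ℝ) / 2) := by
        rw [hψdef]; ring
      rw [e1, abs_mul]
      have h2 : |(k : ℝ) - (n : ℝ) / 2| ≤ (n : ℝ) / 2 := by
        rw [abs_le]
        have : (k : ℝ) ≤ n := by exact_mod_cast hk
        constructor <;> [linarith [Nat.cast_nonneg (α := ℝ) k]; linarith]
      have h3 : 0 ≤ |φ| := abs_nonneg _
      have h4 : |φ| * ((n:ℝ)/2) < (Real.pi / n) * ((n:ℝ)/2) := by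
        apply mul_lt_mul_of_pos_right hφ
        linarith
      have h5 : (Real.pi / n) * ((n:ℝ)/2) = Real.pi / 2 := by
        field_simp
      nlinarith [mul_le_mul_of_nonneg_left h2 h3]
    rw [abs_lt] at h1
    constructor <;> linarith [h1.1, h1.2]
  have hpos : 0 < (E * Polynomial.aeval w g).re := by
    rw [Polynomial.aeval_eq_sum_range (p := g) w, hgdeg, Finset.mul_sum, Complex.re_sum]
    apply Finset.sum_pos'
    · intro k hk
      rw [Finset.mem_range] at hk
      rw [hterm]
      exact mul_nonneg (hc k) (mul_nonneg (by positivity) (hcos k (by omega)).le)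
    · refine ⟨n, Finset.self_mem_range_succ n, ?_⟩
      rw [hterm]
      exact mul_pos hlead (mul_pos (by positivity) (hcos n le_rfl))
  intro h
  rw [heval] at h
  rw [h, mul_zero, Complex.zero_re] at hpos
  exact lt_irrefl 0 hpos
end

section
/- Let n > ℓ be non-negative integers and let α be a non-negative real number. Then: (i) Re(z^n − α·z^ℓ) > 0 for all complex numbers z in the sector S_{α^{1/(n−ℓ)}, π/(2n)}; (ii) Im(z^n − α·z^ℓ) > 0 for all z in the half-sector S⁺_{α^{1/(n−ℓ)}, π/n}, and Im(z^n − α·z^ℓ) < 0 for all z in the half-sector S⁻_{α^{1/(n−ℓ)}, π/n}. -/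
section Helpers
open Complex Finset


-- monotonicity of cos arg under adding a nonneg real
lemma cos_arg_mono (w : ℂ) (v : ℝ) (hv : 0 ≤ v) (hw : w ≠ 0) (hz : w + v ≠ 0) :
    Real.cos (Complex.arg w) ≤ Real.cos (Complex.arg (w + v)) := by
  rw [Complex.cos_arg hw, Complex.cos_arg hz]
  have hre : (w + (v:ℂ)).re = w.re + v := by simp
  have him : (w + (v:ℂ)).im = w.im := by simp
  have ha : 0 < ‖w‖ := by simpa using hw
  have hb : 0 < ‖(w + v)‖ := by simpa using hz
  have ha2 : (‖w‖)^2 = w.re^2 + w.im^2 := by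
    rw [Complex.sq_norm, Complex.normSq_apply]; ring
  have hb2 : (‖(w+v)‖)^2 = (w.re + v)^2 + w.im^2 := by
    rw [Complex.sq_norm, Complex.normSq_apply, hre, him]; ring
  rw [hre, div_le_div_iff₀ ha hb]
  rcases le_or_gt 0 w.re with hx | hx
  · have h1 : w.re * ‖(w+v)‖ ≤ (w.re + v) * ‖w‖ := by
      have hsq : (w.re * ‖(w+v)‖)^2 ≤ ((w.re + v) * ‖w‖)^2 := by
        nlinarith [sq_nonneg w.im, mul_nonneg hv (sq_nonneg w.im), sq_nonneg w.re]
      have h2 : 0 ≤ (w.re + v) * ‖w‖ := by positivity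
      nlinarith [mul_nonneg hx hb.le]
    linarith
  · rcases le_or_gt 0 (w.re + v) with hy | hy
    · nlinarith [mul_nonneg hy ha.le, mul_pos (neg_pos.mpr hx) hb]
    · have hsq : ((w.re+v) * ‖w‖)^2 ≤ (w.re * ‖(w+v)‖)^2 := by
        nlinarith [sq_nonneg w.im, mul_nonneg hv (sq_nonneg w.im)]
      nlinarith [mul_pos (neg_pos.mpr hx) hb, mul_pos (neg_pos.mpr hy) ha]

lemma term_polar (w z : ℂ) (k : ℕ) :
    w * z ^ k = ((‖w‖ * ‖z‖ ^ k : ℝ) : ℂ) *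
      Complex.exp (((w.arg + k * z.arg : ℝ)) * Complex.I) := by
  conv_lhs => rw [← Complex.norm_mul_exp_arg_mul_I w, ← Complex.norm_mul_exp_arg_mul_I z]
  rw [show (((w.arg + k * z.arg : ℝ)):ℂ) * I = (w.arg:ℂ) * I + (k:ℂ) * ((z.arg:ℂ) * I) by
    push_cast; ring, Complex.exp_add, Complex.exp_nat_mul]
  push_cast
  ring

lemma term_re (w z : ℂ) (k : ℕ) :
    (w * z ^ k).re = ‖w‖ * ‖z‖ ^ k * Real.cos (w.arg + k * z.arg) := by
  rw [term_polar, Complex.re_ofReal_mul, Complex.exp_ofReal_mul_I_re]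

lemma term_im (w z : ℂ) (k : ℕ) :
    (w * z ^ k).im = ‖w‖ * ‖z‖ ^ k * Real.sin (w.arg + k * z.arg) := by
  rw [term_polar, Complex.im_ofReal_mul, Complex.exp_ofReal_mul_I_im]

lemma sum_key (n ℓ : ℕ) (h : ℓ < n) (v : ℝ) (z : ℂ) :
    z ^ n - ((v ^ (n - ℓ) : ℝ) : ℂ) * z ^ ℓ
      = ∑ i ∈ Finset.range (n - ℓ), (z - v) * z ^ (ℓ + i) * ((v:ℂ)) ^ (n - ℓ - 1 - i) := by
  have h1 : ∑ i ∈ Finset.range (n - ℓ), (z - v) * z ^ (ℓ + i) * ((v:ℂ)) ^ (n - ℓ - 1 - i)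
      = z ^ ℓ * ((∑ i ∈ Finset.range (n - ℓ), z ^ i * ((v:ℂ)) ^ (n - ℓ - 1 - i)) * (z - v)) := by
    rw [Finset.sum_mul, Finset.mul_sum]
    exact Finset.sum_congr rfl fun i _ => by rw [pow_add]; ring
  rw [h1, geom_sum₂_mul z ((v:ℂ)) (n - ℓ), mul_sub, ← pow_add, Nat.add_sub_cancel' h.le]
  push_cast
  ring

lemma main_re (n ℓ : ℕ) (h : ℓ < n) (v : ℝ) (hv : 0 ≤ v) (z : ℂ)
    (hz : z ≠ (v:ℂ)) (harg : |Complex.arg (z - v)| < Real.pi / (2 * n)) :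
    0 < (z ^ n - ((v ^ (n - ℓ) : ℝ) : ℂ) * z ^ ℓ).re := by
  have hn : 0 < n := Nat.lt_of_le_of_lt (Nat.zero_le ℓ) h
  have hn' : (1:ℝ) ≤ n := by exact_mod_cast hn
  set w := z - (v:ℂ) with hw_def
  have hw : w ≠ 0 := sub_ne_zero.mpr hz
  have hπ : Real.pi / (2 * n) ≤ Real.pi / 2 := by
    apply div_le_div_of_nonneg_left Real.pi_pos.le (by norm_num) (by linarith)
  have habs : |w.arg| < Real.pi / 2 := lt_of_lt_of_le harg hπ
  have hrew : 0 < w.re := by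
    rcases Complex.abs_arg_lt_pi_div_two_iff.mp habs with h' | h'
    · exact h'
    · exact absurd h' hw
  have hzre : 0 < z.re := by
    have : z.re = w.re + v := by simp [hw_def]
    linarith
  have hz0 : z ≠ 0 := by intro h0; rw [h0] at hzre; simp at hzre
  have hwz : w + (v:ℂ) = z := by rw [hw_def]; ring
  have hcos : Real.cos w.arg ≤ Real.cos z.arg := by
    have := cos_arg_mono w v hv hw (by rwa [hwz])
    rwa [hwz] at this
  have hargz : |z.arg| ≤ |w.arg| := by
    have h1 : |z.arg| ∈ Set.Icc 0 Real.pi := ⟨abs_nonneg _, Complex.abs_arg_le_pi z⟩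
    have h2 : |w.arg| ∈ Set.Icc 0 Real.pi := ⟨abs_nonneg _, Complex.abs_arg_le_pi w⟩
    exact (Real.strictAntiOn_cos.le_iff_ge h2 h1).mp (by rwa [Real.cos_abs, Real.cos_abs])
  have hcospos : ∀ i, i < n - ℓ → 0 < Real.cos (w.arg + ((ℓ + i : ℕ):ℝ) * z.arg) := by
    intro i hi
    have hk : ((ℓ + i : ℕ):ℝ) + 1 ≤ n := by
      have : ℓ + i + 1 ≤ n := by omega
      exact_mod_cast this
    have hk0 : (0:ℝ) ≤ ((ℓ + i : ℕ):ℝ) := Nat.cast_nonneg _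
    apply Real.cos_pos_of_mem_Ioo
    have hbound : |w.arg + ((ℓ + i : ℕ):ℝ) * z.arg| < Real.pi / 2 := by
      calc |w.arg + ((ℓ + i : ℕ):ℝ) * z.arg| ≤ |w.arg| + ((ℓ + i : ℕ):ℝ) * |z.arg| := by
            have := abs_add_le w.arg (((ℓ + i : ℕ):ℝ) * z.arg)
            rwa [abs_mul, _root_.abs_of_nonneg hk0] at this
        _ ≤ (1 + ((ℓ + i : ℕ):ℝ)) * |w.arg| := by nlinarith [abs_nonneg w.arg]
        _ < (1 + ((ℓ + i : ℕ):ℝ)) * (Real.pi / (2 * n)) := by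
            apply mul_lt_mul_of_pos_left harg; linarith
        _ ≤ (n:ℝ) * (Real.pi / (2 * n)) := by
            apply mul_le_mul_of_nonneg_right (by linarith)
            positivity
        _ = Real.pi / 2 := by
            field_simp
    constructor
    · linarith [(abs_lt.mp hbound).1]
    · exact (abs_lt.mp hbound).2
  have hterm : ∀ i, ((z - (v:ℂ)) * z ^ (ℓ + i) * ((v:ℂ)) ^ (n - ℓ - 1 - i)).re
      = v ^ (n - ℓ - 1 - i) *
        (‖w‖ * ‖z‖ ^ (ℓ + i) * Real.cos (w.arg + ((ℓ + i : ℕ):ℝ) * z.arg)) := by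
    intro i
    have : (z - (v:ℂ)) * z ^ (ℓ + i) * ((v:ℂ)) ^ (n - ℓ - 1 - i)
        = (w * z ^ (ℓ + i)) * (((v ^ (n - ℓ - 1 - i) : ℝ)):ℂ) := by
      rw [hw_def]; push_cast; ring
    rw [this, mul_comm (w * z ^ (ℓ + i)), Complex.re_ofReal_mul, term_re]
  rw [sum_key n ℓ h v z, Complex.re_sum]
  apply Finset.sum_pos'
  · intro i hi
    rw [hterm i]
    have := hcospos i (Finset.mem_range.mp hi)
    have h1 : 0 < ‖w‖ := by simpa using hw
    have h2 : 0 < ‖z‖ := by simpa using hz0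
    positivity
  · refine ⟨n - ℓ - 1, Finset.mem_range.mpr (by omega), ?_⟩
    rw [hterm _]
    have := hcospos (n - ℓ - 1) (by omega)
    have h1 : 0 < ‖w‖ := by simpa using hw
    have h2 : 0 < ‖z‖ := by simpa using hz0
    have he : n - ℓ - 1 - (n - ℓ - 1) = 0 := by omega
    rw [he, pow_zero, one_mul]
    positivity

lemma main_im (n ℓ : ℕ) (h : ℓ < n) (v : ℝ) (hv : 0 ≤ v) (z : ℂ)
    (h1 : 0 < Complex.arg (z - v)) (h2 : Complex.arg (z - v) < Real.pi / n) :
    0 < (z ^ n - ((v ^ (n - ℓ) : ℝ) : ℂ) * z ^ ℓ).im := by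
  have hn : 0 < n := Nat.lt_of_le_of_lt (Nat.zero_le ℓ) h
  have hn' : (1:ℝ) ≤ n := by exact_mod_cast hn
  set w := z - (v:ℂ) with hw_def
  have hw : w ≠ 0 := by
    intro h0; rw [h0] at h1; simp [Complex.arg_zero] at h1
  have hπ : Real.pi / n ≤ Real.pi := by
    apply div_le_of_le_mul₀ (by linarith) Real.pi_pos.le; nlinarith [Real.pi_pos]
  have hwπ : w.arg < Real.pi := lt_of_lt_of_le h2 hπ
  have habsw : 0 < ‖w‖ := by simpa using hw
  have hwim : 0 < w.im := by
    have hs : 0 < Real.sin w.arg := Real.sin_pos_of_pos_of_lt_pi h1 hwπ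
    rw [Complex.sin_arg] at hs
    exact (div_pos_iff.mp hs).resolve_right (fun hc => absurd habsw (by linarith [hc.2])) |>.1
  have hzim : 0 < z.im := by
    have : z.im = w.im := by simp [hw_def]
    linarith
  have hz0 : z ≠ 0 := by intro h0; rw [h0] at hzim; simp at hzim
  have hwz : w + (v:ℂ) = z := by rw [hw_def]; ring
  have hargz_pos : 0 < z.arg := by
    rcases lt_or_eq_of_le (Complex.arg_nonneg_iff.mpr hzim.le) with h' | h'
    · exact h'
    · exact absurd (Complex.arg_eq_zero_iff.mp h'.symm).2 (by linarith)
  have hargz_ltπ : z.arg < Real.pi := by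
    rcases lt_or_eq_of_le (Complex.arg_le_pi z) with h' | h'
    · exact h'
    · exact absurd (Complex.arg_eq_pi_iff.mp h').2 (by linarith)
  have hcos : Real.cos w.arg ≤ Real.cos z.arg := by
    have := cos_arg_mono w v hv hw (by rwa [hwz])
    rwa [hwz] at this
  have hargz : z.arg ≤ w.arg := by
    have hm1 : z.arg ∈ Set.Icc 0 Real.pi := ⟨hargz_pos.le, Complex.arg_le_pi z⟩
    have hm2 : w.arg ∈ Set.Icc 0 Real.pi := ⟨h1.le, Complex.arg_le_pi w⟩
    exact (Real.strictAntiOn_cos.le_iff_ge hm2 hm1).mp hcos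
  have hsinpos : ∀ i, i < n - ℓ → 0 < Real.sin (w.arg + ((ℓ + i : ℕ):ℝ) * z.arg) := by
    intro i hi
    have hk : ((ℓ + i : ℕ):ℝ) + 1 ≤ n := by
      have : ℓ + i + 1 ≤ n := by omega
      exact_mod_cast this
    have hk0 : (0:ℝ) ≤ ((ℓ + i : ℕ):ℝ) := Nat.cast_nonneg _
    apply Real.sin_pos_of_pos_of_lt_pi
    · have : 0 ≤ ((ℓ + i : ℕ):ℝ) * z.arg := mul_nonneg hk0 hargz_pos.le
      linarith
    · calc w.arg + ((ℓ + i : ℕ):ℝ) * z.arg ≤ (1 + ((ℓ + i : ℕ):ℝ)) * w.arg := by nlinarith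
        _ < (1 + ((ℓ + i : ℕ):ℝ)) * (Real.pi / n) := by
            apply mul_lt_mul_of_pos_left h2; linarith
        _ ≤ (n:ℝ) * (Real.pi / n) := by
            apply mul_le_mul_of_nonneg_right (by linarith)
            positivity
        _ = Real.pi := by field_simp
  have hterm : ∀ i, ((z - (v:ℂ)) * z ^ (ℓ + i) * ((v:ℂ)) ^ (n - ℓ - 1 - i)).im
      = v ^ (n - ℓ - 1 - i) *
        (‖w‖ * ‖z‖ ^ (ℓ + i) * Real.sin (w.arg + ((ℓ + i : ℕ):ℝ) * z.arg)) := by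
    intro i
    have : (z - (v:ℂ)) * z ^ (ℓ + i) * ((v:ℂ)) ^ (n - ℓ - 1 - i)
        = (w * z ^ (ℓ + i)) * (((v ^ (n - ℓ - 1 - i) : ℝ)):ℂ) := by
      rw [hw_def]; push_cast; ring
    rw [this, mul_comm (w * z ^ (ℓ + i)), Complex.im_ofReal_mul, term_im]
  rw [sum_key n ℓ h v z, Complex.im_sum]
  apply Finset.sum_pos'
  · intro i hi
    rw [hterm i]
    have := hsinpos i (Finset.mem_range.mp hi)
    have h2' : 0 < ‖z‖ := by simpa using hz0
    positivity
  · refine ⟨n - ℓ - 1, Finset.mem_range.mpr (by omega), ?_⟩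
    rw [hterm _]
    have := hsinpos (n - ℓ - 1) (by omega)
    have h2' : 0 < ‖z‖ := by simpa using hz0
    have he : n - ℓ - 1 - (n - ℓ - 1) = 0 := by omega
    rw [he, pow_zero, one_mul]
    positivity

end Helpers


theorem stmt_3 (n ℓ : ℕ) (h : ℓ < n) (α : ℝ) (hα : 0 ≤ α) :
    (∀ z ∈ sector (α ^ (1 / ((n : ℝ) - (ℓ : ℝ)))) (Real.pi / (2 * n)),
        0 < (z ^ n - (α : ℂ) * z ^ ℓ).re) ∧
    (∀ z ∈ sectorPlus (α ^ (1 / ((n : ℝ) - (ℓ : ℝ)))) (Real.pi / n),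
        0 < (z ^ n - (α : ℂ) * z ^ ℓ).im) ∧
    (∀ z ∈ sectorMinus (α ^ (1 / ((n : ℝ) - (ℓ : ℝ)))) (Real.pi / n),
        (z ^ n - (α : ℂ) * z ^ ℓ).im < 0) := by
  have hn : 0 < n := Nat.lt_of_le_of_lt (Nat.zero_le ℓ) h
  set v : ℝ := α ^ (1 / ((n : ℝ) - (ℓ : ℝ))) with hv_def
  have hv : 0 ≤ v := Real.rpow_nonneg hα _
  have hm : ((n - ℓ : ℕ) : ℝ) = (n : ℝ) - (ℓ : ℝ) := by
    push_cast [Nat.cast_sub h.le]; ring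
  have hd : ((n : ℝ) - (ℓ : ℝ)) ≠ 0 := by
    rw [← hm]
    have : 0 < n - ℓ := by omega
    positivity
  have hvm : v ^ (n - ℓ) = α := by
    rw [hv_def, ← Real.rpow_natCast (α ^ (1 / ((n : ℝ) - (ℓ : ℝ)))) (n - ℓ),
      ← Real.rpow_mul hα, hm, one_div, inv_mul_cancel₀ hd, Real.rpow_one]
  have hcast : ((α : ℝ) : ℂ) = (((v ^ (n - ℓ) : ℝ)) : ℂ) := by rw [hvm]
  refine ⟨?_, ?_, ?_⟩
  · intro z hz
    rw [hcast]
    exact main_re n ℓ h v hv z hz.1 hz.2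
  · intro z hz
    rw [hcast]
    exact main_im n ℓ h v hv z hz.1 hz.2
  · intro z hz
    obtain ⟨hz1, hz2⟩ := hz
    set z' := (starRingEnd ℂ) z with hz'_def
    have hconj : z' - (v : ℂ) = (starRingEnd ℂ) (z - (v : ℂ)) := by
      rw [hz'_def, map_sub, Complex.conj_ofReal]
    have hargne : Complex.arg (z - (v : ℂ)) ≠ Real.pi := by
      intro hc; rw [hc] at hz2; linarith [Real.pi_pos]
    have harg' : Complex.arg (z' - (v : ℂ)) = -Complex.arg (z - (v : ℂ)) := by
      rw [hconj, Complex.arg_conj, if_neg hargne]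
    have h1' : 0 < Complex.arg (z' - (v : ℂ)) := by rw [harg']; linarith
    have h2' : Complex.arg (z' - (v : ℂ)) < Real.pi / n := by rw [harg']; linarith
    have := main_im n ℓ h v hv z' h1' h2'
    rw [← hcast] at this
    have hconj2 : z' ^ n - (α : ℂ) * z' ^ ℓ = (starRingEnd ℂ) (z ^ n - (α : ℂ) * z ^ ℓ) := by
      rw [hz'_def, map_sub, map_mul, map_pow, map_pow, Complex.conj_ofReal]
    rw [hconj2, Complex.conj_im] at this
    linarith
end

section
/- Let f(X) = a_n X^n + ... + a_1 X + a_0 be a polynomial with real coefficients with a_n > 0, having at least one negative coefficient, and let j_1 < j_2 < ... < j_ℓ be all the indices j for which a_j < 0. Define v = max over 1 ≤ i ≤ ℓ of (|a_{j_1} + a_{j_2} + ... + a_{j_ℓ}| / a_n)^{1/(n − j_i)}. Then f has no zero in the sector S_{v, π/n}. -/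
open Polynomial Finset

lemma im_pow_eq (w : ℂ) (k : ℕ) :
    (w ^ k).im = ‖w‖ ^ k * Real.sin (k * w.arg) := by
  conv_lhs => rw [← Complex.norm_mul_exp_arg_mul_I w]
  rw [mul_pow, ← Complex.ofReal_pow, ← Complex.exp_nat_mul, ← mul_assoc,
    show ((k : ℂ) * (w.arg : ℂ)) = (((k : ℝ) * w.arg : ℝ) : ℂ) by push_cast; ring,
    Complex.mul_im, Complex.exp_ofReal_mul_I_im, Complex.exp_ofReal_mul_I_re]
  simp [← Complex.ofReal_pow]

lemma aux_im (n : ℕ) (hn : 0 < n) (g : Polynomial ℝ) (hgdeg : g.natDegree = n)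
    (hpos : ∀ k, 0 ≤ g.coeff k) (hlead : 0 < g.coeff n) (w : ℂ)
    (h0 : 0 < w.arg) (h1 : w.arg < Real.pi / n) : 0 < (Polynomial.aeval w g).im := by
  have hw : w ≠ 0 := by
    intro h; rw [h, Complex.arg_zero] at h0; exact lt_irrefl _ h0
  have habs : 0 < ‖w‖ := norm_pos_iff.mpr hw
  have hnpos : (0:ℝ) < n := by exact_mod_cast hn
  have hnarg : (n : ℝ) * w.arg < Real.pi := by
    rw [lt_div_iff₀ hnpos] at h1; linarith [h1]
  rw [Polynomial.aeval_eq_sum_range' (n := n + 1) (by rw [hgdeg]; omega), Complex.im_sum]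
  have hterm : ∀ i, (g.coeff i • w ^ i).im
      = g.coeff i * (‖w‖ ^ i * Real.sin (i * w.arg)) := by
    intro i
    rw [Complex.smul_im, im_pow_eq, smul_eq_mul]
  apply Finset.sum_pos'
  · intro i hi
    rw [hterm]
    have hile : i ≤ n := by simp only [Finset.mem_range] at hi; omega
    have hs : 0 ≤ Real.sin (i * w.arg) := by
      apply Real.sin_nonneg_of_nonneg_of_le_pi
      · positivity
      · have : (i : ℝ) * w.arg ≤ (n : ℝ) * w.arg := by
          apply mul_le_mul_of_nonneg_right _ h0.le
          exact_mod_cast hile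
        linarith
    exact mul_nonneg (hpos i) (mul_nonneg (pow_nonneg (norm_nonneg w) i) hs)
  · refine ⟨n, Finset.self_mem_range_succ n, ?_⟩
    rw [hterm]
    have hs : 0 < Real.sin (n * w.arg) := by
      apply Real.sin_pos_of_pos_of_lt_pi
      · positivity
      · exact hnarg
    exact mul_pos hlead (mul_pos (pow_pos habs n) hs)

lemma aux_sector (n : ℕ) (hn : 0 < n) (g : Polynomial ℝ) (hgdeg : g.natDegree = n)
    (hpos : ∀ k, 0 ≤ g.coeff k) (hlead : 0 < g.coeff n) (w : ℂ) (hw : w ≠ 0)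
    (harg : |w.arg| < Real.pi / n) : Polynomial.aeval w g ≠ 0 := by
  have hpi : (0:ℝ) < Real.pi := Real.pi_pos
  rcases lt_trichotomy w.arg 0 with hneg | hzero | hposs
  · -- conjugate
    have hargne : w.arg ≠ Real.pi := by intro h; rw [h] at hneg; linarith
    have hargc : ((starRingEnd ℂ) w).arg = -w.arg := by
      rw [Complex.arg_conj, if_neg hargne]
    have h2 : 0 < (Polynomial.aeval ((starRingEnd ℂ) w) g).im := by
      apply aux_im n hn g hgdeg hpos hlead
      · rw [hargc]; linarith
      · rw [hargc]; rwa [abs_of_neg hneg] at harg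
    intro h
    have h3 : (Polynomial.aeval ((starRingEnd ℂ) w)) g = 0 := by
      have h4 := Polynomial.aeval_algHom_apply (Complex.conjAe) w g
      rw [Complex.conjAe_coe] at h4
      rw [h4, h, map_zero]
    rw [h3] at h2
    simp at h2
  · -- real positive
    obtain ⟨hre, him⟩ := Complex.arg_eq_zero_iff.mp hzero
    have hre' : 0 < w.re := by
      rcases hre.lt_or_eq with h | h
      · exact h
      · exfalso; apply hw; apply Complex.ext <;> simp [← h, him]
    have hwr : w = ((w.re : ℝ) : ℂ) := by apply Complex.ext <;> simp [him]
    have heval : 0 < g.eval w.re := by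
      rw [Polynomial.eval_eq_sum_range' (n := n + 1) (by rw [hgdeg]; omega)]
      apply Finset.sum_pos'
      · intro i _; exact mul_nonneg (hpos i) (pow_nonneg hre'.le i)
      · exact ⟨n, Finset.self_mem_range_succ n, mul_pos hlead (pow_pos hre' n)⟩
    rw [hwr]
    have haux : (Polynomial.aeval ((w.re : ℝ) : ℂ)) g = ((g.eval w.re : ℝ) : ℂ) := by
      rw [show ((w.re : ℝ) : ℂ) = algebraMap ℝ ℂ w.re from rfl,
        Polynomial.aeval_algebraMap_apply]
      simp [Polynomial.coe_aeval_eq_eval]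
    rw [haux]
    exact_mod_cast heval.ne'
  · have h2 : 0 < (Polynomial.aeval w g).im := by
      apply aux_im n hn g hgdeg hpos hlead w hposs
      rwa [abs_of_pos hposs] at harg
    intro h; rw [h] at h2; simp at h2

theorem stmt_4 (n : ℕ) (f : Polynomial ℝ) (hdeg : f.natDegree = n)
    (han : 0 < f.coeff n)
    (J : Finset ℕ) (hJ : J.Nonempty)
    (hJdef : ∀ j, j ∈ J ↔ f.coeff j < 0) :
    ∀ z ∈ sector
        (J.sup' hJ fun i =>
          (|∑ j ∈ J, f.coeff j| / f.coeff n) ^ (1 / ((n : ℝ) - (i : ℝ))))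
        (Real.pi / n),
      Polynomial.aeval z f ≠ 0 := by
  intro z hz
  simp only [sector, Set.mem_setOf_eq] at hz
  obtain ⟨hzne, hzarg⟩ := hz
  set B := |∑ j ∈ J, f.coeff j| with hB
  set v := J.sup' hJ (fun i => (B / f.coeff n) ^ (1 / ((n : ℝ) - (i : ℝ)))) with hv
  have hjn : ∀ j ∈ J, j < n := by
    intro j hj
    have h1 : f.coeff j < 0 := (hJdef j).1 hj
    have h2 : j ≤ n := hdeg ▸ Polynomial.le_natDegree_of_ne_zero h1.ne
    rcases h2.lt_or_eq with h | h
    · exact h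
    · exact absurd (h ▸ h1) (not_lt.2 han.le)
  have hn : 0 < n := by
    obtain ⟨j, hj⟩ := hJ
    exact Nat.pos_of_ne_zero (by intro h; subst h; exact Nat.not_lt_zero j (hjn j hj))
  have hsumneg : ∑ j ∈ J, f.coeff j < 0 :=
    Finset.sum_neg (fun j hj => (hJdef j).1 hj) hJ
  have hBpos : 0 < B := by rw [hB, abs_of_neg hsumneg]; linarith
  have hBsum : B = ∑ j ∈ J, -f.coeff j := by
    rw [hB, abs_of_neg hsumneg, ← Finset.sum_neg_distrib]
  have hvpos : 0 < v := by
    obtain ⟨j, hj⟩ := hJ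
    exact lt_of_lt_of_le (Real.rpow_pos_of_pos (div_pos hBpos han) (1 / ((n : ℝ) - (j : ℝ))))
      (Finset.le_sup' (fun i : ℕ => (B / f.coeff n) ^ (1 / ((n : ℝ) - (i : ℝ)))) hj)
  have hvpow : ∀ j ∈ J, B ≤ f.coeff n * v ^ (n - j) := by
    intro j hj
    have hjlt := hjn j hj
    have hcast : ((n - j : ℕ) : ℝ) = (n : ℝ) - (j : ℝ) := by
      push_cast [Nat.cast_sub hjlt.le]; ring
    have hepos : (0:ℝ) < (n : ℝ) - (j : ℝ) := by
      have : (j:ℝ) < (n:ℝ) := by exact_mod_cast hjlt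
      linarith
    have h1 : (B / f.coeff n) ^ (1 / ((n : ℝ) - (j : ℝ))) ≤ v :=
      Finset.le_sup' (fun i : ℕ => (B / f.coeff n) ^ (1 / ((n : ℝ) - (i : ℝ)))) hj
    have h3 : ((B / f.coeff n) ^ (1 / ((n : ℝ) - (j : ℝ)))) ^ (n - j : ℕ) = B / f.coeff n := by
      rw [← Real.rpow_natCast ((B / f.coeff n) ^ (1 / ((n : ℝ) - (j : ℝ)))) (n - j),
        ← Real.rpow_mul (div_pos hBpos han).le, hcast, one_div,
        inv_mul_cancel₀ hepos.ne', Real.rpow_one]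
    have h2 : B / f.coeff n ≤ v ^ (n - j) := by
      calc B / f.coeff n = ((B / f.coeff n) ^ (1 / ((n : ℝ) - (j : ℝ)))) ^ (n - j : ℕ) := h3.symm
        _ ≤ v ^ (n - j) :=
          pow_le_pow_left₀ (Real.rpow_nonneg (div_pos hBpos han).le _) h1 _
    have h4 := (div_le_iff₀ han).1 h2
    linarith [h4]
  set S := ∑ j ∈ J, (-f.coeff j) * v ^ j with hSdef
  have hSle : S ≤ f.coeff n * v ^ n := by
    obtain ⟨j₀, hj₀, hmax⟩ := Finset.exists_max_image J (fun j => v ^ j) hJ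
    have h1 : S ≤ ∑ j ∈ J, (-f.coeff j) * v ^ j₀ := by
      apply Finset.sum_le_sum
      intro j hj
      have hnn : (0:ℝ) ≤ -f.coeff j := by have := (hJdef j).1 hj; linarith
      exact mul_le_mul_of_nonneg_left (hmax j hj) hnn
    rw [← Finset.sum_mul, ← hBsum] at h1
    calc S ≤ B * v ^ j₀ := h1
      _ ≤ (f.coeff n * v ^ (n - j₀)) * v ^ j₀ :=
        mul_le_mul_of_nonneg_right (hvpow j₀ hj₀) (pow_nonneg hvpos.le _)
      _ = f.coeff n * v ^ n := by rw [mul_assoc, pow_sub_mul_pow v (hjn j₀ hj₀).le]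
  set g := Polynomial.taylor v f with hg
  have hgdeg : g.natDegree = n := by rw [hg, Polynomial.natDegree_taylor, hdeg]
  have key : ∀ k, g.coeff k * v ^ k
      = ∑ m ∈ Finset.range (n + 1), ((m + k).choose k : ℝ) * f.coeff (m + k) * v ^ (m + k) := by
    intro k
    have hd : (Polynomial.hasseDeriv k f).natDegree < n + 1 :=
      lt_of_le_of_lt (Polynomial.natDegree_hasseDeriv_le f k) (by rw [hdeg]; omega)
    rw [hg, Polynomial.taylor_coeff, Polynomial.eval_eq_sum_range' hd v, Finset.sum_mul]
    apply Finset.sum_congr rfl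
    intro m _
    rw [Polynomial.hasseDeriv_coeff, pow_add]
    ring
  have hbpos : ∀ k, 0 ≤ g.coeff k := by
    intro k
    by_cases hk : k ≤ n
    swap
    · rw [Polynomial.coeff_eq_zero_of_natDegree_lt (by rw [hgdeg]; omega)]
    · have hineq : (n.choose k : ℝ) * f.coeff n * v ^ n - (n.choose k : ℝ) * S
          ≤ g.coeff k * v ^ k := by
        rw [key k]
        have hpt : ∀ m ∈ Finset.range (n + 1),
            (if m = n - k then (n.choose k : ℝ) * f.coeff n * v ^ n else 0)
              - (if m + k ∈ J then (n.choose k : ℝ) * ((-f.coeff (m + k)) * v ^ (m + k)) else 0)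
            ≤ ((m + k).choose k : ℝ) * f.coeff (m + k) * v ^ (m + k) := by
          intro m _
          by_cases h1 : m = n - k
          · subst h1
            have hmk : n - k + k = n := by omega
            rw [hmk, if_pos rfl, if_neg (fun hc => absurd ((hJdef n).1 hc) (not_lt.2 han.le))]
            simp
          · rw [if_neg h1]
            by_cases h2 : m + k ∈ J
            · rw [if_pos h2]
              have hco : f.coeff (m + k) < 0 := (hJdef _).1 h2
              have hle : ((m + k).choose k : ℝ) ≤ (n.choose k : ℝ) := by
                exact_mod_cast Nat.choose_le_choose k (hjn _ h2).le
              have hvp : (0:ℝ) ≤ v ^ (m + k) := pow_nonneg hvpos.le _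
              have hcc : (0:ℝ) ≤ ((m + k).choose k : ℝ) := Nat.cast_nonneg _
              nlinarith [mul_nonneg (mul_nonneg (sub_nonneg.2 hle) (neg_nonneg.2 hco.le)) hvp]
            · rw [if_neg h2]
              have hco : 0 ≤ f.coeff (m + k) := not_lt.1 (fun hc => h2 ((hJdef _).2 hc))
              have hnn : (0:ℝ) ≤ ((m + k).choose k : ℝ) * f.coeff (m + k) * v ^ (m + k) := by
                have := pow_nonneg hvpos.le (m + k)
                positivity
              linarith
        have hsum := Finset.sum_le_sum hpt
        rw [Finset.sum_sub_distrib] at hsum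
        have e1 : ∑ m ∈ Finset.range (n + 1),
            (if m = n - k then (n.choose k : ℝ) * f.coeff n * v ^ n else 0)
            = (n.choose k : ℝ) * f.coeff n * v ^ n := by
          rw [Finset.sum_ite_eq' (Finset.range (n + 1)) (n - k)
            (fun _ => (n.choose k : ℝ) * f.coeff n * v ^ n),
            if_pos (Finset.mem_range.2 (by omega))]
        have e2 : ∑ m ∈ Finset.range (n + 1),
            (if m + k ∈ J then (n.choose k : ℝ) * ((-f.coeff (m + k)) * v ^ (m + k)) else 0)
            ≤ (n.choose k : ℝ) * S := by
          have hsplit : ∀ m, (if m + k ∈ J then (n.choose k : ℝ) * ((-f.coeff (m + k)) * v ^ (m + k)) else 0)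
              = (n.choose k : ℝ) * (if m + k ∈ J then (-f.coeff (m + k)) * v ^ (m + k) else 0) := by
            intro m; split <;> simp
          simp only [hsplit]
          rw [← Finset.mul_sum]
          refine mul_le_mul_of_nonneg_left ?_ (by positivity : (0:ℝ) ≤ (n.choose k : ℝ))
          rw [← Finset.sum_filter]
          rw [← Finset.sum_image (g := fun m => m + k) (f := fun j => (-f.coeff j) * v ^ j)
            (by intro x _ y _ h; simp only at h; omega)]
          rw [hSdef]
          apply Finset.sum_le_sum_of_subset_of_nonneg
          · intro j hjm
            obtain ⟨m, hm, rfl⟩ := Finset.mem_image.1 hjm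
            exact (Finset.mem_filter.1 hm).2
          · intro j hj _
            have hco := (hJdef j).1 hj
            have hnn : (0:ℝ) ≤ -f.coeff j := by linarith
            exact mul_nonneg hnn (pow_nonneg hvpos.le j)
        linarith
      have hfinal : 0 ≤ g.coeff k * v ^ k := by
        nlinarith [hSle, (by positivity : (0:ℝ) ≤ (n.choose k : ℝ))]
      by_contra hcon
      push_neg at hcon
      nlinarith [pow_pos hvpos k]
  have hglead : g.coeff n = f.coeff n := by
    have h1 := key n
    rw [Finset.sum_eq_single 0] at h1
    · simp only [zero_add, Nat.choose_self, Nat.cast_one, one_mul] at h1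
      exact mul_right_cancel₀ (pow_pos hvpos n).ne' h1
    · intro m _ hm0
      have hz0 : f.coeff (m + n) = 0 :=
        Polynomial.coeff_eq_zero_of_natDegree_lt (by rw [hdeg]; omega)
      rw [hz0]; ring
    · intro h; exact absurd (Finset.mem_range.2 (by omega)) h
  set w := z - (v : ℂ) with hw
  have hwne : w ≠ 0 := sub_ne_zero.2 hzne
  have heq : Polynomial.aeval z f = Polynomial.aeval w g := by
    rw [hg, Polynomial.taylor_apply, Polynomial.aeval_comp]
    congr 1
    simp [hw]
  rw [heq]
  exact aux_sector n hn g hgdeg hbpos (hglead ▸ han) w hwne hzarg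
end

section
/- Let f(X) = a_n X^n + ... + a_1 X + a_0 be a polynomial with real coefficients with a_n > 0, having at least one negative coefficient, and let j_1 < j_2 < ... < j_ℓ be all the indices j for which a_j < 0. Let λ_1, ..., λ_ℓ be arbitrary positive real numbers with λ_1 + ... + λ_ℓ = 1, and define v = max over 1 ≤ i ≤ ℓ of (|a_{j_i}| / (λ_i · a_n))^{1/(n − j_i)}. Then f has no zero in the sector S_{v, π/n}. -/
open Complex Finset Polynomial

lemma im_rexp (r x : ℝ) : ((r:ℂ) * Complex.exp (x * Complex.I)).im = r * Real.sin x := by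
  simp [Complex.exp_mul_I, Complex.mul_im, Complex.sin_ofReal_re]

lemma re_rexp (r x : ℝ) : ((r:ℂ) * Complex.exp (x * Complex.I)).re = r * Real.cos x := by
  simp [Complex.exp_mul_I, Complex.mul_re, Complex.cos_ofReal_re]

lemma polar_mul (r s a b : ℝ) :
    ((r:ℂ) * Complex.exp (a*Complex.I)) * ((s:ℂ) * Complex.exp (b*Complex.I))
      = ((r*s : ℝ) : ℂ) * Complex.exp (((a+b : ℝ) : ℂ) * Complex.I) := by
  push_cast
  rw [add_mul, Complex.exp_add]
  ring

lemma polar_pow (r a : ℝ) (k : ℕ) :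
    ((r:ℂ) * Complex.exp (a*Complex.I)) ^ k
      = ((r^k : ℝ) : ℂ) * Complex.exp ((((k:ℝ)*a : ℝ) : ℂ) * Complex.I) := by
  rw [mul_pow, ← Complex.exp_nat_mul]
  push_cast; ring_nf

lemma polar_add_real {d r θ : ℝ} (hd : 0 ≤ d) (hr : 0 < r) (hθ0 : 0 < θ) (hθπ : θ < Real.pi) :
    ∃ (r' θ' : ℝ), 0 < r' ∧ 0 < θ' ∧ θ' ≤ θ ∧ (0 < d → θ' < θ) ∧
      (d : ℂ) + (r:ℂ) * Complex.exp (θ * Complex.I) = (r':ℂ) * Complex.exp (θ' * Complex.I) := by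
  set w : ℂ := (d : ℂ) + (r:ℂ) * Complex.exp (θ * Complex.I) with hw
  have him : w.im = r * Real.sin θ := by simp [hw, im_rexp]
  have hre : w.re = d + r * Real.cos θ := by simp [hw, re_rexp]
  have hsθ : 0 < Real.sin θ := Real.sin_pos_of_pos_of_lt_pi hθ0 hθπ
  have himpos : 0 < w.im := by rw [him]; positivity
  have hw0 : w ≠ 0 := by intro h; rw [h] at himpos; simp at himpos
  refine ⟨‖w‖, Complex.arg w, ?_, ?_, ?_, ?_, ?_⟩
  · exact norm_pos_iff.mpr hw0
  · rcases lt_or_eq_of_le (Complex.arg_nonneg_iff.2 himpos.le) with h | h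
    · exact h
    · exfalso; have := (Complex.arg_eq_zero_iff.1 h.symm).2; linarith
  case _ =>
    -- θ' ≤ θ
    have habs : 0 < ‖w‖ := norm_pos_iff.mpr hw0
    have hcos : Real.cos (Complex.arg w) = w.re / ‖w‖ := Complex.cos_arg hw0
    have hsin : Real.sin (Complex.arg w) = w.im / ‖w‖ := Complex.sin_arg w
    have key : Real.sin (θ - Complex.arg w) = d * Real.sin θ / ‖w‖ := by
      rw [Real.sin_sub, hcos, hsin, him, hre]; field_simp; ring
    have hkey : 0 ≤ Real.sin (θ - Complex.arg w) := by
      rw [key]; positivity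
    by_contra hlt
    push_neg at hlt
    have hargπ : Complex.arg w < Real.pi := by
      rcases lt_or_eq_of_le (Complex.arg_le_pi w) with h | h
      · exact h
      · exfalso; have := (Complex.arg_eq_pi_iff.1 h).2; linarith
    have h1 : θ - Complex.arg w < 0 := by linarith
    have h2 : -Real.pi < θ - Complex.arg w := by linarith
    exact absurd hkey (not_le.2 (Real.sin_neg_of_neg_of_neg_pi_lt h1 h2))
  case _ =>
    intro hdpos
    have habs : 0 < ‖w‖ := norm_pos_iff.mpr hw0
    have hcos : Real.cos (Complex.arg w) = w.re / ‖w‖ := Complex.cos_arg hw0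
    have hsin : Real.sin (Complex.arg w) = w.im / ‖w‖ := Complex.sin_arg w
    have key : Real.sin (θ - Complex.arg w) = d * Real.sin θ / ‖w‖ := by
      rw [Real.sin_sub, hcos, hsin, him, hre]; field_simp; ring
    have hkey : 0 < Real.sin (θ - Complex.arg w) := by
      rw [key]; positivity
    have hle : Complex.arg w ≤ θ := by
      -- reuse previous part? redo
      by_contra hlt
      push_neg at hlt
      have hargπ : Complex.arg w < Real.pi := by
        rcases lt_or_eq_of_le (Complex.arg_le_pi w) with h | h
        · exact h
        · exfalso; have := (Complex.arg_eq_pi_iff.1 h).2; linarith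
      have h1 : θ - Complex.arg w < 0 := by linarith
      have h2 : -Real.pi < θ - Complex.arg w := by linarith
      nlinarith [Real.sin_neg_of_neg_of_neg_pi_lt h1 h2]
    rcases lt_or_eq_of_le hle with h | h
    · exact h
    · exfalso; rw [h] at hkey; simp at hkey
  · exact (Complex.norm_mul_exp_arg_mul_I w).symm

lemma rexp_shift (a r θ : ℝ) :
    Complex.exp (a * Complex.I) * ((r:ℂ) * Complex.exp (θ * Complex.I))
      = (r:ℂ) * Complex.exp ((a + θ) * Complex.I) := by
  rw [add_mul, Complex.exp_add]
  ring

lemma re_shift (a r θ : ℝ) :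
    (Complex.exp (a * Complex.I) * ((r:ℂ) * Complex.exp (θ * Complex.I))).re
      = r * Real.cos (a + θ) := by
  rw [rexp_shift, show ((a:ℂ) + (θ:ℂ)) * Complex.I = ((a + θ : ℝ):ℂ) * Complex.I by push_cast; ring,
    re_rexp]

lemma im_shift (a r θ : ℝ) :
    (Complex.exp (a * Complex.I) * ((r:ℂ) * Complex.exp (θ * Complex.I))).im
      = r * Real.sin (a + θ) := by
  rw [rexp_shift, show ((a:ℂ) + (θ:ℂ)) * Complex.I = ((a + θ : ℝ):ℂ) * Complex.I by push_cast; ring,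
    im_rexp]

lemma sum_cone {m : ℕ} (hm : 0 < m) {s : ℝ} (hs0 : 0 ≤ s) (hsπ : s < Real.pi) {g : ℕ → ℂ}
    (hg : ∀ k < m, ∃ (r θ : ℝ), 0 < r ∧ 0 ≤ θ ∧ θ ≤ s ∧
      g k = (r:ℂ) * Complex.exp (θ*Complex.I)) :
    ∃ (r' θ' : ℝ), 0 < r' ∧ 0 ≤ θ' ∧ θ' ≤ s ∧
      ∑ k ∈ Finset.range m, g k = (r':ℂ) * Complex.exp (θ' * Complex.I) := by
  set S := ∑ k ∈ Finset.range m, g k with hS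
  have him : 0 ≤ S.im := by
    rw [hS, Complex.im_sum]
    refine Finset.sum_nonneg fun k hk => ?_
    obtain ⟨r, θ, hr, hθ0, hθs, hgk⟩ := hg k (Finset.mem_range.1 hk)
    rw [hgk, im_rexp]
    exact mul_nonneg hr.le (Real.sin_nonneg_of_nonneg_of_le_pi hθ0 (by linarith))
  have hre : 0 < (Complex.exp ((-(s/2) : ℝ) * Complex.I) * S).re := by
    rw [hS, Finset.mul_sum, Complex.re_sum]
    refine Finset.sum_pos (fun k hk => ?_) (Finset.nonempty_range_iff.2 hm.ne')
    obtain ⟨r, θ, hr, hθ0, hθs, hgk⟩ := hg k (Finset.mem_range.1 hk)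
    rw [hgk, re_shift]
    have hcos : 0 < Real.cos (-(s/2) + θ) := by
      exact Real.cos_pos_of_mem_Ioo
        (Set.mem_Ioo.2 ⟨by nlinarith [Real.pi_pos], by nlinarith [Real.pi_pos]⟩)
    positivity
  have hS0 : S ≠ 0 := by
    intro h; rw [h, mul_zero] at hre; simp at hre
  refine ⟨‖S‖, Complex.arg S, norm_pos_iff.mpr hS0, Complex.arg_nonneg_iff.2 him, ?_,
    (Complex.norm_mul_exp_arg_mul_I S).symm⟩
  by_contra hlt
  push_neg at hlt
  have hargπ : Complex.arg S ≤ Real.pi := Complex.arg_le_pi S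
  have habs : 0 < ‖S‖ := norm_pos_iff.mpr hS0
  have hSe : S = (‖S‖ : ℂ) * Complex.exp ((Complex.arg S : ℝ) * Complex.I) :=
    (Complex.norm_mul_exp_arg_mul_I S).symm
  have him2 : (Complex.exp ((-s : ℝ) * Complex.I) * S).im ≤ 0 := by
    rw [hS, Finset.mul_sum, Complex.im_sum]
    refine Finset.sum_nonpos fun k hk => ?_
    obtain ⟨r, θ, hr, hθ0, hθs, hgk⟩ := hg k (Finset.mem_range.1 hk)
    rw [hgk, im_shift]
    have : Real.sin (-s + θ) ≤ 0 := by
      rw [show -s + θ = -(s - θ) by ring, Real.sin_neg, neg_nonpos]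
      exact Real.sin_nonneg_of_nonneg_of_le_pi (by linarith) (by linarith)
    nlinarith
  have him2' : (Complex.exp ((-s : ℝ) * Complex.I) * S).im
      = ‖S‖ * Real.sin (-s + Complex.arg S) := by
    nth_rewrite 1 [hSe]; rw [im_shift]
  have hsin0 : Real.sin (-s + Complex.arg S) ≤ 0 := by nlinarith [him2'.symm.trans_le him2]
  have h1 : 0 < -s + Complex.arg S := by linarith
  have h2 : -s + Complex.arg S ≤ Real.pi := by linarith
  rcases lt_or_eq_of_le h2 with h | h
  · nlinarith [Real.sin_pos_of_pos_of_lt_pi h1 h]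
  · have hs0' : s = 0 := by linarith
    have hre' : (Complex.exp ((-(s/2) : ℝ) * Complex.I) * S).re
        = ‖S‖ * Real.cos (-(s/2) + Complex.arg S) := by
      nth_rewrite 1 [hSe]; rw [re_shift]
    have hargS : Complex.arg S = Real.pi := by linarith
    rw [hre', hs0', hargS] at hre
    simp only [neg_zero, zero_div, zero_add, Real.cos_pi] at hre
    nlinarith

lemma lemC {v ρ φ : ℝ} {m : ℕ} (hv : 0 < v) (hρ : 0 < ρ) (hφ : 0 < φ) (hm : 0 < m)
    (hmφ : (m:ℝ) * φ < Real.pi) {c : ℝ} (hc : c ≤ v ^ m) :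
    ∃ (r' θ' : ℝ), 0 < r' ∧ 0 < θ' ∧ θ' ≤ (m:ℝ) * φ ∧
      ((v:ℂ) + (ρ:ℂ) * Complex.exp (φ*Complex.I)) ^ m - (c:ℂ)
        = (r':ℂ) * Complex.exp (θ'*Complex.I) := by
  have hm1 : (1:ℝ) ≤ (m:ℝ) := by exact_mod_cast hm
  have hφπ : φ < Real.pi := by nlinarith
  obtain ⟨R, ψ, hR, hψ0, hψφ, hψs, hz⟩ := polar_add_real hv.le hρ hφ hφπ
  set z : ℂ := (v:ℂ) + (ρ:ℂ) * Complex.exp (φ*Complex.I) with hzdef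
  have hzR : z = (R:ℂ) * Complex.exp (ψ*Complex.I) := hz
  have hs0 : 0 ≤ ((m:ℝ)-1)*ψ := by nlinarith
  have hsπ : ((m:ℝ)-1)*ψ < Real.pi := by nlinarith
  have hg : ∀ k < m, ∃ (r θ : ℝ), 0 < r ∧ 0 ≤ θ ∧ θ ≤ ((m:ℝ)-1)*ψ ∧
      z^k * (v:ℂ)^(m-1-k) = (r:ℂ) * Complex.exp (θ*Complex.I) := by
    intro k hk
    refine ⟨R^k * v^(m-1-k), (k:ℝ)*ψ, by positivity, by positivity, ?_, ?_⟩
    · have hk1 : (k:ℝ)+1 ≤ (m:ℝ) := by exact_mod_cast hk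
      nlinarith
    · rw [hzR, polar_pow]
      push_cast
      ring_nf
  obtain ⟨rS, θS, hrS, hθS0, hθSs, hSeq⟩ := sum_cone hm hs0 hsπ hg
  have hgeom : (∑ k ∈ Finset.range m, z^k * (v:ℂ)^(m-1-k)) * (z - (v:ℂ)) = z^m - (v:ℂ)^m :=
    geom_sum₂_mul z (v:ℂ) m
  have hzv : z - (v:ℂ) = (ρ:ℂ) * Complex.exp (φ*Complex.I) := by rw [hzdef]; ring
  have hpow : z^m - (v:ℂ)^m = ((rS*ρ : ℝ):ℂ) * Complex.exp (((θS+φ : ℝ):ℂ) * Complex.I) := by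
    rw [← hgeom, hSeq, hzv, polar_mul]
  have hθπ2 : θS + φ < Real.pi := by nlinarith
  obtain ⟨r', θ', hr', hθ'0, hθ'le, _, heq⟩ :=
    polar_add_real (d := v^m - c) (r := rS*ρ) (θ := θS+φ) (by linarith)
      (by positivity) (by linarith) hθπ2
  refine ⟨r', θ', hr', hθ'0, by nlinarith, ?_⟩
  have hsplit : z^m - (c:ℂ) = ((v^m - c : ℝ):ℂ) + (z^m - (v:ℂ)^m) := by push_cast; ring
  rw [hsplit, hpow]
  exact heq

lemma im_mul_polar (r s a b : ℝ) :
    (((r:ℂ) * Complex.exp (a*Complex.I)) * ((s:ℂ) * Complex.exp (b*Complex.I))).im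
      = r * s * Real.sin (a+b) := by
  rw [polar_mul, im_rexp]

lemma decomp {A : Type*} [CommRing A] [Algebra ℝ A] (f : Polynomial ℝ) (n : ℕ)
    (hdeg : f.natDegree = n) (J : Finset ℕ) (hJsub : J ⊆ Finset.range n) (lam : ℕ → ℝ)
    (hlamsum : ∑ j ∈ J, lam j = 1) (z : A) :
    Polynomial.aeval z f
      = (∑ j ∈ J, ((lam j * f.coeff n) • z^n + f.coeff j • z^j))
        + ∑ j ∈ Finset.range n \ J, f.coeff j • z^j := by
  rw [Polynomial.aeval_eq_sum_range, hdeg, Finset.sum_range_succ, Finset.sum_add_distrib]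
  have h1 : ∑ j ∈ J, (lam j * f.coeff n) • z^n = f.coeff n • z^n := by
    rw [← Finset.sum_smul, ← Finset.sum_mul, hlamsum, one_mul]
  have h2 : ∑ j ∈ J, f.coeff j • z^j + ∑ j ∈ Finset.range n \ J, f.coeff j • z^j
      = ∑ j ∈ Finset.range n, f.coeff j • z^j := by
    rw [add_comm, Finset.sum_sdiff hJsub]
  rw [h1, add_assoc, h2, add_comm]

set_option maxHeartbeats 1000000 in
lemma main_pos (n : ℕ) (f : Polynomial ℝ) (hdeg : f.natDegree = n)
    (han : 0 < f.coeff n) (J : Finset ℕ) (hJ : J.Nonempty)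
    (hJdef : ∀ j, j ∈ J ↔ f.coeff j < 0)
    (lam : ℕ → ℝ) (hlam : ∀ j ∈ J, 0 < lam j) (hlamsum : ∑ j ∈ J, lam j = 1)
    (v : ℝ)
    (hvsup : ∀ j ∈ J, (|f.coeff j| / (lam j * f.coeff n)) ^ ((1:ℝ) / ((n : ℝ) - (j : ℝ))) ≤ v)
    (z : ℂ) (hzne : z ≠ (v:ℂ))
    (hφ0 : 0 < Complex.arg (z - (v:ℂ)))
    (hφn : Complex.arg (z - (v:ℂ)) < Real.pi / n) :
    0 < (Polynomial.aeval z f).im := by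
  have hJsub : J ⊆ Finset.range n := by
    intro j hj
    have h1 : f.coeff j < 0 := (hJdef j).1 hj
    have h2 : j ≤ n := hdeg ▸ Polynomial.le_natDegree_of_ne_zero h1.ne
    have h3 : j ≠ n := fun h => by rw [h] at h1; linarith
    exact Finset.mem_range.2 (lt_of_le_of_ne h2 h3)
  obtain ⟨j₀, hj₀⟩ := hJ
  have hn : 0 < n := lt_of_le_of_lt (Nat.zero_le _) (Finset.mem_range.1 (hJsub hj₀))
  have hbase : ∀ j ∈ J, 0 < |f.coeff j| / (lam j * f.coeff n) := by
    intro j hj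
    have h1 : f.coeff j < 0 := (hJdef j).1 hj
    have := hlam j hj
    apply div_pos (abs_pos.2 h1.ne) (by positivity)
  have hv : 0 < v :=
    lt_of_lt_of_le (Real.rpow_pos_of_pos (hbase j₀ hj₀) _) (hvsup j₀ hj₀)
  set φ := Complex.arg (z - (v:ℂ)) with hφdef
  set ρ := ‖z - (v:ℂ)‖ with hρdef
  have hρ : 0 < ρ := norm_pos_iff.mpr (sub_ne_zero.2 hzne)
  have hpolar := Complex.norm_mul_exp_arg_mul_I (z - (v:ℂ))
  have hzp : z = (v:ℂ) + (ρ:ℂ) * Complex.exp (φ * Complex.I) := by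
    rw [← hφdef, ← hρdef] at hpolar
    rw [hpolar]; ring
  have hn' : (0:ℝ) < n := by exact_mod_cast hn
  have hnφ : (n:ℝ) * φ < Real.pi := by
    have := (lt_div_iff₀ hn').1 hφn
    linarith
  have hn1 : (1:ℝ) ≤ (n:ℝ) := by exact_mod_cast hn
  have hφπ : φ < Real.pi := by nlinarith
  obtain ⟨R, ψ, hR, hψ0, hψle, hψstrict, hzeq⟩ := polar_add_real hv.le hρ hφ0 hφπ
  have hzR : z = (R:ℂ) * Complex.exp (ψ * Complex.I) := hzp.trans hzeq
  rw [decomp f n hdeg J hJsub lam hlamsum z, Complex.add_im, Complex.im_sum, Complex.im_sum]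
  apply add_pos_of_pos_of_nonneg
  · refine Finset.sum_pos (fun j hj => ?_) ⟨j₀, hj₀⟩
    have haj : f.coeff j < 0 := (hJdef j).1 hj
    have hjn : j < n := Finset.mem_range.1 (hJsub hj)
    have hl : 0 < lam j := hlam j hj
    set m := n - j with hmdef
    have hm0 : 0 < m := by omega
    have hmn : j + m = n := by omega
    set c := -f.coeff j / (lam j * f.coeff n) with hcdef
    have hc0 : 0 < c := div_pos (by linarith) (by positivity)
    have hcast : ((n:ℝ) - (j:ℝ)) = (m:ℝ) := by
      rw [hmdef, Nat.cast_sub hjn.le]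
    have habs : |f.coeff j| = -f.coeff j := abs_of_neg haj
    have hcv : c ≤ v ^ m := by
      have h1 : c ^ ((1:ℝ)/(m:ℝ)) ≤ v := by
        have := hvsup j hj
        rw [hcast, habs] at this
        exact this
      have h2 : (c ^ ((1:ℝ)/(m:ℝ)))^m = c := by
        rw [← Real.rpow_natCast (c ^ ((1:ℝ)/(m:ℝ))) m, ← Real.rpow_mul hc0.le, one_div,
          inv_mul_cancel₀ (by exact_mod_cast hm0.ne'), Real.rpow_one]
      calc c = (c ^ ((1:ℝ)/(m:ℝ)))^m := h2.symm
        _ ≤ v^m := pow_le_pow_left₀ (Real.rpow_nonneg hc0.le _) h1 m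
    have hmφπ : (m:ℝ) * φ < Real.pi := by
      have hmn' : (m:ℝ) ≤ (n:ℝ) := by exact_mod_cast Nat.sub_le n j
      nlinarith
    obtain ⟨r', θ', hr', hθ'0, hθ'le, hCeq⟩ := lemC hv hρ hφ0 hm0 hmφπ hcv
    rw [← hzp] at hCeq
    have hkey : (lam j * f.coeff n) * c = -f.coeff j := by
      rw [hcdef]; field_simp
    have hkeyC : ((lam j * f.coeff n : ℝ):ℂ) * (c:ℂ) = -((f.coeff j : ℝ):ℂ) := by
      rw [← Complex.ofReal_mul, hkey, Complex.ofReal_neg]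
    have h3c : z^j * z^m = z^n := by rw [← pow_add, hmn]
    have hT : (lam j * f.coeff n) • z^n + f.coeff j • z^j
        = ((lam j * f.coeff n : ℝ):ℂ) * (z^j * (z^m - (c:ℂ))) := by
      rw [Complex.real_smul, Complex.real_smul]
      linear_combination ((lam j * f.coeff n : ℝ):ℂ) * h3c.symm + (z:ℂ)^j * hkeyC
    have hzj : z^j = ((R^j : ℝ):ℂ) * Complex.exp ((((j:ℝ)*ψ : ℝ):ℂ) * Complex.I) := by
      rw [hzR, polar_pow]
    rw [hT, hzj, hCeq, Complex.im_ofReal_mul, im_mul_polar]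
    have hsin : 0 < Real.sin ((j:ℝ)*ψ + θ') := by
      apply Real.sin_pos_of_pos_of_lt_pi
      · positivity
      · have hjψ : (j:ℝ)*ψ ≤ (j:ℝ)*φ := by
          have : (0:ℝ) ≤ (j:ℝ) := by positivity
          nlinarith
        have hjm : (j:ℝ) + (m:ℝ) = (n:ℝ) := by exact_mod_cast hmn
        nlinarith
    positivity
  · refine Finset.sum_nonneg fun j hj => ?_
    obtain ⟨hjr, hjJ⟩ := Finset.mem_sdiff.1 hj
    have hjn : j < n := Finset.mem_range.1 hjr
    have haj : 0 ≤ f.coeff j := by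
      by_contra h; exact hjJ ((hJdef j).2 (by linarith))
    have hzj : z^j = ((R^j : ℝ):ℂ) * Complex.exp ((((j:ℝ)*ψ : ℝ):ℂ) * Complex.I) := by
      rw [hzR, polar_pow]
    rw [Complex.real_smul, hzj, Complex.im_ofReal_mul, im_rexp]
    have hsin : 0 ≤ Real.sin ((j:ℝ)*ψ) := by
      apply Real.sin_nonneg_of_nonneg_of_le_pi
      · positivity
      · have hj1 : (j:ℝ) ≤ (n:ℝ) - 1 := by
          have : (j:ℝ) + 1 ≤ (n:ℝ) := by exact_mod_cast hjn
          linarith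
        have h1 : (j:ℝ)*ψ ≤ ((n:ℝ)-1)*ψ := mul_le_mul_of_nonneg_right hj1 hψ0.le
        have h2 : ((n:ℝ)-1)*ψ ≤ ((n:ℝ)-1)*φ := mul_le_mul_of_nonneg_left hψle (by linarith)
        nlinarith
    exact mul_nonneg haj (mul_nonneg (pow_nonneg hR.le j) hsin)

lemma main_real (n : ℕ) (f : Polynomial ℝ) (hdeg : f.natDegree = n)
    (han : 0 < f.coeff n) (J : Finset ℕ) (hJ : J.Nonempty)
    (hJdef : ∀ j, j ∈ J ↔ f.coeff j < 0)
    (lam : ℕ → ℝ) (hlam : ∀ j ∈ J, 0 < lam j) (hlamsum : ∑ j ∈ J, lam j = 1)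
    (v : ℝ)
    (hvsup : ∀ j ∈ J, (|f.coeff j| / (lam j * f.coeff n)) ^ ((1:ℝ) / ((n : ℝ) - (j : ℝ))) ≤ v)
    (x : ℝ) (hx : v < x) :
    0 < Polynomial.aeval x f := by
  have hJsub : J ⊆ Finset.range n := by
    intro j hj
    have h1 : f.coeff j < 0 := (hJdef j).1 hj
    have h2 : j ≤ n := hdeg ▸ Polynomial.le_natDegree_of_ne_zero h1.ne
    have h3 : j ≠ n := fun h => by rw [h] at h1; linarith
    exact Finset.mem_range.2 (lt_of_le_of_ne h2 h3)
  obtain ⟨j₀, hj₀⟩ := hJ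
  have hbase : ∀ j ∈ J, 0 < |f.coeff j| / (lam j * f.coeff n) := by
    intro j hj
    have h1 : f.coeff j < 0 := (hJdef j).1 hj
    have := hlam j hj
    exact div_pos (abs_pos.2 h1.ne) (by positivity)
  have hv : 0 < v :=
    lt_of_lt_of_le (Real.rpow_pos_of_pos (hbase j₀ hj₀) _) (hvsup j₀ hj₀)
  have hx0 : 0 < x := lt_trans hv hx
  rw [decomp f n hdeg J hJsub lam hlamsum x]
  apply add_pos_of_pos_of_nonneg
  · refine Finset.sum_pos (fun j hj => ?_) ⟨j₀, hj₀⟩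
    have haj : f.coeff j < 0 := (hJdef j).1 hj
    have hjn : j < n := Finset.mem_range.1 (hJsub hj)
    have hl : 0 < lam j := hlam j hj
    set m := n - j with hmdef
    have hm0 : 0 < m := by omega
    have hmn : j + m = n := by omega
    set c := -f.coeff j / (lam j * f.coeff n) with hcdef
    have hc0 : 0 < c := div_pos (by linarith) (by positivity)
    have hcast : ((n:ℝ) - (j:ℝ)) = (m:ℝ) := by
      rw [hmdef, Nat.cast_sub hjn.le]
    have habs : |f.coeff j| = -f.coeff j := abs_of_neg haj
    have hcv : c ≤ v ^ m := by
      have h1 : c ^ ((1:ℝ)/(m:ℝ)) ≤ v := by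
        have := hvsup j hj
        rw [hcast, habs] at this
        exact this
      have h2 : (c ^ ((1:ℝ)/(m:ℝ)))^m = c := by
        rw [← Real.rpow_natCast (c ^ ((1:ℝ)/(m:ℝ))) m, ← Real.rpow_mul hc0.le, one_div,
          inv_mul_cancel₀ (by exact_mod_cast hm0.ne'), Real.rpow_one]
      calc c = (c ^ ((1:ℝ)/(m:ℝ)))^m := h2.symm
        _ ≤ v^m := pow_le_pow_left₀ (Real.rpow_nonneg hc0.le _) h1 m
    have hkey : (lam j * f.coeff n) * c = -f.coeff j := by
      rw [hcdef]; field_simp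
    have h3r : x^j * x^m = x^n := by rw [← pow_add, hmn]
    have hT : (lam j * f.coeff n) • x^n + f.coeff j • x^j
        = (lam j * f.coeff n) * (x^j * (x^m - c)) := by
      rw [smul_eq_mul, smul_eq_mul]
      linear_combination (lam j * f.coeff n) * h3r.symm + x^j * hkey
    rw [hT]
    have hxm : c < x^m := lt_of_le_of_lt hcv (pow_lt_pow_left₀ hx hv.le hm0.ne')
    have : 0 < x^m - c := by linarith
    positivity
  · refine Finset.sum_nonneg fun j hj => ?_
    obtain ⟨hjr, hjJ⟩ := Finset.mem_sdiff.1 hj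
    have haj : 0 ≤ f.coeff j := by
      by_contra h; exact hjJ ((hJdef j).2 (by linarith))
    rw [smul_eq_mul]
    positivity

theorem stmt_5 (n : ℕ) (f : Polynomial ℝ) (hdeg : f.natDegree = n)
    (han : 0 < f.coeff n)
    (J : Finset ℕ) (hJ : J.Nonempty)
    (hJdef : ∀ j, j ∈ J ↔ f.coeff j < 0)
    (lam : ℕ → ℝ) (hlam : ∀ j ∈ J, 0 < lam j) (hlamsum : ∑ j ∈ J, lam j = 1) :
    ∀ z ∈ sector
        (J.sup' hJ fun i =>
          (|f.coeff i| / (lam i * f.coeff n)) ^ (1 / ((n : ℝ) - (i : ℝ))))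
        (Real.pi / n),
      Polynomial.aeval z f ≠ 0 := by
  intro z hz
  obtain ⟨hzne, habs⟩ := hz
  set v : ℝ := J.sup' hJ fun i =>
    (|f.coeff i| / (lam i * f.coeff n)) ^ (1 / ((n : ℝ) - (i : ℝ))) with hvdef
  have hvsup : ∀ j ∈ J,
      (|f.coeff j| / (lam j * f.coeff n)) ^ ((1:ℝ) / ((n : ℝ) - (j : ℝ))) ≤ v := by
    intro j hj
    exact Finset.le_sup' (fun i => (|f.coeff i| / (lam i * f.coeff n)) ^ (1 / ((n : ℝ) - (i : ℝ)))) hj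
  rw [abs_lt] at habs
  obtain ⟨hlo, hhi⟩ := habs
  rcases lt_trichotomy (Complex.arg (z - (v:ℂ))) 0 with hneg | hzero | hpos
  · intro h0
    have hconj : (starRingEnd ℂ) z - (v:ℂ) = (starRingEnd ℂ) (z - (v:ℂ)) := by
      rw [map_sub, Complex.conj_ofReal]
    have hargc : Complex.arg ((starRingEnd ℂ) z - (v:ℂ)) = -Complex.arg (z - (v:ℂ)) := by
      rw [hconj, Complex.arg_conj, if_neg]
      intro h
      rw [h] at hneg
      exact absurd hneg (not_lt.2 Real.pi_pos.le)
    have hcne : (starRingEnd ℂ) z ≠ (v:ℂ) := by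
      intro h
      apply hzne
      have := congrArg (starRingEnd ℂ) h
      rwa [RingHomInvPair.comp_apply_eq, Complex.conj_ofReal] at this
    have h1 : 0 < (Polynomial.aeval ((starRingEnd ℂ) z) f).im := by
      apply main_pos n f hdeg han J hJ hJdef lam hlam hlamsum v hvsup _ hcne
      · rw [hargc]; linarith
      · rw [hargc]; linarith
    rw [Polynomial.aeval_conj, h0, map_zero] at h1
    simp at h1
  · intro h0
    have hzero' := Complex.arg_eq_zero_iff.1 hzero
    have him : (z - (v:ℂ)).im = 0 := hzero'.2
    have hre0 : 0 ≤ (z - (v:ℂ)).re := hzero'.1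
    set x : ℝ := v + (z - (v:ℂ)).re with hxdef
    have hzx : z = (x:ℂ) := by
      apply Complex.ext
      · simp [hxdef, Complex.sub_re]
      · simpa [Complex.sub_im] using him
    have hxv : v < x := by
      rcases lt_or_eq_of_le hre0 with h | h
      · rw [hxdef]; linarith
      · exfalso
        apply hzne
        apply Complex.ext
        · have : (z - (v:ℂ)).re = 0 := h.symm
          simpa [Complex.sub_re, sub_eq_zero] using this
        · simpa [Complex.sub_im, sub_eq_zero] using him
    have hpos' := main_real n f hdeg han J hJ hJdef lam hlam hlamsum v hvsup x hxv
    rw [hzx, show ((x:ℝ):ℂ) = algebraMap ℝ ℂ x from rfl,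
      Polynomial.aeval_algebraMap_apply] at h0
    have : Polynomial.aeval x f = 0 := by
      have h0' : ((Polynomial.aeval x f : ℝ) : ℂ) = 0 := h0
      exact_mod_cast h0'
    linarith
  · intro h0
    have h1 : 0 < (Polynomial.aeval z f).im :=
      main_pos n f hdeg han J hJ hJdef lam hlam hlamsum v hvsup z hzne hpos hhi
    rw [h0] at h1
    simp at h1
end

section
/- Let f(X) = a_n X^n + ... + a_1 X + a_0 be a polynomial with real coefficients with a_n > 0, having at least one negative coefficient; let j_1 < j_2 < ... < j_ℓ be all the indices j for which a_j < 0, and let k_1 < k_2 < ... < k_t = n be all the indices k > j_ℓ for which a_k > 0. Define v = min over 1 ≤ r ≤ t of [ max over 1 ≤ i ≤ ℓ of (|a_{j_1} + a_{j_2} + ... + a_{j_ℓ}| / a_{k_r})^{1/(k_r − j_i)} ]. Then f has no zero in the sector S_{v, π/n}. -/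
section ZeroFreeSector

open Complex Finset


private lemma ofReal_mul_im' (c : ℝ) (u : ℂ) : ((c : ℂ) * u).im = c * u.im := by
  simp [Complex.mul_im]

private lemma im_coe_mul_exp (c θ : ℝ) :
    ((c : ℂ) * Complex.exp ((θ : ℂ) * Complex.I)).im = c * Real.sin θ := by
  simp [Complex.exp_mul_I, Complex.mul_im, ← Complex.ofReal_cos, ← Complex.ofReal_sin]

private lemma im_pow_mul_aux (z w : ℂ) (p : ℕ) :
    (z ^ p * w).im
      = ‖z‖ ^ p * ‖w‖ * Real.sin (p * z.arg + w.arg) := by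
  conv_lhs => rw [← Complex.norm_mul_exp_arg_mul_I z, ← Complex.norm_mul_exp_arg_mul_I w]
  have h1 : ((‖z‖ : ℂ) * Complex.exp (z.arg * Complex.I)) ^ p *
       ((‖w‖ : ℂ) * Complex.exp (w.arg * Complex.I))
      = ((‖z‖ ^ p * ‖w‖ : ℝ) : ℂ) *
        Complex.exp ((((p : ℝ) * z.arg + w.arg : ℝ) : ℂ) * Complex.I) := by
    rw [mul_pow, ← Complex.exp_nat_mul, mul_mul_mul_comm, ← Complex.exp_add]
    push_cast
    ring_nf
  rw [h1, im_coe_mul_exp]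

private lemma im_pow_eq_s6 (z : ℂ) (p : ℕ) :
    (z ^ p).im = ‖z‖ ^ p * Real.sin (p * z.arg) := by
  have := im_pow_mul_aux z 1 p
  simpa using this

private lemma arg_pos_of_im_pos {z : ℂ} (hz : 0 < z.im) :
    0 < z.arg ∧ z.arg < Real.pi := by
  constructor
  · rcases (Complex.arg_nonneg_iff.mpr hz.le).lt_or_eq with h | h
    · exact h
    · exfalso
      have h2 := Complex.arg_eq_zero_iff.mp h.symm
      linarith [h2.2]
  · rcases (Complex.arg_le_pi z).lt_or_eq with h | h
    · exact h
    · exfalso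
      have h2 := Complex.arg_eq_pi_iff.mp h
      linarith [h2.2]

private lemma arg_add_ofReal_le {z : ℂ} (hz : 0 < z.im) {v : ℝ} (hv : 0 ≤ v) :
    (z + (v : ℂ)).arg ≤ z.arg := by
  have hz0 : z ≠ 0 := by
    intro h; rw [h] at hz; simp at hz
  have him : (z + (v : ℂ)).im = z.im := by simp
  have himp : 0 < (z + (v : ℂ)).im := by rw [him]; exact hz
  have hz0' : z + (v : ℂ) ≠ 0 := by
    intro h; rw [h] at himp; simp at himp
  have h1 := arg_pos_of_im_pos hz
  have h2 := arg_pos_of_im_pos himp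
  by_contra hlt
  push_neg at hlt
  have hcos := Real.strictAntiOn_cos ⟨h1.1.le, h1.2.le⟩ ⟨h2.1.le, h2.2.le⟩ hlt
  rw [Complex.cos_arg hz0, Complex.cos_arg hz0'] at hcos
  have hA : 0 < ‖z‖ := norm_pos_iff.mpr hz0
  have hB : 0 < ‖z + (v : ℂ)‖ := norm_pos_iff.mpr hz0'
  have h3 : |‖z + (v : ℂ)‖ - ‖z‖| ≤ v := by
    have := abs_norm_sub_norm_le (z + (v : ℂ)) z
    simpa [Complex.norm_real, Real.norm_eq_abs, _root_.abs_of_nonneg hv] using this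
  have h4 : |z.re| ≤ ‖z‖ := Complex.abs_re_le_norm z
  have h5 := abs_le.mp h3
  have h6 := abs_le.mp h4
  have hre : (z + (v : ℂ)).re = z.re + v := by simp
  have key : z.re * ‖z + (v : ℂ)‖ ≤ (z.re + v) * ‖z‖ := by
    nlinarith [mul_nonneg (sub_nonneg.mpr h6.2) (sub_nonneg.mpr h5.2),
      mul_nonneg (sub_nonneg.mpr (neg_le.mp h6.1)) (sub_nonneg.mpr (neg_le.mp h5.1)),
      mul_nonneg (sub_nonneg.mpr h6.2) hv]
  rw [hre] at hcos
  have := (div_le_div_iff₀ hA hB).mpr key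
  linarith [hcos, this]

private lemma core_two_term {r i : ℕ} (hir : i < r) {v β : ℝ} (hv : 0 < v) (hβ : 0 < β)
    (hdom : β ≤ v ^ (r - i)) {z : ℂ}
    (hφ0 : 0 < (z - (v : ℂ)).arg) (hφπ : (r : ℝ) * (z - (v : ℂ)).arg < Real.pi) :
    0 < (z ^ r - (β : ℂ) * z ^ i).im := by
  set w : ℂ := z - (v : ℂ) with hw
  have hr1 : 1 ≤ r := Nat.one_le_iff_ne_zero.mpr (by omega)
  have hrR : (1 : ℝ) ≤ (r : ℝ) := by exact_mod_cast hr1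
  have hφπ' : w.arg < Real.pi := by nlinarith [hφ0]
  have hw0 : w ≠ 0 := by
    intro h; rw [h] at hφ0; simp [Complex.arg_zero] at hφ0
  have himw : 0 < w.im := by
    have h1 := Complex.norm_mul_sin_arg w
    have h2 : 0 < Real.sin w.arg := Real.sin_pos_of_pos_of_lt_pi hφ0 hφπ'
    have h3 : 0 < ‖w‖ := norm_pos_iff.mpr hw0
    nlinarith
  have hzw : z = w + (v : ℂ) := by rw [hw]; ring
  have himz : 0 < z.im := by rw [hzw]; simpa using himw
  have hz0 : z ≠ 0 := by intro h; rw [h] at himz; simp at himz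
  have hψ := arg_pos_of_im_pos himz
  have hψφ : z.arg ≤ w.arg := by
    have := arg_add_ofReal_le himw hv.le
    rwa [← hzw] at this
  have hA : 0 < ‖z‖ := norm_pos_iff.mpr hz0
  have hR : 0 < ‖w‖ := norm_pos_iff.mpr hw0
  set m : ℕ := r - i with hm
  have hm0 : 0 < m := by omega
  have him : i + m = r := by omega
  -- telescoping identity
  have tele : ∀ t ∈ Finset.range m,
      (v : ℂ) ^ (m - 1 - t) * z ^ (i + t) * w
        = (v : ℂ) ^ (m - (t + 1)) * z ^ (i + (t + 1)) - (v : ℂ) ^ (m - t) * z ^ (i + t) := by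
    intro t ht
    rw [Finset.mem_range] at ht
    rw [show m - 1 - t = m - (t + 1) from by omega,
        show m - t = m - (t + 1) + 1 from by omega,
        show i + (t + 1) = (i + t) + 1 from rfl, pow_succ, pow_succ, hw]
    ring
  have hsum : (∑ t ∈ Finset.range m, (v : ℂ) ^ (m - 1 - t) * z ^ (i + t)) * w
      = z ^ r - (v : ℂ) ^ m * z ^ i := by
    rw [Finset.sum_mul, Finset.sum_congr rfl tele,
      Finset.sum_range_sub (fun t => (v : ℂ) ^ (m - t) * z ^ (i + t))]
    simp [him]
  have hid : z ^ r - (β : ℂ) * z ^ i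
      = (∑ t ∈ Finset.range m, (v : ℂ) ^ (m - 1 - t) * z ^ (i + t)) * w
        + (((v ^ m - β : ℝ)) : ℂ) * z ^ i := by
    rw [hsum]; push_cast; ring
  rw [hid, Complex.add_im]
  have hsin_bound : ∀ p : ℕ, p + 1 ≤ r → (p : ℝ) * z.arg + w.arg < Real.pi := by
    intro p hp
    have hpR : (p : ℝ) ≤ (r : ℝ) - 1 := by
      have : (p : ℝ) + 1 ≤ (r : ℝ) := by exact_mod_cast hp
      linarith
    nlinarith [hψ.1.le, hψφ, hφ0.le]
  apply add_pos_of_pos_of_nonneg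
  · rw [Finset.sum_mul, Complex.im_sum]
    apply Finset.sum_pos _ (Finset.nonempty_range_iff.mpr hm0.ne')
    intro t ht
    rw [Finset.mem_range] at ht
    have hterm : (v : ℂ) ^ (m - 1 - t) * z ^ (i + t) * w
        = ((v ^ (m - 1 - t) : ℝ) : ℂ) * (z ^ (i + t) * w) := by push_cast; ring
    rw [hterm, ofReal_mul_im', im_pow_mul_aux]
    have hsin : 0 < Real.sin ((i + t : ℕ) * z.arg + w.arg) := by
      apply Real.sin_pos_of_pos_of_lt_pi
      · have : (0 : ℝ) ≤ (i + t : ℕ) * z.arg :=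
          mul_nonneg (Nat.cast_nonneg _) hψ.1.le
        linarith
      · exact hsin_bound (i + t) (by omega)
    positivity
  · rw [ofReal_mul_im', im_pow_eq_s6]
    have hsin : 0 ≤ Real.sin ((i : ℝ) * z.arg) := by
      apply Real.sin_nonneg_of_nonneg_of_le_pi
      · exact mul_nonneg (Nat.cast_nonneg _) hψ.1.le
      · have h1 : (i : ℝ) * z.arg + w.arg < Real.pi := hsin_bound i (by omega)
        linarith [hφ0]
    have hvm : 0 ≤ v ^ m - β := by rw [hm]; linarith
    positivity

private lemma main_upper (n r : ℕ) (a : ℕ → ℝ) (J : Finset ℕ) (hJne : J.Nonempty)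
    (hJlt : ∀ j ∈ J, j < r) (hJneg : ∀ j ∈ J, a j < 0)
    (hnonneg : ∀ m, m ∉ J → 0 ≤ a m) (har : 0 < a r) (hrn : r ≤ n)
    (v : ℝ) (hv : 0 < v)
    (hdom : ∀ i ∈ J, (∑ j ∈ J, -a j) ≤ a r * v ^ (r - i))
    (z : ℂ) (hφ0 : 0 < (z - (v : ℂ)).arg)
    (hφn : (n : ℝ) * (z - (v : ℂ)).arg < Real.pi) :
    0 < (∑ m ∈ Finset.range (n + 1), (a m : ℂ) * z ^ m).im := by
  set B : ℝ := ∑ j ∈ J, -a j with hB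
  have hBpos : 0 < B := Finset.sum_pos (fun j hj => neg_pos.mpr (hJneg j hj)) hJne
  -- basic geometry
  set w : ℂ := z - (v : ℂ) with hw
  have hJne' := hJne
  obtain ⟨j₀, hj₀⟩ := hJne'
  have hr1 : 1 ≤ r := by have := hJlt j₀ hj₀; omega
  have hn1 : 1 ≤ n := hr1.trans hrn
  have hnR : (1 : ℝ) ≤ (n : ℝ) := by exact_mod_cast hn1
  have hφπ' : w.arg < Real.pi := by nlinarith [hφ0]
  have hw0 : w ≠ 0 := by intro h; rw [h] at hφ0; simp [Complex.arg_zero] at hφ0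
  have himw : 0 < w.im := by
    have h1 := Complex.norm_mul_sin_arg w
    have h2 : 0 < Real.sin w.arg := Real.sin_pos_of_pos_of_lt_pi hφ0 hφπ'
    have h3 : 0 < ‖w‖ := norm_pos_iff.mpr hw0
    nlinarith
  have hzw : z = w + (v : ℂ) := by rw [hw]; ring
  have himz : 0 < z.im := by rw [hzw]; simpa using himw
  have hψ := arg_pos_of_im_pos himz
  have hψφ : z.arg ≤ w.arg := by
    have := arg_add_ofReal_le himw hv.le
    rwa [← hzw] at this
  have hrJ : r ∉ J := fun h => absurd (hJlt r h) (lt_irrefl r)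
  -- split the sum
  rw [Complex.im_sum]
  have himeq : ∀ m : ℕ, ((a m : ℂ) * z ^ m).im = a m * (z ^ m).im := fun m =>
    ofReal_mul_im' _ _
  simp only [himeq]
  set S : Finset ℕ := insert r J with hS
  have hSsub : S ⊆ Finset.range (n + 1) := by
    intro m hm
    rw [hS, Finset.mem_insert] at hm
    rw [Finset.mem_range]
    rcases hm with rfl | hm
    · omega
    · have := hJlt m hm; omega
  rw [← Finset.sum_sdiff hSsub]
  have hrest : 0 ≤ ∑ m ∈ Finset.range (n + 1) \ S, a m * (z ^ m).im := by
    apply Finset.sum_nonneg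
    intro m hm
    rw [Finset.mem_sdiff, Finset.mem_range] at hm
    have hmJ : m ∉ J := fun h => hm.2 (by rw [hS]; exact Finset.mem_insert_of_mem h)
    have ham : 0 ≤ a m := hnonneg m hmJ
    have hsin : 0 ≤ (z ^ m).im := by
      rw [im_pow_eq_s6]
      have hmn : (m : ℝ) ≤ (n : ℝ) := by exact_mod_cast Nat.lt_succ_iff.mp hm.1
      have hsin' : 0 ≤ Real.sin ((m : ℝ) * z.arg) := by
        apply Real.sin_nonneg_of_nonneg_of_le_pi
        · exact mul_nonneg (Nat.cast_nonneg _) hψ.1.le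
        · nlinarith [hψ.1.le, hψφ, hφ0.le]
      positivity
    positivity
  have hpos : 0 < ∑ m ∈ S, a m * (z ^ m).im := by
    rw [hS, Finset.sum_insert hrJ]
    -- per-index key inequality
    have key : ∀ i ∈ J, B * (z ^ i).im < a r * (z ^ r).im := by
      intro i hi
      have hir := hJlt i hi
      have hd := hdom i hi
      have hβ : 0 < B / a r := div_pos hBpos har
      have hdom' : B / a r ≤ v ^ (r - i) := by
        rw [div_le_iff₀ har]; linarith [hd]
      have hφπr : (r : ℝ) * (z - (v : ℂ)).arg < Real.pi := by
        have hrnR : (r : ℝ) ≤ (n : ℝ) := by exact_mod_cast hrn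
        nlinarith [hφ0]
      have hc := core_two_term hir hv hβ hdom' hφ0 hφπr
      rw [Complex.sub_im, ofReal_mul_im'] at hc
      have h2 : (B / a r) * (z ^ i).im < (z ^ r).im := by linarith
      calc B * (z ^ i).im = a r * ((B / a r) * (z ^ i).im) := by
            field_simp <;> ring
        _ < a r * (z ^ r).im := by exact mul_lt_mul_of_pos_left h2 har
    have hsum2 : ∑ i ∈ J, (-a i) * (z ^ i).im
        < ∑ i ∈ J, ((-a i) / B) * (a r * (z ^ r).im) := by
      apply Finset.sum_lt_sum_of_nonempty hJne
      intro i hi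
      have hci : 0 < (-a i) / B := div_pos (neg_pos.mpr (hJneg i hi)) hBpos
      have : (-a i) * (z ^ i).im = ((-a i) / B) * (B * (z ^ i).im) := by
        field_simp <;> ring
      rw [this]
      exact mul_lt_mul_of_pos_left (key i hi) hci
    have hsum3 : ∑ i ∈ J, ((-a i) / B) * (a r * (z ^ r).im) = a r * (z ^ r).im := by
      rw [← Finset.sum_mul, ← Finset.sum_div, ← hB, div_self hBpos.ne', one_mul]
    have hcancel : ∑ i ∈ J, a i * (z ^ i).im + ∑ i ∈ J, (-a i) * (z ^ i).im = 0 := by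
      rw [← Finset.sum_add_distrib]
      apply Finset.sum_eq_zero
      intro i _; ring
    linarith
  linarith

private lemma main_real_s6 (n r : ℕ) (a : ℕ → ℝ) (J : Finset ℕ) (hJne : J.Nonempty)
    (hJlt : ∀ j ∈ J, j < r) (hJneg : ∀ j ∈ J, a j < 0)
    (hnonneg : ∀ m, m ∉ J → 0 ≤ a m) (har : 0 < a r) (hrn : r ≤ n)
    (v : ℝ) (hv : 0 < v)
    (hdom : ∀ i ∈ J, (∑ j ∈ J, -a j) ≤ a r * v ^ (r - i))
    (x : ℝ) (hx : v < x) :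
    0 < ∑ m ∈ Finset.range (n + 1), a m * x ^ m := by
  set B : ℝ := ∑ j ∈ J, -a j with hB
  have hBpos : 0 < B := Finset.sum_pos (fun j hj => neg_pos.mpr (hJneg j hj)) hJne
  have hx0 : 0 < x := hv.trans hx
  have hrJ : r ∉ J := fun h => absurd (hJlt r h) (lt_irrefl r)
  set S : Finset ℕ := insert r J with hS
  have hSsub : S ⊆ Finset.range (n + 1) := by
    intro m hm
    rw [hS, Finset.mem_insert] at hm
    rw [Finset.mem_range]
    rcases hm with rfl | hm
    · omega
    · have := hJlt m hm; omega
  rw [← Finset.sum_sdiff hSsub]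
  have hrest : 0 ≤ ∑ m ∈ Finset.range (n + 1) \ S, a m * x ^ m := by
    apply Finset.sum_nonneg
    intro m hm
    rw [Finset.mem_sdiff] at hm
    have hmJ : m ∉ J := fun h => hm.2 (by rw [hS]; exact Finset.mem_insert_of_mem h)
    have := hnonneg m hmJ
    positivity
  have hpos : 0 < ∑ m ∈ S, a m * x ^ m := by
    rw [hS, Finset.sum_insert hrJ]
    have key : ∀ i ∈ J, B * x ^ i < a r * x ^ r := by
      intro i hi
      have hir := hJlt i hi
      have hd := hdom i hi
      have hpow : a r * v ^ (r - i) < a r * x ^ (r - i) := by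
        apply mul_lt_mul_of_pos_left _ har
        exact pow_lt_pow_left₀ hx hv.le (by omega)
      have h1 : B < a r * x ^ (r - i) := lt_of_le_of_lt hd hpow
      have h2 : B * x ^ i < (a r * x ^ (r - i)) * x ^ i :=
        mul_lt_mul_of_pos_right h1 (pow_pos hx0 i)
      calc B * x ^ i < (a r * x ^ (r - i)) * x ^ i := h2
        _ = a r * x ^ r := by rw [mul_assoc, ← pow_add]; congr 2; omega
    have hsum2 : ∑ i ∈ J, (-a i) * x ^ i < ∑ i ∈ J, ((-a i) / B) * (a r * x ^ r) := by
      apply Finset.sum_lt_sum_of_nonempty hJne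
      intro i hi
      have hci : 0 < (-a i) / B := div_pos (neg_pos.mpr (hJneg i hi)) hBpos
      have : (-a i) * x ^ i = ((-a i) / B) * (B * x ^ i) := by field_simp <;> ring
      rw [this]
      exact mul_lt_mul_of_pos_left (key i hi) hci
    have hsum3 : ∑ i ∈ J, ((-a i) / B) * (a r * x ^ r) = a r * x ^ r := by
      rw [← Finset.sum_mul, ← Finset.sum_div, ← hB, div_self hBpos.ne', one_mul]
    have hcancel : ∑ i ∈ J, a i * x ^ i + ∑ i ∈ J, (-a i) * x ^ i = 0 := by
      rw [← Finset.sum_add_distrib]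
      apply Finset.sum_eq_zero
      intro i _; ring
    linarith
  linarith

theorem stmt_6 (n : ℕ) (f : Polynomial ℝ) (hdeg : f.natDegree = n)
    (han : 0 < f.coeff n)
    (J : Finset ℕ) (hJ : J.Nonempty)
    (hJdef : ∀ j, j ∈ J ↔ f.coeff j < 0)
    (K : Finset ℕ) (hK : K.Nonempty)
    (hKdef : ∀ k, k ∈ K ↔ (J.max' hJ < k ∧ 0 < f.coeff k)) :
    ∀ z ∈ sector
        (K.inf' hK fun r => J.sup' hJ fun i =>
          (|∑ j ∈ J, f.coeff j| / f.coeff r) ^ (1 / ((r : ℝ) - (i : ℝ))))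
        (Real.pi / n),
      Polynomial.aeval z f ≠ 0 := by
  intro z hz
  obtain ⟨hzne, hzarg⟩ := hz
  set v : ℝ := K.inf' hK fun r => J.sup' hJ fun i =>
      (|∑ j ∈ J, f.coeff j| / f.coeff r) ^ (1 / ((r : ℝ) - (i : ℝ))) with hvdef
  obtain ⟨r, hrK, hreq⟩ := Finset.exists_mem_eq_inf' hK
    (fun r => J.sup' hJ fun i =>
      (|∑ j ∈ J, f.coeff j| / f.coeff r) ^ (1 / ((r : ℝ) - (i : ℝ))))
  have hrprop := (hKdef r).mp hrK
  have har : 0 < f.coeff r := hrprop.2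
  have hJlt : ∀ j ∈ J, j < r := fun j hj =>
    lt_of_le_of_lt (Finset.le_max' J j hj) hrprop.1
  have hJneg : ∀ j ∈ J, f.coeff j < 0 := fun j hj => (hJdef j).mp hj
  have hnonneg : ∀ m, m ∉ J → 0 ≤ f.coeff m := fun m hm =>
    le_of_not_gt fun h => hm ((hJdef m).mpr h)
  have hrn : r ≤ n := hdeg ▸ Polynomial.le_natDegree_of_ne_zero har.ne'
  have hsumneg : ∑ j ∈ J, f.coeff j < 0 := by
    have h := Finset.sum_lt_sum_of_nonempty hJ (g := fun _ => (0 : ℝ)) hJneg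
    simpa using h
  have hBabs : |∑ j ∈ J, f.coeff j| = ∑ j ∈ J, -f.coeff j := by
    rw [abs_of_neg hsumneg, ← Finset.sum_neg_distrib]
  have hBpos : 0 < |∑ j ∈ J, f.coeff j| := abs_pos.mpr hsumneg.ne
  -- v is the sup' at r
  have hveq : v = J.sup' hJ fun i =>
      (|∑ j ∈ J, f.coeff j| / f.coeff r) ^ (1 / ((r : ℝ) - (i : ℝ))) := hreq
  have hvge : ∀ i ∈ J,
      (|∑ j ∈ J, f.coeff j| / f.coeff r) ^ (1 / ((r : ℝ) - (i : ℝ))) ≤ v := by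
    intro i hi
    rw [hveq]
    exact Finset.le_sup' (fun i : ℕ => (|∑ j ∈ J, f.coeff j| / f.coeff r) ^ (1 / ((r : ℝ) - (i : ℝ)))) hi
  have hBr : 0 < |∑ j ∈ J, f.coeff j| / f.coeff r := div_pos hBpos har
  have hv0 : 0 < v := by
    obtain ⟨j₀, hj₀⟩ := hJ
    exact lt_of_lt_of_le (Real.rpow_pos_of_pos hBr _) (hvge j₀ hj₀)
  have hdom : ∀ i ∈ J, (∑ j ∈ J, -f.coeff j) ≤ f.coeff r * v ^ (r - i) := by
    intro i hi
    have hir : i < r := hJlt i hi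
    set e : ℝ := (r : ℝ) - (i : ℝ) with he
    have he0 : 0 < e := by
      rw [he]; have : (i : ℝ) < (r : ℝ) := by exact_mod_cast hir
      linarith
    have h1 : |∑ j ∈ J, f.coeff j| / f.coeff r ≤ v ^ e := by
      calc |∑ j ∈ J, f.coeff j| / f.coeff r
          = ((|∑ j ∈ J, f.coeff j| / f.coeff r) ^ (1 / e)) ^ e := by
            rw [← Real.rpow_mul hBr.le, one_div_mul_cancel he0.ne', Real.rpow_one]
        _ ≤ v ^ e := Real.rpow_le_rpow (Real.rpow_nonneg hBr.le _) (hvge i hi) he0.le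
    have h2 : v ^ e = v ^ (r - i) := by
      rw [← Real.rpow_natCast v (r - i)]
      congr 1
      rw [he]
      push_cast [Nat.cast_sub hir.le]
      ring
    rw [h2] at h1
    rw [← hBabs]
    rw [div_le_iff₀ har] at h1
    linarith
  -- rewrite aeval as explicit sum
  have haeval : (Polynomial.aeval z) f
      = ∑ m ∈ Finset.range (n + 1), (f.coeff m : ℂ) * z ^ m := by
    rw [Polynomial.aeval_eq_sum_range, hdeg]
    exact Finset.sum_congr rfl fun m _ => Complex.real_smul
  rw [haeval]
  have hr1 : 1 ≤ r := by have := hrprop.1; omega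
  have hn1 : 1 ≤ n := hr1.trans hrn
  have hnpos : (0 : ℝ) < n := by exact_mod_cast hn1
  have habs := abs_lt.mp hzarg
  rcases lt_trichotomy ((z - (v : ℂ)).arg) 0 with hneg | hzero | hposs
  · -- lower sector: conjugate
    set zb : ℂ := (starRingEnd ℂ) z with hzb
    have hconj : (starRingEnd ℂ) (z - (v : ℂ)) = zb - (v : ℂ) := by
      rw [map_sub, hzb, Complex.conj_ofReal]
    have hargpi : (z - (v : ℂ)).arg ≠ Real.pi := by
      intro h; rw [h] at hneg; exact absurd hneg (not_lt.mpr Real.pi_pos.le)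
    have hargconj : (zb - (v : ℂ)).arg = -(z - (v : ℂ)).arg := by
      rw [← hconj, Complex.arg_conj, if_neg hargpi]
    have h1 : 0 < (zb - (v : ℂ)).arg := by rw [hargconj]; linarith
    have h2 : (n : ℝ) * (zb - (v : ℂ)).arg < Real.pi := by
      rw [hargconj]
      have hlt : -(z - (v : ℂ)).arg < Real.pi / n := by linarith [habs.1]
      calc (n : ℝ) * -(z - (v : ℂ)).arg < (n : ℝ) * (Real.pi / n) :=
            mul_lt_mul_of_pos_left hlt hnpos
        _ = Real.pi := by field_simp
    have him := main_upper n r (fun m => f.coeff m) J hJ hJlt hJneg hnonneg har hrn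
      v hv0 hdom zb h1 h2
    intro heq
    have hms : ∑ m ∈ Finset.range (n + 1), ((f.coeff m : ℂ)) * zb ^ m
        = (starRingEnd ℂ) (∑ m ∈ Finset.range (n + 1), ((f.coeff m : ℂ)) * z ^ m) := by
      rw [map_sum]
      exact Finset.sum_congr rfl fun m _ => by
        rw [map_mul, map_pow, Complex.conj_ofReal]
    rw [heq, map_zero] at hms
    rw [hms] at him
    simp at him
  · -- real positive ray
    have h0 := Complex.arg_eq_zero_iff.mp hzero
    have hzim : z.im = 0 := by have := h0.2; simpa using this
    have hzx : z = ((z.re : ℝ) : ℂ) := Complex.ext rfl (by simp [hzim])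
    have hrene : z.re ≠ v := by
      intro h
      exact hzne (Complex.ext (by simpa using h) (by simpa using hzim))
    have hxv : v < z.re := by
      have hre : 0 ≤ z.re - v := by have := h0.1; simpa using this
      rcases lt_or_eq_of_le hre with h | h
      · linarith
      · exact absurd (by linarith : z.re = v) hrene
    rw [hzx]
    have hcast : ∑ m ∈ Finset.range (n + 1), ((f.coeff m : ℂ)) * ((z.re : ℝ) : ℂ) ^ m
        = ((∑ m ∈ Finset.range (n + 1), f.coeff m * z.re ^ m : ℝ) : ℂ) := by
      norm_cast
    rw [hcast]
    exact Complex.ofReal_ne_zero.mpr (main_real_s6 n r (fun m => f.coeff m) J hJ hJlt hJneg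
      hnonneg har hrn v hv0 hdom z.re hxv).ne'
  · have h2 : (n : ℝ) * (z - (v : ℂ)).arg < Real.pi := by
      have hlt : (z - (v : ℂ)).arg < Real.pi / n := habs.2
      calc (n : ℝ) * (z - (v : ℂ)).arg < (n : ℝ) * (Real.pi / n) :=
            mul_lt_mul_of_pos_left hlt hnpos
        _ = Real.pi := by field_simp
    have him := main_upper n r (fun m => f.coeff m) J hJ hJlt hJneg hnonneg har hrn
      v hv0 hdom z hposs h2
    intro heq
    rw [heq] at him
    simp at him

end ZeroFreeSector
end

section
/- Let f(X) = a_n X^n + ... + a_1 X + a_0 be a polynomial with real coefficients with a_n > 0, having at least one negative coefficient; let j_1 < j_2 < ... < j_ℓ be all the indices j for which a_j < 0, and let k_1 < k_2 < ... < k_t = n be all the indices k > j_ℓ for which a_k > 0. Assume t ≥ 2 and define v = max{ 1, max over 1 ≤ i ≤ ℓ of (|a_{j_1} + a_{j_2} + ... + a_{j_ℓ}| / (a_{k_1} + a_{k_2} + ... + a_{k_t}))^{1/(k_1 − j_i)} }. Then f has no zero in the sector S_{v, π/n}. -/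
lemma coneLemma (n : ℕ) (hn : 0 < n) (g : Polynomial ℝ) (hdeg : g.natDegree = n)
    (hb : ∀ m, 0 ≤ g.coeff m) (hbn : 0 < g.coeff n) (w : ℂ) (hw : w ≠ 0)
    (hφ : |Complex.arg w| < Real.pi / n) : Polynomial.aeval w g ≠ 0 := by
  set φ := Complex.arg w with hφdef
  set s := ‖w‖ with hsdef
  have hs0 : 0 < s := by simpa [hsdef] using norm_pos_iff.mpr hw
  set γ : ℝ := Real.pi / 2 - n * φ / 2 with hγ
  have hnφ : (n : ℝ) * |φ| < Real.pi := by
    have hn' : (0:ℝ) < n := by exact_mod_cast hn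
    rw [lt_div_iff₀ hn'] at hφ
    linarith
  have hsin : ∀ m : ℕ, m ≤ n → 0 < Real.sin (γ + m * φ) := by
    intro m hm
    have hmn : (m : ℝ) ≤ n := by exact_mod_cast hm
    have hm0 : (0:ℝ) ≤ m := by positivity
    have h1 : |((m : ℝ) - n / 2) * φ| ≤ (n / 2) * |φ| := by
      rw [abs_mul]
      apply mul_le_mul_of_nonneg_right _ (abs_nonneg φ)
      rw [abs_le]; constructor <;> linarith
    have h2 : (n / 2 : ℝ) * |φ| < Real.pi / 2 := by linarith
    have h3 := neg_abs_le (((m : ℝ) - n / 2) * φ)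
    have h4 := le_abs_self (((m : ℝ) - n / 2) * φ)
    have hexp : γ + m * φ = Real.pi / 2 + ((m : ℝ) - n / 2) * φ := by rw [hγ]; ring
    apply Real.sin_pos_of_pos_of_lt_pi <;> rw [hexp] <;> linarith
  have hw' : w = (s : ℂ) * Complex.exp (φ * Complex.I) :=
    (Complex.norm_mul_exp_arg_mul_I w).symm
  have term : ∀ m : ℕ,
      (Complex.exp (γ * Complex.I) * (g.coeff m • w ^ m)).im
        = g.coeff m * s ^ m * Real.sin (γ + m * φ) := by
    intro m
    have e1 : w ^ m = ((s ^ m : ℝ) : ℂ) * Complex.exp ((m * φ : ℝ) * Complex.I) := by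
      rw [hw', mul_pow, ← Complex.exp_nat_mul]
      push_cast
      ring_nf
    rw [e1, Complex.real_smul]
    have e2 : Complex.exp (↑γ * Complex.I) *
        (↑(g.coeff m) * (((s ^ m : ℝ) : ℂ) * Complex.exp ((m * φ : ℝ) * Complex.I)))
        = ((g.coeff m * s ^ m : ℝ) : ℂ) * Complex.exp ((↑(γ + m * φ) : ℂ) * Complex.I) := by
      rw [Complex.ofReal_add, add_mul, Complex.exp_add]
      push_cast
      ring
    rw [e2]
    rw [Complex.im_ofReal_mul, Complex.exp_ofReal_mul_I_im]
  have key : 0 < (Complex.exp (γ * Complex.I) * Polynomial.aeval w g).im := by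
    rw [Polynomial.aeval_eq_sum_range, hdeg, Finset.mul_sum, Complex.im_sum]
    have : ∀ m ∈ Finset.range (n + 1),
        (Complex.exp (↑γ * Complex.I) * (g.coeff m • w ^ m)).im
          = g.coeff m * s ^ m * Real.sin (γ + m * φ) := fun m _ => term m
    rw [Finset.sum_congr rfl this]
    apply Finset.sum_pos'
    · intro i hi
      have hi' : i ≤ n := Nat.lt_succ_iff.mp (Finset.mem_range.mp hi)
      have := hsin i hi'
      have := hb i
      positivity
    · refine ⟨n, Finset.self_mem_range_succ n, ?_⟩
      have := hsin n le_rfl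
      positivity
  intro h0
  rw [h0, mul_zero] at key
  simp at key

theorem stmt_7 (n : ℕ) (f : Polynomial ℝ) (hdeg : f.natDegree = n)
    (han : 0 < f.coeff n)
    (J : Finset ℕ) (hJ : J.Nonempty)
    (hJdef : ∀ j, j ∈ J ↔ f.coeff j < 0)
    (K : Finset ℕ) (hK : K.Nonempty)
    (hKdef : ∀ k, k ∈ K ↔ (J.max' hJ < k ∧ 0 < f.coeff k))
    (hcard : 2 ≤ K.card) :
    ∀ z ∈ sector
        (max 1 (J.sup' hJ fun i =>
          (|∑ j ∈ J, f.coeff j| / ∑ k ∈ K, f.coeff k) ^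
            (1 / ((K.min' hK : ℝ) - (i : ℝ)))))
        (Real.pi / n),
      Polynomial.aeval z f ≠ 0 := by
  intro z hz
  set jl := J.max' hJ with hjl
  set k1 := K.min' hK with hk1
  set A := ∑ k ∈ K, f.coeff k with hA
  set B := |∑ j ∈ J, f.coeff j| with hB
  set v := max 1 (J.sup' hJ fun i => (B / A) ^ (1 / ((k1:ℝ) - (i:ℝ)))) with hv
  simp only [sector, Set.mem_setOf_eq] at hz
  obtain ⟨hzv, harg⟩ := hz
  have hJA : ∀ j ∈ J, f.coeff j < 0 := fun j hj => (hJdef j).mp hj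
  have hKA : ∀ k ∈ K, 0 < f.coeff k := fun k hk => ((hKdef k).mp hk).2
  have hKJ : ∀ k ∈ K, jl < k := fun k hk => ((hKdef k).mp hk).1
  have hApos : 0 < A := Finset.sum_pos (fun k hk => hKA k hk) hK
  have hsumJ : ∑ j ∈ J, f.coeff j < 0 := Finset.sum_neg hJA hJ
  have hBval : B = -∑ j ∈ J, f.coeff j := abs_of_neg hsumJ
  have hBpos : 0 < B := by rw [hBval]; linarith
  have hjlJ : jl ∈ J := J.max'_mem hJ
  have hk1K : k1 ∈ K := K.min'_mem hK
  have hjlk1 : jl < k1 := hKJ k1 hk1K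
  have hjln : jl < n := by
    have h1 : jl ≤ n := by
      rw [← hdeg]; exact Polynomial.le_natDegree_of_ne_zero (ne_of_lt (hJA jl hjlJ))
    rcases lt_or_eq_of_le h1 with h | h
    · exact h
    · exfalso; have h2 := hJA jl hjlJ; rw [h] at h2; linarith
  have hkn : ∀ k ∈ K, k ≤ n := fun k hk => by
    rw [← hdeg]; exact Polynomial.le_natDegree_of_ne_zero (ne_of_gt (hKA k hk))
  have hjn : ∀ j ∈ J, j ≤ n := fun j hj => by
    rw [← hdeg]; exact Polynomial.le_natDegree_of_ne_zero (ne_of_lt (hJA j hj))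
  have hk1n : k1 ≤ n := hkn k1 hk1K
  have hn : 0 < n := lt_of_le_of_lt (Nat.zero_le jl) (lt_of_lt_of_le hjlk1 hk1n)
  have hv1 : (1:ℝ) ≤ v := le_max_left _ _
  have hv0 : (0:ℝ) < v := lt_of_lt_of_le one_pos hv1
  -- key algebraic inequality
  have hkey : B ≤ A * v ^ (k1 - jl) := by
    have hsup : (B / A) ^ (1 / ((k1:ℝ) - (jl:ℝ))) ≤ v := by
      rw [hv]
      exact le_trans (Finset.le_sup' (fun (i : ℕ) => (B / A) ^ (1 / ((k1:ℝ) - (i:ℝ)))) hjlJ)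
        (le_max_right _ _)
    have he : (0:ℝ) < (k1:ℝ) - (jl:ℝ) := by
      have : (jl:ℝ) < k1 := by exact_mod_cast hjlk1
      linarith
    have hBA : (0:ℝ) ≤ B / A := div_nonneg hBpos.le hApos.le
    have h1 : ((B / A) ^ (1 / ((k1:ℝ) - (jl:ℝ)))) ^ ((k1:ℝ) - (jl:ℝ)) ≤ v ^ ((k1:ℝ) - (jl:ℝ)) :=
      Real.rpow_le_rpow (Real.rpow_nonneg hBA _) hsup he.le
    have h2 : ((B / A) ^ (1 / ((k1:ℝ) - (jl:ℝ)))) ^ ((k1:ℝ) - (jl:ℝ)) = B / A := by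
      rw [← Real.rpow_mul hBA, one_div_mul_cancel he.ne', Real.rpow_one]
    have h3 : v ^ ((k1:ℝ) - (jl:ℝ)) = v ^ (k1 - jl : ℕ) := by
      rw [← Real.rpow_natCast v (k1 - jl)]
      congr 1
      rw [Nat.cast_sub hjlk1.le]
    rw [h2, h3, div_le_iff₀ hApos] at h1
    linarith
  set g := Polynomial.taylor v f with hg
  have hgdeg : g.natDegree = n := by rw [hg, Polynomial.natDegree_taylor, hdeg]
  have hgcoeff : ∀ m, g.coeff m
      = ∑ i ∈ Finset.range (n+1), ((i+m).choose m : ℝ) * f.coeff (i+m) * v ^ i := by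
    intro m
    rw [hg, Polynomial.taylor_coeff]
    rw [Polynomial.eval_eq_sum_range' (n := n+1) ?_ v]
    · exact Finset.sum_congr rfl fun i _ => by rw [Polynomial.hasseDeriv_coeff]
    · calc (Polynomial.hasseDeriv m f).natDegree ≤ f.natDegree - m :=
            Polynomial.natDegree_hasseDeriv_le f m
        _ < n + 1 := by rw [hdeg]; omega
  have hgn : g.coeff n = f.coeff n := by
    rw [hgcoeff]
    rw [Finset.sum_eq_single 0 (fun b _ hb => by
      rw [Polynomial.coeff_eq_zero_of_natDegree_lt (p := f) (n := b + n) (by rw [hdeg]; omega)]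
      ring) (fun h => absurd (Finset.mem_range.mpr (by omega)) h)]
    simp
  have hgpos : ∀ m, 0 ≤ g.coeff m := by
    intro m
    rw [hgcoeff]
    by_cases hm : jl < m
    · apply Finset.sum_nonneg
      intro i _
      have him : i + m ∉ J := fun hmem => by
        have := Finset.le_max' J _ hmem; omega
      have h0 : 0 ≤ f.coeff (i+m) := not_lt.mp (fun hlt => him ((hJdef _).mpr hlt))
      positivity
    · push_neg at hm
      set c : ℕ → ℝ := fun k => (k.choose m : ℝ) * f.coeff k * v ^ (k - m) with hc
      have h0 : ∑ k ∈ Finset.Ico 0 m, c k = 0 := Finset.sum_eq_zero (fun k hk => by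
        have hkm : k < m := (Finset.mem_Ico.mp hk).2
        simp [hc, Nat.choose_eq_zero_of_lt hkm])
      have hrng : m + n + 1 - m = n + 1 := by omega
      have hshift : ∑ i ∈ Finset.range (n+1), ((i+m).choose m : ℝ) * f.coeff (i+m) * v ^ i
          = ∑ k ∈ Finset.range (m+n+1), c k := by
        have e1 : ∑ k ∈ Finset.range (m+n+1), c k = ∑ k ∈ Finset.Ico 0 (m+n+1), c k := by
          rw [Finset.range_eq_Ico]
        have e2 : ∑ k ∈ Finset.Ico 0 (m+n+1), c k
            = ∑ k ∈ Finset.Ico 0 m, c k + ∑ k ∈ Finset.Ico m (m+n+1), c k :=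
          (Finset.sum_Ico_consecutive c (Nat.zero_le m) (by omega)).symm
        have e3 : ∑ k ∈ Finset.Ico m (m+n+1), c k = ∑ i ∈ Finset.range (n+1), c (m+i) := by
          rw [Finset.sum_Ico_eq_sum_range, hrng]
        rw [e1, e2, e3, h0, zero_add]
        refine Finset.sum_congr rfl (fun i _ => ?_)
        simp only [hc]
        rw [Nat.add_comm m i, Nat.add_sub_cancel]
      rw [hshift]
      have hsub : J ∪ K ⊆ Finset.range (m+n+1) := by
        intro x hx
        rw [Finset.mem_range]
        rcases Finset.mem_union.mp hx with h | h
        · have := hjn x h; omega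
        · have := hkn x h; omega
      have hdisj : Disjoint J K := by
        rw [Finset.disjoint_left]
        intro a haJ haK
        have h1 := hKJ a haK
        have h2 := Finset.le_max' J a haJ
        omega
      have h1 : ∑ k ∈ J ∪ K, c k ≤ ∑ k ∈ Finset.range (m+n+1), c k := by
        apply Finset.sum_le_sum_of_subset_of_nonneg hsub
        intro k _ hk
        have hkJ : k ∉ J := fun h => hk (Finset.mem_union_left _ h)
        have h0 : 0 ≤ f.coeff k := not_lt.mp (fun hlt => hkJ ((hJdef _).mpr hlt))
        simp only [hc]
        positivity
      rw [Finset.sum_union hdisj] at h1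
      have hJbound : (-((k1.choose m : ℝ) * v ^ (jl - m))) * B ≤ ∑ j ∈ J, c j := by
        have hterm : ∀ j ∈ J, ((k1.choose m : ℝ) * v ^ (jl - m)) * f.coeff j ≤ c j := by
          intro j hj
          have hjjl : j ≤ jl := Finset.le_max' J j hj
          have hjneg := hJA j hj
          have hcc : ((j.choose m : ℝ) * v ^ (j - m)) ≤ (k1.choose m : ℝ) * v ^ (jl - m) := by
            apply mul_le_mul
            · exact_mod_cast Nat.choose_le_choose m (by omega : j ≤ k1)
            · exact pow_le_pow_right₀ hv1 (by omega)
            · positivity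
            · positivity
          calc ((k1.choose m:ℝ) * v^(jl-m)) * f.coeff j
              ≤ ((j.choose m:ℝ) * v^(j-m)) * f.coeff j :=
                mul_le_mul_of_nonpos_right hcc hjneg.le
            _ = c j := by simp only [hc]; ring
        calc (-((k1.choose m:ℝ) * v^(jl-m))) * B
            = ∑ j ∈ J, ((k1.choose m:ℝ) * v^(jl-m)) * f.coeff j := by
              rw [← Finset.mul_sum, hBval]; ring
          _ ≤ ∑ j ∈ J, c j := Finset.sum_le_sum hterm
      have hKbound : ((k1.choose m : ℝ) * v ^ (k1 - m)) * A ≤ ∑ k ∈ K, c k := by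
        have hterm : ∀ k ∈ K, ((k1.choose m : ℝ) * v ^ (k1 - m)) * f.coeff k ≤ c k := by
          intro k hk
          have hk1k : k1 ≤ k := K.min'_le k hk
          have hkpos := hKA k hk
          have hcc : ((k1.choose m : ℝ) * v ^ (k1 - m)) ≤ (k.choose m : ℝ) * v ^ (k - m) := by
            apply mul_le_mul
            · exact_mod_cast Nat.choose_le_choose m hk1k
            · exact pow_le_pow_right₀ hv1 (by omega)
            · positivity
            · positivity
          calc ((k1.choose m:ℝ) * v^(k1-m)) * f.coeff k
              ≤ ((k.choose m:ℝ) * v^(k-m)) * f.coeff k :=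
                mul_le_mul_of_nonneg_right hcc hkpos.le
            _ = c k := by simp only [hc]; ring
        calc ((k1.choose m:ℝ) * v^(k1-m)) * A
            = ∑ k ∈ K, ((k1.choose m:ℝ) * v^(k1-m)) * f.coeff k := by
              rw [← Finset.mul_sum]
          _ ≤ ∑ k ∈ K, c k := Finset.sum_le_sum hterm
      have hfinal : 0 ≤ (-((k1.choose m:ℝ) * v^(jl-m))) * B
          + ((k1.choose m:ℝ) * v^(k1-m)) * A := by
        have hsplit : v ^ (k1 - m) = v ^ (jl - m) * v ^ (k1 - jl) := by
          rw [← pow_add]; congr 1; omega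
        rw [hsplit]
        have hch : (0:ℝ) ≤ (k1.choose m : ℝ) := by positivity
        have hpw : (0:ℝ) ≤ v ^ (jl - m) := by positivity
        have hmul := mul_le_mul_of_nonneg_left hkey (mul_nonneg hch hpw)
        nlinarith [hmul]
      linarith
  have hzsub : z - (v:ℂ) ≠ 0 := sub_ne_zero.mpr hzv
  have heval : Polynomial.aeval z f = Polynomial.aeval (z - (v:ℂ)) g := by
    rw [hg, Polynomial.taylor_apply, Polynomial.aeval_comp]
    have h : Polynomial.aeval (z - (v:ℂ)) (Polynomial.X + Polynomial.C v) = z := by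
      simp [Polynomial.aeval_X, Polynomial.aeval_C, Complex.coe_algebraMap]
    rw [h]
  rw [heval]
  exact coneLemma n hn g hgdeg hgpos (by rw [hgn]; exact han) _ hzsub harg
end

section
/- Let f(X) = a_n X^n + ... + a_1 X + a_0 be a polynomial with real coefficients with a_n > 0, having at least one negative coefficient; let j_1 < j_2 < ... < j_ℓ be all the indices j for which a_j < 0, and let k_1 < k_2 < ... < k_t = n be all the indices k > j_ℓ for which a_k > 0. If a_{k_1} + a_{k_2} + ... + a_{k_t} ≥ |a_{j_1} + a_{j_2} + ... + a_{j_ℓ}|, then f has no zero in the sector S_{1, π/n}. -/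
private lemma im_pos_of_arg' {z : ℂ} (h1 : 0 < z.arg) (h2 : z.arg < Real.pi) : 0 < z.im := by
  have hz : z ≠ 0 := by rintro rfl; simp [Complex.arg_zero] at h1
  have habs : 0 < ‖z‖ := norm_pos_iff.mpr hz
  have hsin : 0 < Real.sin z.arg := Real.sin_pos_of_pos_of_lt_pi h1 h2
  have h := Complex.sin_arg z
  have : z.im = ‖z‖ * Real.sin z.arg := by rw [h]; field_simp
  rw [this]; positivity

private lemma im_mul_pos' {u v : ℂ} (hu : u ≠ 0) (hv : v ≠ 0)
    (h1 : 0 < u.arg + v.arg) (h2 : u.arg + v.arg < Real.pi) : 0 < (u * v).im := by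
  have harg : (u * v).arg = u.arg + v.arg :=
    Complex.arg_mul hu hv ⟨by linarith [Real.pi_pos], le_of_lt h2⟩
  exact im_pos_of_arg' (by rw [harg]; exact h1) (by rw [harg]; exact h2)

private lemma arg_one_add_le' {w : ℂ} (h1 : 0 < w.arg) (h2 : w.arg < Real.pi) :
    (1 + w).arg ≤ w.arg := by
  by_contra hlt
  push_neg at hlt
  have hw : w ≠ 0 := by rintro rfl; simp at h1
  have hwim : 0 < w.im := im_pos_of_arg' h1 h2
  have hzim : 0 < (1 + w).im := by simpa using hwim
  have hz : (1 + w) ≠ 0 := by intro h; rw [h] at hzim; simp at hzim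
  have hzarg : (1 + w).arg < Real.pi := by
    rcases lt_or_eq_of_le (Complex.arg_le_pi (1 + w)) with h | h
    · exact h
    · exfalso
      have := (Complex.arg_eq_pi_iff.mp h).2
      linarith
  have hconj : (starRingEnd ℂ w) ≠ 0 := by simpa using hw
  have hargconj : (starRingEnd ℂ w).arg = -w.arg := by
    rw [Complex.arg_conj]
    simp [ne_of_lt h2]
  have hpos := im_mul_pos' hconj hz
    (by rw [hargconj]; linarith) (by rw [hargconj]; linarith)
  have hcomp : (starRingEnd ℂ w * (1 + w)).im = -w.im := by
    simp [Complex.mul_im, Complex.conj_re, Complex.conj_im]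
    ring
  rw [hcomp] at hpos
  linarith

private lemma arg_pow_eq' {z : ℂ} (hz : z ≠ 0) (h0 : 0 ≤ z.arg) :
    ∀ i : ℕ, (i : ℝ) * z.arg < Real.pi → (z ^ i).arg = i * z.arg := by
  intro i
  induction i with
  | zero => intro _; simp
  | succ m ih =>
    intro h
    have hcast : ((m + 1 : ℕ) : ℝ) = (m : ℝ) + 1 := by push_cast; ring
    rw [hcast] at h ⊢
    have hm : (m : ℝ) * z.arg < Real.pi := by nlinarith
    have hih := ih hm
    have hzm : z ^ m ≠ 0 := pow_ne_zero _ hz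
    have hmem : (z ^ m).arg + z.arg ∈ Set.Ioc (-Real.pi) Real.pi := by
      rw [hih]
      constructor
      · have : 0 ≤ (m : ℝ) * z.arg := mul_nonneg (Nat.cast_nonneg m) h0
        linarith [Real.pi_pos]
      · nlinarith
    have := Complex.arg_mul hzm hz hmem
    rw [pow_succ, this, hih]
    ring

private lemma im_pow_mono' {n : ℕ} (hn : 1 ≤ n) {z : ℂ} (h1 : 0 < (z - 1).arg)
    (h2 : (z - 1).arg < Real.pi / n) :
    ∀ k, ∀ j, j < k → k ≤ n → (z ^ j).im < (z ^ k).im := by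
  have hπ : 0 < Real.pi := Real.pi_pos
  have hn' : (1 : ℝ) ≤ n := by exact_mod_cast hn
  set w := z - 1 with hwdef
  have hzw : z = 1 + w := by rw [hwdef]; ring
  have hwπ : w.arg < Real.pi := lt_of_lt_of_le h2 (div_le_self hπ.le hn')
  have hw : w ≠ 0 := by intro h; rw [h] at h1; simp at h1
  have hwim : 0 < w.im := im_pos_of_arg' h1 hwπ
  have hzim : 0 < z.im := by rw [hzw]; simpa using hwim
  have hz0 : z ≠ 0 := by intro h; rw [h] at hzim; simp at hzim
  have ha0 : 0 ≤ z.arg := Complex.arg_nonneg_iff.mpr hzim.le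
  have hale : z.arg ≤ w.arg := by rw [hzw]; exact arg_one_add_le' h1 hwπ
  have step : ∀ i, i < n → (z ^ i).im < (z ^ (i + 1)).im := by
    intro i hi
    have hin : (i : ℝ) + 1 ≤ n := by exact_mod_cast Nat.succ_le_of_lt hi
    have hiw : (i : ℝ) * w.arg + w.arg < Real.pi := by
      have h3 : ((i : ℝ) + 1) * w.arg < ((i : ℝ) + 1) * (Real.pi / n) := by
        apply mul_lt_mul_of_pos_left h2 (by positivity)
      have h4 : ((i : ℝ) + 1) * (Real.pi / n) ≤ Real.pi := by
        have ha : ((i : ℝ) + 1) * (Real.pi / n) ≤ (n : ℝ) * (Real.pi / n) :=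
          mul_le_mul_of_nonneg_right hin (by positivity)
        have hb : (n : ℝ) * (Real.pi / n) = Real.pi := by
          field_simp
        linarith
      nlinarith
    have hia : (i : ℝ) * z.arg ≤ (i : ℝ) * w.arg :=
      mul_le_mul_of_nonneg_left hale (Nat.cast_nonneg i)
    have hargpow : (z ^ i).arg = (i : ℝ) * z.arg :=
      arg_pow_eq' hz0 ha0 i (by nlinarith)
    have hpos : 0 < (z ^ i * w).im := by
      apply im_mul_pos' (pow_ne_zero i hz0) hw
      · rw [hargpow]
        have : 0 ≤ (i : ℝ) * z.arg := mul_nonneg (Nat.cast_nonneg i) ha0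
        linarith
      · rw [hargpow]; nlinarith
    have hexp : z ^ (i + 1) = z ^ i + z ^ i * w := by
      rw [pow_succ, hzw]; ring
    rw [hexp, Complex.add_im]
    linarith
  intro k
  induction k with
  | zero => intro j hj _; exact absurd hj (Nat.not_lt_zero j)
  | succ m ih =>
    intro j hj hkn
    rcases Nat.lt_succ_iff_lt_or_eq.mp hj with h | h
    · exact lt_trans (ih j h (by omega)) (step m (by omega))
    · subst h; exact step j (by omega)

private lemma key_sum' (n : ℕ) (f : Polynomial ℝ) (hdeg : f.natDegree = n)
    (J : Finset ℕ) (hJ : J.Nonempty)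
    (hJdef : ∀ j, j ∈ J ↔ f.coeff j < 0)
    (K : Finset ℕ)
    (hKdef : ∀ k, k ∈ K ↔ (J.max' hJ < k ∧ 0 < f.coeff k))
    (hineq : |∑ j ∈ J, f.coeff j| ≤ ∑ k ∈ K, f.coeff k)
    (hM : J.max' hJ < n)
    (g : ℕ → ℝ) (hg0 : 0 ≤ g 0)
    (hmono : ∀ j k, j < k → k ≤ n → g j < g k) :
    0 < ∑ i ∈ Finset.range (n + 1), f.coeff i * g i := by
  set M := J.max' hJ with hMdef
  have hgnn : ∀ i, i ≤ n → 0 ≤ g i := by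
    intro i hi
    rcases Nat.eq_zero_or_pos i with h | h
    · subst h; exact hg0
    · exact le_of_lt (lt_of_le_of_lt hg0 (hmono 0 i h hi))
  set c := g (M + 1) with hc
  have hcn : M + 1 ≤ n := hM
  have hc0 : 0 ≤ c := hgnn _ hcn
  have hJsub : J ⊆ Finset.range (n + 1) := by
    intro j hj
    rw [Finset.mem_range]
    have h1 : f.coeff j ≠ 0 := ne_of_lt ((hJdef j).mp hj)
    have := Polynomial.le_natDegree_of_ne_zero h1
    omega
  have hKsub : K ⊆ Finset.range (n + 1) \ J := by
    intro k hk
    obtain ⟨h1, h2⟩ := (hKdef k).mp hk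
    rw [Finset.mem_sdiff, Finset.mem_range]
    constructor
    · have := Polynomial.le_natDegree_of_ne_zero (ne_of_gt h2)
      omega
    · intro hkJ
      exact absurd ((hJdef k).mp hkJ) (not_lt.mpr (le_of_lt h2))
  have hsplit : ∑ i ∈ Finset.range (n + 1), f.coeff i * g i
      = ∑ i ∈ Finset.range (n + 1) \ J, f.coeff i * g i + ∑ j ∈ J, f.coeff j * g j :=
    (Finset.sum_sdiff hJsub).symm
  have h1 : ∑ k ∈ K, f.coeff k * g k ≤ ∑ i ∈ Finset.range (n + 1) \ J, f.coeff i * g i := by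
    apply Finset.sum_le_sum_of_subset_of_nonneg hKsub
    intro i hi _
    rw [Finset.mem_sdiff, Finset.mem_range] at hi
    have hge : 0 ≤ f.coeff i := by
      by_contra h
      push_neg at h
      exact hi.2 ((hJdef i).mpr h)
    exact mul_nonneg hge (hgnn i (by omega))
  have h2 : (∑ k ∈ K, f.coeff k) * c ≤ ∑ k ∈ K, f.coeff k * g k := by
    rw [Finset.sum_mul]
    apply Finset.sum_le_sum
    intro k hk
    obtain ⟨hk1, hk2⟩ := (hKdef k).mp hk
    have hkn : k ≤ n := by
      have := Polynomial.le_natDegree_of_ne_zero (ne_of_gt hk2)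
      omega
    have hck : c ≤ g k := by
      rcases eq_or_lt_of_le (Nat.succ_le_of_lt hk1) with h | h
      · have hkM : k = M + 1 := by omega
        rw [hc, hkM]
      · exact le_of_lt (hmono (M + 1) k h hkn)
    exact mul_le_mul_of_nonneg_left hck (le_of_lt hk2)
  have h3 : (∑ j ∈ J, f.coeff j) * c < ∑ j ∈ J, f.coeff j * g j := by
    rw [Finset.sum_mul]
    apply Finset.sum_lt_sum_of_nonempty hJ
    intro j hj
    have hjneg := (hJdef j).mp hj
    have hjM : j ≤ M := Finset.le_max' J j hj
    have hgj : g j < c := hmono j (M + 1) (by omega) hcn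
    nlinarith
  have hJneg : ∑ j ∈ J, f.coeff j < 0 :=
    Finset.sum_neg (fun j hj => (hJdef j).mp hj) hJ
  rw [abs_of_neg hJneg] at hineq
  have hfin : 0 ≤ ((∑ k ∈ K, f.coeff k) + (∑ j ∈ J, f.coeff j)) * c :=
    mul_nonneg (by linarith) hc0
  nlinarith

private lemma key_upper' (n : ℕ) (f : Polynomial ℝ) (hdeg : f.natDegree = n)
    (J : Finset ℕ) (hJ : J.Nonempty)
    (hJdef : ∀ j, j ∈ J ↔ f.coeff j < 0)
    (K : Finset ℕ)
    (hKdef : ∀ k, k ∈ K ↔ (J.max' hJ < k ∧ 0 < f.coeff k))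
    (hineq : |∑ j ∈ J, f.coeff j| ≤ ∑ k ∈ K, f.coeff k)
    (hM : J.max' hJ < n)
    (z : ℂ) (h1 : 0 < (z - 1).arg) (h2 : (z - 1).arg < Real.pi / n) :
    0 < (Polynomial.aeval z f).im := by
  have hn : 1 ≤ n := by omega
  have hmono := im_pow_mono' hn h1 h2
  have hval : Polynomial.aeval z f = ∑ i ∈ Finset.range (n + 1), f.coeff i • z ^ i :=
    Polynomial.aeval_eq_sum_range' (by omega) z
  rw [hval]
  have him : (∑ i ∈ Finset.range (n + 1), f.coeff i • z ^ i).im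
      = ∑ i ∈ Finset.range (n + 1), f.coeff i * (z ^ i).im := by
    rw [Complex.im_sum]
    apply Finset.sum_congr rfl
    intro i _
    simp [Complex.real_smul]
  rw [him]
  exact key_sum' n f hdeg J hJ hJdef K hKdef hineq hM (fun i => (z ^ i).im)
    (by simp) (fun j k hjk hkn => hmono k j hjk hkn)

theorem stmt_8 (n : ℕ) (f : Polynomial ℝ) (hdeg : f.natDegree = n)
    (han : 0 < f.coeff n)
    (J : Finset ℕ) (hJ : J.Nonempty)
    (hJdef : ∀ j, j ∈ J ↔ f.coeff j < 0)
    (K : Finset ℕ) (hK : K.Nonempty)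
    (hKdef : ∀ k, k ∈ K ↔ (J.max' hJ < k ∧ 0 < f.coeff k))
    (hineq : |∑ j ∈ J, f.coeff j| ≤ ∑ k ∈ K, f.coeff k) :
    ∀ z ∈ sector 1 (Real.pi / n), Polynomial.aeval z f ≠ 0 := by
  have hM : J.max' hJ < n := by
    have hMJ := J.max'_mem hJ
    have hneg := (hJdef _).mp hMJ
    have hle : J.max' hJ ≤ n := by
      have := Polynomial.le_natDegree_of_ne_zero (ne_of_lt hneg)
      omega
    rcases lt_or_eq_of_le hle with h | h
    · exact h
    · exfalso; rw [h] at hneg; linarith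
  have hn : 1 ≤ n := by omega
  intro z hz hroot
  obtain ⟨hz1, hz2⟩ := hz
  rw [abs_lt] at hz2
  have hone : ((1 : ℝ) : ℂ) = (1 : ℂ) := by norm_num
  have hzne : z - 1 ≠ 0 := by
    intro h
    apply hz1
    rw [hone]
    linear_combination h
  rcases lt_trichotomy ((z - 1).arg) 0 with harg | harg | harg
  · -- lower half-sector: conjugate
    have hconjsub : (starRingEnd ℂ z) - 1 = starRingEnd ℂ (z - 1) := by
      rw [map_sub, map_one]
    have hne : (z - 1).arg ≠ Real.pi := by
      intro h; rw [h] at harg; linarith [Real.pi_pos]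
    have hc1 : 0 < ((starRingEnd ℂ z) - 1).arg := by
      rw [hconjsub, Complex.arg_conj, if_neg hne]
      linarith
    have hc2 : ((starRingEnd ℂ z) - 1).arg < Real.pi / n := by
      rw [hconjsub, Complex.arg_conj, if_neg hne]
      rw [hone] at hz2
      linarith [hz2.1]
    have hkey := key_upper' n f hdeg J hJ hJdef K hKdef hineq hM (starRingEnd ℂ z) hc1 hc2
    have haev : Polynomial.aeval (starRingEnd ℂ z) f
        = starRingEnd ℂ (Polynomial.aeval z f) :=
      Polynomial.aeval_algHom_apply (Complex.conjAe.toAlgHom) z f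
    rw [haev, hroot] at hkey
    simp at hkey
  · -- real case: z is real, > 1
    obtain ⟨hre, him⟩ := Complex.arg_eq_zero_iff.mp harg
    have hre' : 0 < (z - 1).re := by
      rcases lt_or_eq_of_le hre with h | h
      · exact h
      · exfalso
        apply hzne
        apply Complex.ext
        · exact h.symm
        · exact him
    set x : ℝ := z.re with hx
    have hzim : z.im = 0 := by
      have : (z - 1).im = z.im := by simp
      linarith [this ▸ him]
    have hzx : z = (x : ℂ) := by
      apply Complex.ext <;> simp [hx, hzim]
    have hx1 : 1 < x := by
      have : (z - 1).re = x - 1 := by simp [hx]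
      linarith [this ▸ hre']
    have heval : 0 < f.eval x := by
      have hs := key_sum' n f hdeg J hJ hJdef K hKdef hineq hM (fun i => x ^ i)
        (by norm_num) (fun j k hjk _ => pow_lt_pow_right₀ hx1 hjk)
      rw [Polynomial.eval_eq_sum_range' (by omega : f.natDegree < n + 1)]
      exact hs
    have haev : Polynomial.aeval z f = ((f.eval x : ℝ) : ℂ) := by
      rw [hzx]
      exact_mod_cast Polynomial.aeval_algebraMap_apply_eq_algebraMap_eval x f
    rw [haev] at hroot
    exact absurd (by exact_mod_cast hroot) (ne_of_gt heval)
  · -- upper half-sector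
    rw [hone] at hz2
    have hkey := key_upper' n f hdeg J hJ hJdef K hKdef hineq hM z harg hz2.2
    rw [hroot] at hkey
    simp at hkey
end

section
/- Let f(X) be a polynomial with real coefficients of degree n ≥ 3 with f(0) ≠ 0, let f̃(X) = X^n · f(1/X) be its reciprocal polynomial, and assume that f̃ has no roots in the sector S_{ṽ, π/n} for some positive real number ṽ. Then f has no zeros in the open lens-shaped region L_{ṽ, π/n}, defined as the set of complex numbers x + iy with x ∈ (0, 1/ṽ) and |y| < −1/(2ṽ·tan(π/n)) + sqrt( 1/(4ṽ²·sin²(π/n)) − (x − 1/(2ṽ))² ). -/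
set_option maxHeartbeats 1000000 in
theorem stmt_9 (n : ℕ) (hn : 3 ≤ n) (f : Polynomial ℝ) (hdeg : f.natDegree = n)
    (hf0 : f.coeff 0 ≠ 0) (vt : ℝ) (hvt : 0 < vt)
    (hrec : ∀ z ∈ sector vt (Real.pi / n), Polynomial.aeval z f.reverse ≠ 0) :
    ∀ z : ℂ, 0 < z.re → z.re < 1 / vt →
      |z.im| < -1 / (2 * vt * Real.tan (Real.pi / n)) +
        Real.sqrt (1 / (4 * vt ^ 2 * Real.sin (Real.pi / n) ^ 2)
          - (z.re - 1 / (2 * vt)) ^ 2) →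
      Polynomial.aeval z f ≠ 0 := by
  intro z hx0 hx1 hy hfz
  have hπ := Real.pi_pos
  set θ := Real.pi / n with hθdef
  have hn0 : (0:ℝ) < n := by exact_mod_cast (by omega : 0 < n)
  have hθ0 : 0 < θ := div_pos hπ hn0
  have hθlt : θ < Real.pi / 2 := by
    have h3 : (3:ℝ) ≤ n := by exact_mod_cast hn
    have : θ ≤ Real.pi / 3 := by
      apply div_le_div_of_nonneg_left hπ.le (by norm_num) h3
    linarith
  set c := Real.cos θ with hcdef
  set s := Real.sin θ with hsdef
  have hc : 0 < c := Real.cos_pos_of_mem_Ioo ⟨by linarith, hθlt⟩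
  have hs : 0 < s := Real.sin_pos_of_pos_of_lt_pi hθ0 (by linarith)
  have ht : Real.tan θ = s / c := Real.tan_eq_sin_div_cos θ
  have hsc : s ^ 2 + c ^ 2 = 1 := Real.sin_sq_add_cos_sq θ
  set x := z.re with hxdef
  set y := z.im with hydef
  have h1 : |y| + c / (2 * vt * s) <
      Real.sqrt (1 / (4 * vt ^ 2 * s ^ 2) - (x - 1 / (2 * vt)) ^ 2) := by
    have he : -1 / (2 * vt * Real.tan θ) = -(c / (2 * vt * s)) := by
      rw [ht]; field_simp
    rw [he] at hy; linarith
  have h2 : (|y| + c / (2 * vt * s)) ^ 2 <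
      1 / (4 * vt ^ 2 * s ^ 2) - (x - 1 / (2 * vt)) ^ 2 :=
    (Real.lt_sqrt (by positivity)).mp h1
  set r := x - vt * (x ^ 2 + y ^ 2) with hrdef
  have h2'' : (2 * vt * s * |y| + c) ^ 2 < 1 - (2 * vt * s * x - s) ^ 2 := by
    have hB : (0:ℝ) < 4 * vt ^ 2 * s ^ 2 := by positivity
    have e1 : (2 * vt * s * |y| + c) ^ 2
        = 4 * vt ^ 2 * s ^ 2 * ((|y| + c / (2 * vt * s)) ^ 2) := by
      field_simp; ring
    have e2 : 1 - (2 * vt * s * x - s) ^ 2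
        = 4 * vt ^ 2 * s ^ 2 * (1 / (4 * vt ^ 2 * s ^ 2) - (x - 1 / (2 * vt)) ^ 2) := by
      field_simp; ring
    rw [e1, e2]
    exact mul_lt_mul_of_pos_left h2 hB
  have key : |y| * c < r * s := by
    have h4 : (0:ℝ) < 4 * vt * s := by positivity
    have hya2 : vt ^ 2 * s ^ 2 * |y| ^ 2 = vt ^ 2 * s ^ 2 * y ^ 2 := by rw [sq_abs]
    have hsc' : 4 * vt * s * (|y| * c) < 4 * vt * s * (r * s) := by
      rw [hrdef]
      nlinarith [h2'', hsc, hya2]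
    exact lt_of_mul_lt_mul_left (by linarith) h4.le
  have hrpos : 0 < r := by
    nlinarith [key, mul_nonneg (abs_nonneg y) hc.le, hs]
  have hzne : z ≠ 0 := by
    intro h; rw [hxdef, h] at hx0; simp at hx0
  set u : ℂ := (1 - (vt : ℂ) * z) * (starRingEnd ℂ z) with hudef
  have hure : u.re = r := by
    simp [hudef, Complex.mul_re, Complex.mul_im, hrdef]; ring
  have huim : u.im = -y := by
    simp [hudef, Complex.mul_re, Complex.mul_im]; ring
  have hnsq : 0 < Complex.normSq z := Complex.normSq_pos.mpr hzne
  have hinv : (1 / z - (vt : ℂ)) = (((Complex.normSq z)⁻¹ : ℝ) : ℂ) * u := by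
    have hnz : (Complex.normSq z : ℂ) ≠ 0 := by exact_mod_cast hnsq.ne'
    have hmc : (Complex.normSq z : ℂ) = z * (starRingEnd ℂ) z := (Complex.mul_conj z).symm
    have hcz : (starRingEnd ℂ) z ≠ 0 := by simpa using hzne
    rw [Complex.ofReal_inv, hmc, hudef]
    field_simp
  have hre_u : 0 < u.re := hure ▸ hrpos
  have harg : |Complex.arg u| < θ := by
    have habs : |Complex.arg u| < Real.pi / 2 :=
      Complex.abs_arg_lt_pi_div_two_iff.mpr (Or.inl hre_u)
    have hb := abs_lt.mp habs
    have htanu : Real.tan (Complex.arg u) = -y / r := by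
      rw [Complex.tan_arg, hure, huim]
    have hargeq : Complex.arg u = Real.arctan (-y / r) := by
      rw [← htanu, Real.arctan_tan hb.1 hb.2]
    have hq : |(-y) / r| < Real.tan θ := by
      rw [abs_div, abs_neg, abs_of_pos hrpos, ht, div_lt_div_iff₀ hrpos hc]
      linarith
    have hq' := abs_lt.mp hq
    rw [hargeq, abs_lt]
    constructor
    · have := Real.arctan_strictMono hq'.1
      rwa [← Real.tan_neg, Real.arctan_tan (by linarith) (by linarith)] at this
    · have := Real.arctan_strictMono hq'.2
      rwa [Real.arctan_tan (by linarith) (by linarith)] at this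
  have hmem : (1 / z) ∈ sector vt θ := by
    constructor
    · intro h
      have h0 : (1 / z - (vt : ℂ)) = 0 := sub_eq_zero.mpr h
      rw [hinv] at h0
      have hne : (((Complex.normSq z)⁻¹ : ℝ) : ℂ) ≠ 0 := by
        simp [Complex.ofReal_ne_zero, hnsq.ne']
      have hu0 : u = 0 := (mul_eq_zero.mp h0).resolve_left hne
      rw [hu0] at hre_u
      simp at hre_u
    · rw [hinv, Complex.arg_real_mul _ (inv_pos.mpr hnsq)]
      exact harg
  refine hrec (1 / z) hmem ?_
  letI := invertibleOfNonzero hzne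
  have hrev := (Polynomial.eval₂_reverse_eq_zero_iff (algebraMap ℝ ℂ) z f).mpr
    (by rwa [Polynomial.aeval_def] at hfz)
  rw [Polynomial.aeval_def, one_div, ← invOf_eq_inv z]
  exact hrev
end

section
/- Let f(X) be a non-constant polynomial with integer coefficients which has no complex roots in the sector S_{v,θ}, where v is a real number and 0 < θ ≤ π/2. Suppose f(m) = p·q where p is a prime number, q and m are integers with q > 0, and m > v + q/sin θ. Then f is irreducible over ℚ. Moreover, if f has no rational roots, the same conclusion holds under the weaker assumption m > v + √q / sin θ. -/
open Polynomial in

/-- distance from a positive real `u` to a complex number outside the open cone of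
half-angle `θ` at the origin is at least `u * sin θ`. -/
lemma dist_sector {θ : ℝ} (hθ : 0 < θ) (hθ' : θ ≤ Real.pi / 2)
    {u : ℝ} (hu : 0 < u) {w : ℂ} (hw : w = 0 ∨ θ ≤ |Complex.arg w|) :
    u * Real.sin θ ≤ ‖(u : ℂ) - w‖ := by
  have hpi : θ < Real.pi := lt_of_le_of_lt hθ' (by linarith [Real.pi_pos])
  have hs : 0 < Real.sin θ := Real.sin_pos_of_pos_of_lt_pi hθ hpi
  have hs1 : Real.sin θ ≤ 1 := Real.sin_le_one θ
  rcases hw with h0 | harg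
  · subst h0
    simp only [sub_zero, Complex.norm_real, Real.norm_eq_abs, abs_of_pos hu]
    nlinarith
  · have hwne : w ≠ 0 := by
      intro h; rw [h, Complex.arg_zero, abs_zero] at harg; linarith
    have hr : 0 < ‖w‖ := norm_pos_iff.mpr hwne
    have hre : w.re = ‖w‖ * Real.cos (Complex.arg w) := by
      rw [Complex.cos_arg hwne]; field_simp
    have him : w.im = ‖w‖ * Real.sin (Complex.arg w) := by
      rw [Complex.sin_arg]; field_simp
    have hcos : Real.cos (Complex.arg w) ≤ Real.cos θ := by
      rw [← Real.cos_abs (Complex.arg w)]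
      exact Real.cos_le_cos_of_nonneg_of_le_pi (le_of_lt hθ)
        (Complex.abs_arg_le_pi w) harg
    have hsq : (u * Real.sin θ) ^ 2 ≤ (‖(u : ℂ) - w‖) ^ 2 := by
      rw [Complex.sq_norm, Complex.normSq_apply]
      simp only [Complex.sub_re, Complex.sub_im, Complex.ofReal_re, Complex.ofReal_im,
        zero_sub]
      rw [hre, him]
      have hpy := Real.sin_sq_add_cos_sq (Complex.arg w)
      have hpy2 := Real.sin_sq_add_cos_sq θ
      have h2 : (‖w‖)^2 * Real.sin (Complex.arg w)^2 + (‖w‖)^2 * Real.cos (Complex.arg w)^2 = (‖w‖)^2 := by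
        linear_combination (‖w‖)^2 * hpy
      have h3 : u^2 * Real.sin θ^2 + u^2 * Real.cos θ^2 = u^2 := by
        linear_combination u^2 * hpy2
      nlinarith [sq_nonneg (‖w‖ - u * Real.cos θ),
        mul_nonneg (mul_nonneg hu.le hr.le) (sub_nonneg.mpr hcos), h2, h3]
    have h1 : 0 ≤ u * Real.sin θ := by positivity
    nlinarith [norm_nonneg ((u : ℂ) - w)]

lemma pow_card_le_prod_real (c : ℝ) (hc : 0 ≤ c) (s : Multiset ℝ)
    (h : ∀ x ∈ s, c ≤ x) : c ^ Multiset.card s ≤ s.prod ∧ 0 ≤ s.prod := by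
  induction s using Multiset.induction with
  | empty => simp
  | cons x s ih =>
    have hx : c ≤ x := h x (Multiset.mem_cons_self x s)
    obtain ⟨ih1, ih2⟩ := ih (fun y hy => h y (Multiset.mem_cons_of_mem hy))
    rw [Multiset.prod_cons, Multiset.card_cons]
    constructor
    · rw [pow_succ, mul_comm x]
      exact mul_le_mul ih1 hx hc ih2
    · exact mul_nonneg (hc.trans hx) ih2

/-- evaluation bound: if all complex roots of `g` are at distance ≥ c from `m`,
then `|g(m)| ≥ c ^ deg g`. -/
lemma eval_bound (g : Polynomial ℤ) (hg : g ≠ 0) (m : ℤ) (c : ℝ) (hc : 0 ≤ c)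
    (h : ∀ z : ℂ, Polynomial.aeval z g = 0 → c ≤ ‖(m : ℂ) - z‖) :
    c ^ g.natDegree ≤ |((g.eval m : ℤ) : ℝ)| := by
  set G : Polynomial ℂ := g.map (Int.castRingHom ℂ) with hG
  have hinj : Function.Injective (Int.castRingHom ℂ) := Int.cast_injective
  have hG0 : G ≠ 0 := (Polynomial.map_ne_zero_iff hinj).mpr hg
  have hsplit : G.Splits := IsAlgClosed.splits G
  have hfact := hsplit.eq_prod_roots
  have heval : G.eval (m : ℂ) =
      G.leadingCoeff * ((G.roots.map (fun a => (m : ℂ) - a)).prod) := by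
    conv_lhs => rw [hfact]
    rw [Polynomial.eval_mul, Polynomial.eval_C, Polynomial.eval_multiset_prod,
      Multiset.map_map]
    congr 2
    apply Multiset.map_congr rfl
    intro a _
    simp
  have habs : ‖G.eval (m : ℂ)‖ =
      ‖G.leadingCoeff‖ *
        ((G.roots.map (fun a => (m : ℂ) - a)).map (fun z => ‖z‖)).prod := by
    rw [heval, norm_mul]; congr 1; exact map_multiset_prod (normHom (α := ℂ)) _
  have hlead : (1 : ℝ) ≤ ‖G.leadingCoeff‖ := by
    have : G.leadingCoeff = ((g.leadingCoeff : ℤ) : ℂ) :=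
      Polynomial.leadingCoeff_map_of_injective hinj g
    rw [this, Complex.norm_intCast]
    have : g.leadingCoeff ≠ 0 := Polynomial.leadingCoeff_ne_zero.mpr hg
    have : (1 : ℤ) ≤ |g.leadingCoeff| := Int.one_le_abs this
    exact_mod_cast this
  have hroots : ∀ x ∈ (G.roots.map (fun a => (m : ℂ) - a)).map (fun z => ‖z‖), c ≤ x := by
    intro x hx
    simp only [Multiset.map_map, Multiset.mem_map, Function.comp_apply] at hx
    obtain ⟨z, hz, rfl⟩ := hx
    apply h
    have hz0 : G.eval z = 0 := (Polynomial.isRoot_of_mem_roots hz)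
    rw [Polynomial.aeval_def, ← Polynomial.eval_map]
    exact hz0
  obtain ⟨hp1, _⟩ := pow_card_le_prod_real c hc _ hroots
  have hcard : Multiset.card ((G.roots.map (fun a => (m : ℂ) - a)).map (fun z => ‖z‖))
      = g.natDegree := by
    rw [Multiset.card_map, Multiset.card_map]
    have := hsplit.natDegree_eq_card_roots
    rw [← this, hG, Polynomial.natDegree_map_eq_of_injective hinj]
  have hGm : ‖G.eval (m : ℂ)‖ = |((g.eval m : ℤ) : ℝ)| := by
    rw [hG, Polynomial.eval_intCast_map]
    simp [Complex.norm_intCast]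
  rw [← hGm, habs]
  calc c ^ g.natDegree = 1 * c ^ g.natDegree := (one_mul _).symm
    _ ≤ ‖G.leadingCoeff‖ *
        ((G.roots.map (fun a => (m : ℂ) - a)).map (fun z => ‖z‖)).prod := by
        apply mul_le_mul hlead _ (by positivity) (le_trans zero_le_one hlead)
        rw [← hcard]; exact hp1

open Polynomial in
lemma core (f : Polynomial ℤ) (hf : 0 < f.natDegree)
    (v θ : ℝ) (hθ : 0 < θ) (hθ' : θ ≤ Real.pi / 2)
    (hroots : ∀ z ∈ sector v θ, Polynomial.aeval z f ≠ 0)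
    (p : ℕ) (hp : p.Prime) (q m : ℤ) (hq : 0 < q)
    (hfm : f.eval m = (p : ℤ) * q)
    (hmv : v < (m : ℝ))
    (hbig : ∀ g : Polynomial ℤ, g ∣ f → 1 ≤ g.natDegree →
      (q : ℝ) < (((m : ℝ) - v) * Real.sin θ) ^ g.natDegree) :
    Irreducible (f.map (Int.castRingHom ℚ)) := by
  have hf0 : f ≠ 0 := fun h => by simp [h] at hf
  have hpi : θ < Real.pi := lt_of_le_of_lt hθ' (by linarith [Real.pi_pos])
  have hs : 0 < Real.sin θ := Real.sin_pos_of_pos_of_lt_pi hθ hpi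
  set c : ℝ := ((m : ℝ) - v) * Real.sin θ with hcdef
  have hc0 : 0 ≤ c := mul_nonneg (by linarith) hs.le
  -- distance from m to any complex root of f
  have hdist : ∀ z : ℂ, Polynomial.aeval z f = 0 → c ≤ ‖(m : ℂ) - z‖ := by
    intro z hz
    have hzs : z ∉ sector v θ := fun hmem => hroots z hmem hz
    have hcases : z - (v : ℂ) = 0 ∨ θ ≤ |Complex.arg (z - (v : ℂ))| := by
      by_cases h1 : z = (v : ℂ)
      · left; rw [h1]; ring
      · right
        by_contra h2
        exact hzs ⟨h1, lt_of_not_ge h2⟩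
    have := dist_sector hθ hθ' (u := (m : ℝ) - v) (by linarith) hcases
    have heq : (((m : ℝ) - v : ℝ) : ℂ) - (z - (v : ℂ)) = (m : ℂ) - z := by
      push_cast; ring
    rwa [heq] at this
  -- integer eval bound for nonconstant divisors
  have hEB : ∀ g : Polynomial ℤ, g ∣ f → 1 ≤ g.natDegree → q < |g.eval m| := by
    intro g hgd hgdeg
    have hg0 : g ≠ 0 := ne_zero_of_dvd_ne_zero hf0 hgd
    have hgr : ∀ z : ℂ, Polynomial.aeval z g = 0 → c ≤ ‖(m : ℂ) - z‖ := by
      intro z hz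
      obtain ⟨k, hk⟩ := hgd
      apply hdist
      rw [hk, map_mul, hz, zero_mul]
    have h1 := eval_bound g hg0 m c hc0 hgr
    have h2 := hbig g hgd hgdeg
    have h3 : (q : ℝ) < |((g.eval m : ℤ) : ℝ)| := lt_of_lt_of_le h2 h1
    rw [← Int.cast_abs] at h3
    exact_mod_cast h3
  -- reduce to irreducibility of the primitive part over ℤ
  set f₀ := f.primPart with hf₀
  have hcontent : f = C f.content * f₀ := eq_C_content_mul_primPart f
  have hcont0 : f.content ≠ 0 := fun h => hf0 (content_eq_zero_iff.mp h)
  have hirr : Irreducible f₀ := by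
    constructor
    · exact not_isUnit_of_natDegree_pos f₀ (by rw [hf₀, natDegree_primPart]; exact hf)
    · intro g h hgh
      have hprim : f₀.IsPrimitive := isPrimitive_primPart f
      have hcont1 : f₀.content = 1 := isPrimitive_iff_content_eq_one.mp hprim
      have hcmul : g.content * h.content = 1 := by
        rw [← content_mul, ← hgh, hcont1]
      have hunit_of_deg0 : ∀ r : Polynomial ℤ, r.natDegree = 0 → IsUnit r.content → IsUnit r := by
        intro r hr hu
        rw [eq_C_of_natDegree_eq_zero hr]
        rw [eq_C_of_natDegree_eq_zero hr, content_C] at hu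
        exact isUnit_C.mpr ((normalize_associated (r.coeff 0)).isUnit hu)
      by_cases hg0 : g.natDegree = 0
      · exact Or.inl (hunit_of_deg0 g hg0 (IsUnit.of_mul_eq_one _ hcmul))
      by_cases hh0 : h.natDegree = 0
      · exact Or.inr (hunit_of_deg0 h hh0 (IsUnit.of_mul_eq_one _ (by rw [mul_comm]; exact hcmul)))
      exfalso
      have hgd : g ∣ f := dvd_trans (Dvd.intro _ hgh.symm) (primPart_dvd f)
      have hhd : h ∣ f := dvd_trans (Dvd.intro_left _ hgh.symm) (primPart_dvd f)
      have hqa : q < |g.eval m| := hEB g hgd (by omega)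
      have hqb : q < |h.eval m| := hEB h hhd (by omega)
      set a := g.eval m
      set b := h.eval m
      set e := f.content
      have heval : e * (a * b) = (p : ℤ) * q := by
        have := congrArg (Polynomial.eval m) hcontent
        rw [hfm, Polynomial.eval_mul, Polynomial.eval_C, hgh, Polynomial.eval_mul] at this
        linarith [this]
      have he1 : 1 ≤ |e| := Int.one_le_abs hcont0
      have hpZ : Prime (p : ℤ) := Nat.prime_iff_prime_int.mp hp
      have hppos : (0 : ℤ) < p := Int.natCast_pos.mpr hp.pos
      have habs : |e| * |a| * |b| = (p : ℤ) * q := by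
        rw [← abs_mul, ← abs_mul, mul_assoc, heval]
        exact abs_of_nonneg (by positivity)
      have hdvd : (p : ℤ) ∣ e * (a * b) := ⟨q, heval⟩
      have hfin : ∀ x y z : ℤ, |e| * |a| * |b| = x * y * z → (p : ℤ) ≤ x →
          q < y → 1 ≤ z → False := by
        intro x y z hxyz hx hy hz
        have h1 : (p : ℤ) * (q + 1) ≤ x * y :=
          mul_le_mul hx (by linarith) (by linarith) (by linarith)
        have h2 : (p : ℤ) * (q + 1) * 1 ≤ x * y * z :=
          mul_le_mul h1 hz zero_le_one (by nlinarith)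
        rw [← hxyz, habs] at h2
        nlinarith
      rcases (hpZ.dvd_mul.mp hdvd) with hd | hd
      · exact hfin |e| |a| |b| rfl
          (Int.le_of_dvd (abs_pos.mpr hcont0) ((dvd_abs _ _).mpr hd)) hqa (by linarith)
      rcases (hpZ.dvd_mul.mp hd) with hd2 | hd2
      · exact hfin |a| |b| |e| (by ring)
          (Int.le_of_dvd (abs_pos.mpr (by intro h0; rw [h0, abs_zero] at hqa; omega))
            ((dvd_abs _ _).mpr hd2)) hqb he1
      · exact hfin |b| |a| |e| (by ring)
          (Int.le_of_dvd (abs_pos.mpr (by intro h0; rw [h0, abs_zero] at hqb; omega))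
            ((dvd_abs _ _).mpr hd2)) hqa he1
  have h1 : Irreducible (f₀.map (Int.castRingHom ℚ)) :=
    (IsPrimitive.Int.irreducible_iff_irreducible_map_cast (isPrimitive_primPart f)).mp hirr
  have hu : IsUnit (C ((f.content : ℚ))) :=
    isUnit_C.mpr (isUnit_iff_ne_zero.mpr (by exact_mod_cast hcont0))
  have hmapeq : f.map (Int.castRingHom ℚ) = C ((f.content : ℚ)) * f₀.map (Int.castRingHom ℚ) := by
    conv_lhs => rw [hcontent]
    rw [Polynomial.map_mul, Polynomial.map_C]
    norm_num
  have hassoc : Associated (f₀.map (Int.castRingHom ℚ)) (f.map (Int.castRingHom ℚ)) :=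
    ⟨hu.unit, by rw [IsUnit.unit_spec, hmapeq]; ring⟩
  exact hassoc.irreducible h1

theorem stmt_10 (f : Polynomial ℤ) (hf : 0 < f.natDegree)
    (v θ : ℝ) (hθ : 0 < θ) (hθ' : θ ≤ Real.pi / 2)
    (hroots : ∀ z ∈ sector v θ, Polynomial.aeval z f ≠ 0)
    (p : ℕ) (hp : p.Prime) (q m : ℤ) (hq : 0 < q)
    (hfm : f.eval m = (p : ℤ) * q) :
    (v + (q : ℝ) / Real.sin θ < (m : ℝ) →
        Irreducible (f.map (Int.castRingHom ℚ))) ∧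
    ((∀ x : ℚ, Polynomial.aeval x f ≠ 0) →
      v + Real.sqrt (q : ℝ) / Real.sin θ < (m : ℝ) →
        Irreducible (f.map (Int.castRingHom ℚ))) := by
  have hpi : θ < Real.pi := lt_of_le_of_lt hθ' (by linarith [Real.pi_pos])
  have hs : 0 < Real.sin θ := Real.sin_pos_of_pos_of_lt_pi hθ hpi
  have hq1R : (1 : ℝ) ≤ (q : ℝ) := by exact_mod_cast hq
  constructor
  · intro hm
    have hmv : v < (m : ℝ) := by
      have h0 : 0 < (q : ℝ) / Real.sin θ := by positivity
      linarith
    have hc : (q : ℝ) < ((m : ℝ) - v) * Real.sin θ :=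
      (div_lt_iff₀ hs).mp (by linarith)
    have hc1 : 1 ≤ ((m : ℝ) - v) * Real.sin θ := by linarith
    apply core f hf v θ hθ hθ' hroots p hp q m hq hfm hmv
    intro g hgd hgdeg
    calc (q : ℝ) < ((m : ℝ) - v) * Real.sin θ := hc
      _ ≤ (((m : ℝ) - v) * Real.sin θ) ^ g.natDegree := le_self_pow₀ hc1 (by omega)
  · intro hnr hm
    have hsq1 : (1 : ℝ) ≤ Real.sqrt (q : ℝ) := by
      rw [show (1 : ℝ) = Real.sqrt 1 from Real.sqrt_one.symm]
      exact Real.sqrt_le_sqrt hq1R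
    have hmv : v < (m : ℝ) := by
      have h0 : 0 < Real.sqrt (q : ℝ) / Real.sin θ := by positivity
      linarith
    have hc : Real.sqrt (q : ℝ) < ((m : ℝ) - v) * Real.sin θ :=
      (div_lt_iff₀ hs).mp (by linarith)
    have hc1 : 1 ≤ ((m : ℝ) - v) * Real.sin θ := by linarith
    apply core f hf v θ hθ hθ' hroots p hp q m hq hfm hmv
    intro g hgd hgdeg
    have hdeg2 : 2 ≤ g.natDegree := by
      by_contra hlt
      have hdeg1 : g.natDegree = 1 := by omega
      obtain ⟨k, hk⟩ := hgd
      have hgne : g ≠ 0 := by intro h0; rw [h0] at hdeg1; simp at hdeg1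
      have hc1' : (g.coeff 1 : ℚ) ≠ 0 := by
        have h1 : g.coeff 1 ≠ 0 := by
          have := Polynomial.leadingCoeff_ne_zero.mpr hgne
          rwa [Polynomial.leadingCoeff, hdeg1] at this
        exact_mod_cast h1
      set x : ℚ := -(g.coeff 0 : ℚ) / (g.coeff 1 : ℚ) with hx
      have hgx : Polynomial.aeval x g = 0 := by
        conv_lhs => rw [Polynomial.eq_X_add_C_of_natDegree_le_one hdeg1.le]
        simp only [map_add, map_mul, Polynomial.aeval_C, Polynomial.aeval_X, hx]
        field_simp
        simp only [algebraMap_int_eq, eq_intCast]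
        ring
      exact hnr x (by rw [hk, map_mul, hgx, zero_mul])
    calc (q : ℝ) = Real.sqrt (q : ℝ) ^ 2 := (Real.sq_sqrt (by positivity)).symm
      _ < (((m : ℝ) - v) * Real.sin θ) ^ 2 :=
          pow_lt_pow_left₀ hc (by positivity) (by norm_num)
      _ ≤ (((m : ℝ) - v) * Real.sin θ) ^ g.natDegree := pow_le_pow_right₀ hc1 hdeg2
end

section
/- Let f(X) be a polynomial with non-negative integer coefficients of degree n ≥ 2. If f(m) is a prime number for some integer m > 1/sin(π/n), then f is irreducible over ℚ. -/
/-!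
Write `f = a₀ + ⋯ + aₙ Xⁿ` with `aₖ ≥ 0`. For `z = r e^{iφ} ≠ 0` with `|φ| < π/n`, rotating by
`e^{-inφ/2}` turns `f(z)` into `∑ aₖ rᵏ e^{i(k - n/2)φ}`, whose terms all lie in the open right
half-plane, so `f(z) ≠ 0`. Every complex root `z` therefore lies outside the sector
`|arg z| < π/n`, whence `|m - z| ≥ m sin(π/n) > 1`. If `f = g h` in `ℤ[X]`, then
`p = |g(m)| |h(m)|`, so one factor, say `g`, has `|g(m)| = 1`; but
`|g(m)| ≥ |lc g| ∏ |m - zᵢ| > 1` unless `g` is constant, in which case `g = ±1`. Thus `f` is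
irreducible in `ℤ[X]`, hence primitive, and Gauss's lemma gives irreducibility over `ℚ`.
-/

open Polynomial Complex Finset

theorem aeval_ne_zero_of_mem_sector {f : ℝ[X]} (hf : f ≠ 0) (hcoeff : ∀ i, 0 ≤ f.coeff i)
    {z : ℂ} (hz : z ∈ sector 0 (Real.pi / f.natDegree)) : aeval z f ≠ 0 := by
  set n := f.natDegree
  obtain ⟨hz, harg⟩ : z ≠ 0 ∧ |arg z| < Real.pi / n := by simpa [sector] using hz
  have harg : n * |arg z| < Real.pi := by
    rcases n.eq_zero_or_pos with hn | hn
    · simpa [hn] using Real.pi_pos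
    · rwa [lt_div_iff₀ (by positivity), mul_comm] at harg
  set φ := arg z
  -- rotating by `-nφ/2` puts every term `f_k z^k` at an angle `(k - n/2)φ ∈ (-π/2, π/2)`
  have hrot : (exp (↑(-(n / 2 * φ)) * I) * aeval z f).re =
      ∑ k ∈ range (n + 1), f.coeff k * ‖z‖ ^ k * Real.cos ((k - n / 2) * φ) := by
    rw [aeval_eq_sum_range, mul_sum, re_sum]
    refine sum_congr rfl fun k _ => ?_
    conv_lhs => rw [← norm_mul_exp_arg_mul_I z]
    have hexp : exp (↑(-(n / 2 * φ)) * I) * exp (k * (φ * I)) =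
        exp (↑((k - n / 2) * φ) * I) := by
      rw [← Complex.exp_add]; push_cast; ring_nf
    rw [mul_pow, ← exp_nat_mul, Complex.real_smul, ← ofReal_pow,
      show ∀ a b c d : ℂ, a * (b * (c * d)) = b * c * (a * d) by intros; ring, hexp,
      ← ofReal_mul, re_ofReal_mul, exp_ofReal_mul_I_re]
  have hcos : ∀ k ∈ range (n + 1), 0 < Real.cos ((k - n / 2) * φ) := by
    intro k hk
    have hk : (k : ℝ) ≤ n := by exact_mod_cast Nat.lt_succ_iff.mp (mem_range.mp hk)
    apply Real.cos_pos_of_mem_Ioo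
    rw [Set.mem_Ioo, ← abs_lt, abs_mul]
    calc |(k : ℝ) - n / 2| * |φ| ≤ n / 2 * |φ| := by
          gcongr; rw [abs_le]; constructor <;> linarith [k.cast_nonneg (α := ℝ)]
      _ < Real.pi / 2 := by linarith
  have hpos : 0 < ∑ k ∈ range (n + 1), f.coeff k * ‖z‖ ^ k * Real.cos ((k - n / 2) * φ) := by
    refine sum_pos' (fun k hk => ?_) ⟨n, self_mem_range_succ n, ?_⟩
    · have := hcos k hk
      have := hcoeff k
      positivity
    · have := hcos n (self_mem_range_succ n)
      have : 0 < f.leadingCoeff := (hcoeff n).lt_of_ne' (leadingCoeff_ne_zero.mpr hf)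
      have : 0 < ‖z‖ := norm_pos_iff.mpr hz
      positivity
  intro h0
  rw [h0, mul_zero, zero_re] at hrot
  linarith

theorem mul_abs_sin_arg_le_norm_sub {m : ℝ} (hm : 0 ≤ m) (z : ℂ) :
    m * |Real.sin (arg z)| ≤ ‖(m : ℂ) - z‖ := by
  rcases eq_or_ne z 0 with rfl | hz
  · simp
  have hre : z.re = ‖z‖ * Real.cos (arg z) := by rw [cos_arg hz]; field_simp
  have him : z.im = ‖z‖ * Real.sin (arg z) := by rw [sin_arg]; field_simp
  -- the distance from `m` to `z` is at least the distance from `m` to the line `ℝ z`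
  have hsq : ‖(m : ℂ) - z‖ ^ 2 =
      (‖z‖ - m * Real.cos (arg z)) ^ 2 + (m * Real.sin (arg z)) ^ 2 := by
    rw [Complex.sq_norm, normSq_apply]
    simp only [sub_re, sub_im, ofReal_re, ofReal_im, hre, him]
    linear_combination (‖z‖ ^ 2 - m ^ 2) * Real.sin_sq_add_cos_sq (arg z)
  refine (pow_le_pow_iff_left₀ (by positivity) (norm_nonneg _) two_ne_zero).mp ?_
  rw [hsq, mul_pow, sq_abs, ← mul_pow]
  exact le_add_of_nonneg_left (sq_nonneg _)

theorem mul_sin_le_norm_sub_of_le_abs_arg {θ m : ℝ} (hθ₀ : 0 ≤ θ) (hθ : θ ≤ Real.pi / 2)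
    (hm : 0 ≤ m) {z : ℂ} (hz : θ ≤ |arg z|) : m * Real.sin θ ≤ ‖(m : ℂ) - z‖ := by
  rcases le_or_gt (|arg z|) (Real.pi / 2) with h | h
  · calc m * Real.sin θ ≤ m * |Real.sin (arg z)| := by
          rw [Real.abs_sin_eq_sin_abs_of_abs_le_pi (abs_arg_le_pi z)]
          gcongr
          exact Real.sin_le_sin_of_le_of_le_pi_div_two (by linarith) h hz
      _ ≤ ‖(m : ℂ) - z‖ := mul_abs_sin_arg_le_norm_sub hm z
  · have hre : z.re < 0 := by simpa using mt abs_arg_le_pi_div_two_iff.mpr h.not_ge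
    calc m * Real.sin θ ≤ m := mul_le_of_le_one_right hm (Real.sin_le_one θ)
      _ ≤ ((m : ℂ) - z).re := by simp; linarith
      _ ≤ ‖(m : ℂ) - z‖ := re_le_norm _

theorem mul_sin_pi_div_natDegree_le_norm_sub {f : ℝ[X]} (hf : f ≠ 0)
    (hcoeff : ∀ i, 0 ≤ f.coeff i) (hdeg : 2 ≤ f.natDegree) {m : ℝ} (hm : 0 ≤ m) {z : ℂ}
    (hz : aeval z f = 0) : m * Real.sin (Real.pi / f.natDegree) ≤ ‖(m : ℂ) - z‖ := by
  rcases eq_or_ne z 0 with rfl | hz₀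
  · simpa [abs_of_nonneg hm] using mul_le_of_le_one_right hm (Real.sin_le_one _)
  have hn : (2 : ℝ) ≤ f.natDegree := by exact_mod_cast hdeg
  refine mul_sin_le_norm_sub_of_le_abs_arg (by positivity)
    (div_le_div_of_nonneg_left Real.pi_pos.le two_pos hn) hm ?_
  by_contra! h
  exact aeval_ne_zero_of_mem_sector hf hcoeff (by simpa [sector] using ⟨hz₀, h⟩) hz

theorem pow_natDegree_le_norm_aeval {g : ℤ[X]} (hg : g ≠ 0) {x : ℂ} {μ : ℝ} (hμ : 0 ≤ μ)
    (h : ∀ z : ℂ, aeval z g = 0 → μ ≤ ‖x - z‖) : μ ^ g.natDegree ≤ ‖aeval x g‖ := by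
  set G := g.map (algebraMap ℤ ℂ)
  have hG : G ≠ 0 := (Polynomial.map_ne_zero_iff (algebraMap ℤ ℂ).injective_int).mpr hg
  have hsplit : G.Splits := IsAlgClosed.splits G
  have hcard : G.roots.card = g.natDegree := by
    rw [splits_iff_card_roots.mp hsplit,
      natDegree_map_eq_of_injective (algebraMap ℤ ℂ).injective_int]
  have hlead : 1 ≤ ‖G.leadingCoeff‖ := by
    rw [leadingCoeff_map_of_injective (algebraMap ℤ ℂ).injective_int, algebraMap_int_eq,
      eq_intCast, norm_intCast]
    exact_mod_cast Int.one_le_abs (leadingCoeff_ne_zero.mpr hg)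
  have hprod : μ ^ g.natDegree ≤ (G.roots.map fun z => ‖x - z‖).prod := by
    calc μ ^ g.natDegree = (G.roots.map fun _ => μ).prod := by simp [hcard]
      _ ≤ _ := Multiset.prod_map_le_prod_map₀ _ _ (fun _ _ => hμ) fun z hz => h z <| by
        rw [← eval_map_algebraMap]; exact (mem_roots hG).mp hz
  have hnorm : ‖(G.roots.map (x - ·)).prod‖ = (G.roots.map fun z => ‖x - z‖).prod := by
    rw [← normHom_apply, map_multiset_prod, Multiset.map_map]; rfl
  rw [← eval_map_algebraMap, hsplit.eval_eq_prod_roots, norm_mul]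
  exact (hnorm ▸ hprod).trans (le_mul_of_one_le_left (norm_nonneg _) hlead)

theorem pow_natDegree_le_norm_aeval_of_dvd {f g : ℤ[X]} (hcoeff : ∀ i, 0 ≤ f.coeff i)
    (hdeg : 2 ≤ f.natDegree) (hgf : g ∣ f) {m : ℝ} (hm : 0 ≤ m) :
    (m * Real.sin (Real.pi / f.natDegree)) ^ g.natDegree ≤ ‖aeval (m : ℂ) g‖ := by
  have hf : f ≠ 0 := by rintro rfl; simp at hdeg
  set F := f.map (algebraMap ℤ ℝ)
  have hF : F.natDegree = f.natDegree :=
    natDegree_map_eq_of_injective (algebraMap ℤ ℝ).injective_int f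
  have hFcoeff : ∀ i, 0 ≤ F.coeff i := fun i => by simpa [F] using hcoeff i
  have hsin : 0 ≤ Real.sin (Real.pi / f.natDegree) :=
    Real.sin_nonneg_of_nonneg_of_le_pi (by positivity)
      (div_le_self Real.pi_pos.le (Nat.one_le_cast.mpr (by omega)))
  refine pow_natDegree_le_norm_aeval (ne_zero_of_dvd_ne_zero hf hgf) (by positivity)
    fun z hz => ?_
  have hFz : aeval z F = 0 := by
    obtain ⟨q, rfl⟩ := hgf
    rw [aeval_map_algebraMap, map_mul, hz, zero_mul]
  have hF₀ : F ≠ 0 := (Polynomial.map_ne_zero_iff (algebraMap ℤ ℝ).injective_int).mpr hf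
  simpa only [hF] using mul_sin_pi_div_natDegree_le_norm_sub hF₀ hFcoeff (hF ▸ hdeg) hm hFz

theorem irreducible_of_irreducible_eval {R : Type*} [CommRing R] {f : R[X]} {m : R}
    (hf : Irreducible (f.eval m)) (h : ∀ g, g ∣ f → IsUnit (g.eval m) → g.natDegree = 0) :
    Irreducible f := by
  have hunit : ∀ g, g ∣ f → IsUnit (g.eval m) → IsUnit g := fun g hg hu => by
    have hg₀ := h g hg hu
    rw [eq_C_of_natDegree_eq_zero hg₀] at hu ⊢
    simpa using hu
  refine ⟨fun hu => hf.not_isUnit (hu.map (evalRingHom m)), fun a b hab => ?_⟩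
  have := hf.isUnit_or_isUnit (show f.eval m = a.eval m * b.eval m by rw [hab, eval_mul])
  exact this.imp (hunit a (hab ▸ dvd_mul_right a b)) (hunit b (hab ▸ dvd_mul_left b a))

theorem stmt_11 (n : ℕ) (hn : 2 ≤ n) (f : Polynomial ℤ) (hdeg : f.natDegree = n)
    (hcoeff : ∀ i, 0 ≤ f.coeff i)
    (m : ℤ) (hm : 1 / Real.sin (Real.pi / n) < (m : ℝ))
    (p : ℕ) (hp : p.Prime) (hfm : f.eval m = (p : ℤ)) :
    Irreducible (f.map (Int.castRingHom ℚ)) := by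
  subst hdeg
  have hsin : 0 < Real.sin (Real.pi / f.natDegree) :=
    Real.sin_pos_of_pos_of_lt_pi (by positivity)
      (div_lt_self Real.pi_pos (Nat.one_lt_cast.mpr hn))
  have hμ : 1 < m * Real.sin (Real.pi / f.natDegree) := by rwa [div_lt_iff₀ hsin] at hm
  have hirr : Irreducible f := by
    refine irreducible_of_irreducible_eval (m := m) ?_ fun g hg hu => ?_
    · rw [hfm]
      exact (Nat.prime_iff_prime_int.mp hp).irreducible
    · have hgm : ‖aeval ((m : ℝ) : ℂ) g‖ = 1 := by
        rw [show ((m : ℝ) : ℂ) = algebraMap ℤ ℂ m by simp,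
          aeval_algebraMap_apply_eq_algebraMap_eval, algebraMap_int_eq, eq_intCast, norm_intCast,
          ← Int.cast_abs, Int.isUnit_iff_abs_eq.mp hu, Int.cast_one]
      have hbound := pow_natDegree_le_norm_aeval_of_dvd hcoeff hn hg (m := m) (by nlinarith)
      by_contra hg₀
      exact (one_lt_pow₀ hμ hg₀).not_ge (hgm ▸ hbound)
  exact (IsPrimitive.Int.irreducible_iff_irreducible_map_cast
    (hirr.isPrimitive (by omega))).mp hirr
end

section
/- Let f(X) be a polynomial with non-negative integer coefficients of degree n ≥ 2. If f(m) is a prime number for some integer m > n/π + 1, then f is irreducible over ℚ. -/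
/-!
A polynomial `f` of degree `n` with non-negative real coefficients has no root `z ≠ 0` with
`|arg z| < π / n`: there `Im f(z) = ∑ aₖ |z|ᵏ sin (k arg z)` has the sign of `arg z`, and
`f > 0` on the positive axis. So every root lies at distance at least `m sin (π / n) > 1`
from `m`, and a nonconstant factor `g` of `f` over `ℤ` has
`|g(m)| = |lc g| ∏ |m - α| > 1`. As `f(m)` is prime, `f` is irreducible over `ℤ`, hence,
being primitive, over `ℚ` by Gauss's lemma.
-/

open Polynomial Complex
open scoped Real ComplexConjugate

theorem Real.one_lt_mul_sin {θ m : ℝ} (hθ : 0 < θ) (hθ2 : θ ≤ 2) (hm : θ⁻¹ + 1 < m) :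
    1 < m * Real.sin θ := by
  have hθm : 1 + θ < θ * m := by
    have := mul_lt_mul_of_pos_left hm hθ
    rwa [mul_add, mul_inv_cancel₀ hθ.ne', mul_one] at this
  have hc : 0 < θ - θ ^ 3 / 6 := by
    nlinarith [mul_le_mul_of_nonneg_left (show θ ^ 2 ≤ 4 by nlinarith) hθ.le]
  have hθc : θ ≤ (1 + θ) * (θ - θ ^ 3 / 6) := by
    nlinarith [mul_nonneg (sq_nonneg θ) (show 0 ≤ 6 - θ - θ ^ 2 by nlinarith)]
  have hcs := mul_lt_mul_of_pos_left (Real.sin_gt_sub_cube hθ) (show 0 < θ * m by linarith)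
  refine lt_of_mul_lt_mul_left ?_ hθ.le
  nlinarith [mul_lt_mul_of_pos_right hθm hc]

theorem Complex.mul_sin_le_norm_sub {m θ : ℝ} (hm : 0 ≤ m) (hθ : 0 ≤ θ) {z : ℂ}
    (hθz : θ ≤ |arg z|) : m * Real.sin θ ≤ ‖(m : ℂ) - z‖ := by
  have hcos : Real.cos (arg z) ≤ Real.cos θ := by
    rw [← Real.cos_abs]
    exact Real.cos_le_cos_of_nonneg_of_le_pi hθ (abs_arg_le_pi z) hθz
  have hre : z.re ≤ ‖z‖ * Real.cos θ := by
    rw [← norm_mul_cos_arg]; exact mul_le_mul_of_nonneg_left hcos (norm_nonneg z)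
  have hsq : (m * Real.sin θ) ^ 2 ≤ ‖(m : ℂ) - z‖ ^ 2 := calc
    (m * Real.sin θ) ^ 2 ≤ (‖z‖ - m * Real.cos θ) ^ 2 + (m * Real.sin θ) ^ 2 := by
      nlinarith [sq_nonneg (‖z‖ - m * Real.cos θ)]
    _ = m ^ 2 - 2 * m * (‖z‖ * Real.cos θ) + ‖z‖ ^ 2 := by
      linear_combination m ^ 2 * Real.sin_sq_add_cos_sq θ
    _ ≤ m ^ 2 - 2 * m * z.re + ‖z‖ ^ 2 := by nlinarith
    _ = ‖(m : ℂ) - z‖ ^ 2 := by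
      rw [Complex.sq_norm, Complex.sq_norm, normSq_apply, normSq_apply]; simp; ring
  exact (abs_le_of_sq_le_sq hsq (norm_nonneg _)).trans' (le_abs_self _)

namespace Polynomial

theorem im_aeval_mul_exp (f : ℝ[X]) (r φ : ℝ) :
    (aeval (r * exp (φ * I)) f).im =
      ∑ k ∈ Finset.range (f.natDegree + 1), f.coeff k * r ^ k * Real.sin (k * φ) := by
  rw [aeval_eq_sum_range, im_sum]
  refine Finset.sum_congr rfl fun k _ => ?_
  rw [mul_pow, ← exp_nat_mul, ← mul_assoc, ← ofReal_natCast, ← ofReal_mul, ← ofReal_pow,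
    Algebra.smul_def, coe_algebraMap, ← mul_assoc, ← ofReal_mul, im_ofReal_mul, exp_ofReal_mul_I_im]

theorem im_aeval_mul_exp_pos {f : ℝ[X]} (hcoeff : ∀ k, 0 ≤ f.coeff k) {r φ : ℝ} (hr : 0 < r)
    (hφ : 0 < φ) (hφf : φ < π / f.natDegree) : 0 < (aeval (r * exp (φ * I)) f).im := by
  set d := f.natDegree
  have hd : 0 < d := by
    by_contra! h
    simp only [Nat.le_zero.1 h, CharP.cast_eq_zero, div_zero] at hφf
    linarith
  have hdφ : d * φ < π := by rwa [lt_div_iff₀ (by positivity), mul_comm] at hφf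
  rw [im_aeval_mul_exp]
  refine Finset.sum_pos' (fun k hk => ?_) ⟨d, Finset.self_mem_range_succ d, ?_⟩
  · have hk : (k : ℝ) ≤ d := by exact_mod_cast Finset.mem_range_succ_iff.1 hk
    have := Real.sin_nonneg_of_nonneg_of_le_pi (x := k * φ) (by positivity) (by nlinarith)
    have := hcoeff k
    positivity
  · have hlc : 0 < f.leadingCoeff :=
      (hcoeff d).lt_of_ne' (leadingCoeff_ne_zero.2 (ne_zero_of_natDegree_gt hd))
    have := Real.sin_pos_of_pos_of_lt_pi (by positivity) hdφ
    exact mul_pos (mul_pos hlc (pow_pos hr d)) this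

theorem eval_pos_of_coeff_nonneg {f : ℝ[X]} (hf : f ≠ 0) (hcoeff : ∀ k, 0 ≤ f.coeff k) {r : ℝ}
    (hr : 0 < r) : 0 < f.eval r := by
  rw [eval_eq_sum_range]
  refine Finset.sum_pos' (fun k _ => mul_nonneg (hcoeff k) (pow_nonneg hr.le k))
    ⟨f.natDegree, Finset.self_mem_range_succ _, ?_⟩
  exact mul_pos ((hcoeff _).lt_of_ne' (leadingCoeff_ne_zero.2 hf)) (pow_pos hr _)

theorem aeval_ne_zero_of_abs_arg_lt {f : ℝ[X]} (hcoeff : ∀ k, 0 ≤ f.coeff k) {z : ℂ}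
    (hz : z ≠ 0) (harg : |arg z| < π / f.natDegree) : aeval z f ≠ 0 := by
  have hd : 0 < f.natDegree := by
    by_contra! h
    simp only [Nat.le_zero.1 h, CharP.cast_eq_zero, div_zero] at harg
    exact (abs_nonneg _).not_gt harg
  have hr : 0 < ‖z‖ := norm_pos_iff.2 hz
  have hpolar : (‖z‖ : ℂ) * exp (arg z * I) = z := norm_mul_exp_arg_mul_I z
  rcases lt_trichotomy (arg z) 0 with hneg | hzero | hpos
  · have harg_conj : arg (conj z) = -arg z := by
      rw [arg_conj, if_neg (by linarith [Real.pi_pos])]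
    have him := im_aeval_mul_exp_pos hcoeff hr (φ := arg (conj z)) (by linarith)
      (by rwa [harg_conj, ← abs_of_neg hneg])
    rw [← norm_conj z, norm_mul_exp_arg_mul_I, aeval_conj] at him
    intro h0
    simp [h0] at him
  · rw [hzero, ofReal_zero, zero_mul, exp_zero, mul_one] at hpolar
    rw [← hpolar, ← coe_algebraMap, aeval_algebraMap_apply_eq_algebraMap_eval, coe_algebraMap,
      ofReal_ne_zero]
    exact (eval_pos_of_coeff_nonneg (ne_zero_of_natDegree_gt hd) hcoeff hr).ne'
  · intro h0
    have him := im_aeval_mul_exp_pos hcoeff hr hpos (lt_of_abs_lt harg)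
    rw [hpolar, h0, zero_im] at him
    exact him.false

theorem one_lt_norm_sub_of_aeval_eq_zero {f : ℝ[X]} (hcoeff : ∀ k, 0 ≤ f.coeff k)
    (hf : 2 ≤ f.natDegree) {m : ℝ} (hm : f.natDegree / π + 1 < m) {z : ℂ} (hz : aeval z f = 0) :
    1 < ‖(m : ℂ) - z‖ := by
  have hm1 : 1 < m := by
    have : 0 ≤ f.natDegree / π := by positivity
    linarith
  rcases eq_or_ne z 0 with rfl | hz0
  · rwa [sub_zero, norm_real, Real.norm_of_nonneg (by linarith)]
  have hd : (2 : ℝ) ≤ f.natDegree := by exact_mod_cast hf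
  have hθ : 0 < π / f.natDegree := by positivity
  have hθ2 : π / f.natDegree ≤ 2 := by
    rw [div_le_iff₀ (by positivity)]; nlinarith [Real.pi_le_four]
  have harg : π / f.natDegree ≤ |arg z| :=
    not_lt.1 fun h => aeval_ne_zero_of_abs_arg_lt hcoeff hz0 h hz
  calc 1 < m * Real.sin (π / f.natDegree) := Real.one_lt_mul_sin hθ hθ2 (by rwa [inv_div])
    _ ≤ ‖(m : ℂ) - z‖ := mul_sin_le_norm_sub (by linarith) hθ.le harg

theorem one_lt_abs_eval_of_one_lt_norm_sub_aroots {g : ℤ[X]} (hg : 0 < g.natDegree) {m : ℤ}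
    (h : ∀ α ∈ g.aroots ℂ, 1 < ‖(m : ℂ) - α‖) : 1 < |g.eval m| := by
  have hg0 : g ≠ 0 := ne_zero_of_natDegree_gt hg
  set G := g.map (Int.castRingHom ℂ)
  have hroots : g.aroots ℂ = G.roots := by rw [aroots, algebraMap_int_eq]
  rw [hroots] at h
  have hcard : 0 < G.roots.card := by
    rwa [IsAlgClosed.card_roots_eq_natDegree,
      natDegree_map_eq_of_injective (RingHom.injective_int _)]
  obtain ⟨α, hα⟩ := Multiset.card_pos_iff_exists_mem.1 hcard
  obtain ⟨s, hs⟩ := Multiset.exists_cons_of_mem hα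
  have hprod : 1 < (G.roots.map fun β => ‖(m : ℂ) - β‖).prod := by
    rw [hs, Multiset.map_cons, Multiset.prod_cons]
    exact one_lt_mul_of_lt_of_le (h α hα) <| Multiset.one_le_prod_map fun β hβ =>
      (h β (hs ▸ Multiset.mem_cons_of_mem hβ)).le
  have hlc : 1 ≤ ‖G.leadingCoeff‖ := by
    rw [leadingCoeff_map_of_injective (RingHom.injective_int _), eq_intCast, norm_intCast]
    exact_mod_cast Int.one_le_abs (leadingCoeff_ne_zero.2 hg0)
  have heval :
      ‖G.eval (m : ℂ)‖ = ‖G.leadingCoeff‖ * (G.roots.map fun β => ‖(m : ℂ) - β‖).prod := by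
    rw [(IsAlgClosed.splits G).eval_eq_prod_roots, norm_mul]
    congr 1
    simpa [Multiset.map_map, Function.comp_def] using
      map_multiset_prod (normHom : ℂ →*₀ ℝ) (G.roots.map ((m : ℂ) - ·))
  rw [eval_intCast_map, eq_intCast, norm_intCast] at heval
  exact_mod_cast heval ▸ one_lt_mul_of_le_of_lt hlc hprod

theorem one_lt_abs_eval_of_dvd {f g : ℤ[X]} (hcoeff : ∀ k, 0 ≤ f.coeff k) (hf : 2 ≤ f.natDegree)
    {m : ℤ} (hm : (f.natDegree : ℝ) / π + 1 < m) (hgf : g ∣ f) (hg : 0 < g.natDegree) :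
    1 < |g.eval m| := by
  have hdeg : (f.map (algebraMap ℤ ℝ)).natDegree = f.natDegree :=
    natDegree_map_eq_of_injective (RingHom.injective_int _) f
  refine one_lt_abs_eval_of_one_lt_norm_sub_aroots hg fun α hα => ?_
  have hfα : aeval α (f.map (algebraMap ℤ ℝ)) = 0 := by
    rw [aeval_map_algebraMap]
    exact aeval_eq_zero_of_dvd_aeval_eq_zero hgf (mem_aroots.1 hα).2
  rw [← ofReal_intCast]
  exact one_lt_norm_sub_of_aeval_eq_zero (fun k => by simpa using hcoeff k) (hdeg ▸ hf)
    (hdeg ▸ hm) hfα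

theorem irreducible_of_prime_eval {R : Type*} [CommRing R] [IsDomain R] {f : R[X]} {a : R}
    (hf : Prime (f.eval a)) (h : ∀ g, g ∣ f → 0 < g.natDegree → ¬IsUnit (g.eval a)) :
    Irreducible f := by
  have hconst : ∀ g, g ∣ f → IsUnit (g.eval a) → IsUnit g := fun g hg hu => by
    have hd : g.natDegree = 0 := Nat.eq_zero_of_not_pos fun hd => h g hg hd hu
    rw [eq_C_of_natDegree_eq_zero hd, eval_C] at hu
    rw [eq_C_of_natDegree_eq_zero hd]
    exact isUnit_C.2 hu
  refine ⟨fun hu => hf.not_isUnit (hu.map (evalRingHom a)), fun g k hgk => ?_⟩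
  exact (hf.irreducible.isUnit_or_isUnit (by rw [hgk, eval_mul])).imp
    (hconst g (Dvd.intro k hgk.symm)) (hconst k (Dvd.intro_left g hgk.symm))

end Polynomial

theorem stmt_12 (n : ℕ) (hn : 2 ≤ n) (f : Polynomial ℤ) (hdeg : f.natDegree = n)
    (hcoeff : ∀ i, 0 ≤ f.coeff i)
    (m : ℤ) (hm : (n : ℝ) / Real.pi + 1 < (m : ℝ))
    (p : ℕ) (hp : p.Prime) (hfm : f.eval m = (p : ℤ)) :
    Irreducible (f.map (Int.castRingHom ℚ)) := by
  subst hdeg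
  have hirr : Irreducible f := irreducible_of_prime_eval (a := m)
    (hfm ▸ Nat.prime_iff_prime_int.1 hp) fun g hgf hg hu =>
      (one_lt_abs_eval_of_dvd hcoeff hn hm hgf hg).ne' (Int.isUnit_iff_abs_eq.1 hu)
  exact (IsPrimitive.Int.irreducible_iff_irreducible_map_cast (hirr.isPrimitive (by omega))).1 hirr
end
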